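/- arXiv:1009.0146 — 6 statements merged into one kernel-verified Lean document; each statement's English description precedes it below -/
import Mathlib

section
/- For the classical Frame-Stewart numbers with 4 pegs, defined by S4(0)=0 and S4(n) = min over 1≤t≤n of {2·S4(n−t) + 2^t − 1}, the sequence of differences satisfies S4(n) − S4(n−1) = 2^(i−1) whenever binom(i,2) < n ≤ binom(i+1,2). -/
private lemma choose_two_succ (i : ℕ) : (i + 1).choose 2 = i.choose 2 + i := by
  rw [Nat.choose_two_right, Nat.choose_two_right, Nat.triangle_succ]

private lemma exists_idx (k : ℕ) : ∃ i, k ≤ (i + 1).choose 2 := by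
  refine ⟨k, ?_⟩
  rw [choose_two_succ]
  omega

private def idxx (k : ℕ) : ℕ := Nat.find (exists_idx k)

private lemma idx_le_of {k j : ℕ} (h : k ≤ (j + 1).choose 2) : idxx k ≤ j :=
  Nat.find_le h

private lemma idx_upper (k : ℕ) : k ≤ (idxx k + 1).choose 2 :=
  Nat.find_spec (exists_idx k)

private lemma le_idx {k j : ℕ} (h : j.choose 2 < k) : j ≤ idxx k := by
  by_contra hc
  push_neg at hc
  have h1 : idxx k + 1 ≤ j := hc
  have h2 : (idxx k + 1).choose 2 ≤ j.choose 2 := Nat.choose_le_choose 2 h1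
  have := idx_upper k
  omega

private lemma idx_lower {k : ℕ} (hk : 1 ≤ k) : (idxx k).choose 2 < k := by
  rcases Nat.eq_zero_or_pos (idxx k) with h | h
  · simp [h]; omega
  · have hmin := Nat.find_min (exists_idx k) (show idxx k - 1 < idxx k by omega)
    have : (idxx k - 1) + 1 = idxx k := by omega
    rw [this] at hmin
    omega

private lemma idx_eq {k j : ℕ} (h1 : j.choose 2 < k) (h2 : k ≤ (j + 1).choose 2) :
    idxx k = j :=
  le_antisymm (idx_le_of h2) (le_idx h1)

private lemma idx_one : idxx 1 = 1 :=
  idx_eq (by simp) (by rw [choose_two_succ]; simp)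

private lemma idx_pos {k : ℕ} (hk : 1 ≤ k) : 1 ≤ idxx k :=
  le_idx (by simp; omega)

private lemma choose_two_ge (i : ℕ) : i - 1 ≤ i.choose 2 := by
  cases i with
  | zero => simp
  | succ m => rw [choose_two_succ]; omega

private def FF : ℕ → ℕ
  | 0 => 0
  | n + 1 => FF n + 2 ^ (idxx (n + 1) - 1)

private lemma idx_le_self {k : ℕ} : idxx k ≤ k := by
  rcases Nat.eq_zero_or_pos k with h | h
  · subst h; exact idx_le_of (by simp)
  · have h1 := idx_lower h
    have h2 := choose_two_ge (idxx k)
    omega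

private lemma FF_exact : ∀ n, 1 ≤ n → FF n = 2 * FF (n - idxx n) + (2 ^ (idxx n) - 1) := by
  intro n
  induction n with
  | zero => omega
  | succ n ih =>
    intro _
    rcases Nat.eq_zero_or_pos n with hn | hn
    · subst hn
      show FF 0 + 2 ^ (idxx 1 - 1) = _
      rw [idx_one]
      simp [FF]
    · -- n ≥ 1
      set i := idxx n with hi
      have hlow : i.choose 2 < n := idx_lower hn
      have hup : n ≤ (i + 1).choose 2 := idx_upper n
      have hc1 : (i + 1).choose 2 = i.choose 2 + i := choose_two_succ i
      have hc2 : (i + 1 + 1).choose 2 = (i + 1).choose 2 + (i + 1) := choose_two_succ (i + 1)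
      have hipos : 1 ≤ i := idx_pos hn
      have hmono : i ≤ idxx (n + 1) := le_idx (by omega)
      have hub : idxx (n + 1) ≤ i + 1 := idx_le_of (by omega)
      have hFF : FF (n + 1) = FF n + 2 ^ (idxx (n + 1) - 1) := rfl
      have hIH := ih hn
      rcases (show idxx (n + 1) = i ∨ idxx (n + 1) = i + 1 by omega) with hA | hB
      · -- same row
        have hn1up : n + 1 ≤ (i + 1).choose 2 := by
          have := idx_upper (n + 1); rwa [hA] at this
        have hi2 : 2 ≤ i := by
          by_contra hc
          have h1 : i = 1 := by omega
          rw [h1, choose_two_succ, show (1:ℕ).choose 2 = 0 from rfl] at hn1up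
          omega
        have hc0 : i.choose 2 = (i - 1).choose 2 + (i - 1) := by
          have := choose_two_succ (i - 1)
          rw [show i - 1 + 1 = i by omega] at this
          omega
        have hidxm : idxx (n + 1 - i) = i - 1 := by
          apply idx_eq
          · omega
          · rw [show i - 1 + 1 = i by omega]; omega
        have hile : i ≤ n := by omega
        have hdec : n + 1 - i = (n - i) + 1 := by omega
        have hFFm : FF (n + 1 - i) = FF (n - i) + 2 ^ (idxx (n + 1 - i) - 1) := by
          rw [hdec]; rfl
        rw [hidxm] at hFFm
        rw [hFF, hA, hIH, hFFm]
        have p1 : 2 * 2 ^ (i - 1 - 1) = 2 ^ (i - 1) := by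
          rw [← pow_succ']
          congr 1
          omega
        have p2 : 2 * 2 ^ (i - 1) = 2 ^ i := by
          rw [← pow_succ']
          congr 1
          omega
        have p3 : 1 ≤ 2 ^ i := Nat.one_le_two_pow
        -- goal: FF n' + 2^(i-1) form; handle with omega after ring_nf
        have p4 : 1 ≤ 2 ^ (i - 1) := Nat.one_le_two_pow
        omega
      · -- crossing rows: n = (i+1).choose 2
        have hn1low : (i + 1).choose 2 < n + 1 := by
          have := idx_lower (show 1 ≤ n + 1 by omega); rwa [hB] at this
        have hneq : n = (i + 1).choose 2 := by omega
        have hsub : n + 1 - (i + 1) = n - i := by omega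
        rw [hFF, hB, hIH, hsub, Nat.add_sub_cancel]
        have p2 : 2 ^ (i + 1) = 2 * 2 ^ i := by rw [pow_succ]; ring
        have p3 : 1 ≤ 2 ^ i := Nat.one_le_two_pow
        omega

-- step lemmas for the lower bound
private lemma FF_step {m : ℕ} (hm : 1 ≤ m) : FF m = FF (m - 1) + 2 ^ (idxx m - 1) := by
  obtain ⟨k, rfl⟩ : ∃ k, m = k + 1 := ⟨m - 1, by omega⟩
  simp [FF]

private lemma FF_lb (n t : ℕ) (hn : 1 ≤ n) (ht1 : 1 ≤ t) (htn : t ≤ n) :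
    FF n ≤ 2 * FF (n - t) + (2 ^ t - 1) := by
  set i := idxx n with hi
  have hlow : i.choose 2 < n := idx_lower hn
  have hup : n ≤ (i + 1).choose 2 := idx_upper n
  have hc1 : (i + 1).choose 2 = i.choose 2 + i := choose_two_succ i
  have hipos : 1 ≤ i := idx_pos hn
  have hile : i ≤ n := by have := choose_two_ge i; omega
  have hex := FF_exact n hn
  rw [← hi] at hex
  have key : 2 * FF (n - i) + 2 ^ i ≤ 2 * FF (n - t) + 2 ^ t := by
    -- up step: for i ≤ s < n
    have up : ∀ s, i ≤ s → s < n →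
        2 * FF (n - s) + 2 ^ s ≤ 2 * FF (n - (s + 1)) + 2 ^ (s + 1) := by
      intro s hs1 hs2
      have h1 : 1 ≤ n - s := by omega
      have hstep : FF (n - s) = FF (n - s - 1) + 2 ^ (idxx (n - s) - 1) := FF_step h1
      have hidxle : idxx (n - s) ≤ i - 1 := by
        apply idx_le_of
        rw [show i - 1 + 1 = i by omega]
        omega
      have hidxpos : 1 ≤ idxx (n - s) := idx_pos h1
      have p1 : 2 * 2 ^ (idxx (n - s) - 1) = 2 ^ (idxx (n - s)) := by
        rw [← pow_succ']; congr 1; omega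
      have p2 : 2 ^ (idxx (n - s)) ≤ 2 ^ s :=
        Nat.pow_le_pow_right (by omega) (by omega)
      have p3 : 2 ^ (s + 1) = 2 * 2 ^ s := by rw [pow_succ]; ring
      have hsub : n - (s + 1) = n - s - 1 := by omega
      rw [hsub]
      omega
    -- down step: for 1 ≤ s < i
    have down : ∀ s, 1 ≤ s → s < i →
        2 * FF (n - (s + 1)) + 2 ^ (s + 1) ≤ 2 * FF (n - s) + 2 ^ s := by
      intro s hs1 hs2
      have hsn : s < n := by omega
      have h1 : 1 ≤ n - s := by omega
      have hstep : FF (n - s) = FF (n - s - 1) + 2 ^ (idxx (n - s) - 1) := FF_step h1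
      have hc0 : i.choose 2 = (i - 1).choose 2 + (i - 1) := by
        have := choose_two_succ (i - 1)
        rw [show i - 1 + 1 = i by omega] at this
        omega
      have hidxge : i - 1 ≤ idxx (n - s) := le_idx (by omega)
      have hidxpos : 1 ≤ idxx (n - s) := idx_pos h1
      have p1 : 2 * 2 ^ (idxx (n - s) - 1) = 2 ^ (idxx (n - s)) := by
        rw [← pow_succ']; congr 1; omega
      have p2 : 2 ^ s ≤ 2 ^ (idxx (n - s)) :=
        Nat.pow_le_pow_right (by omega) (by omega)
      have p3 : 2 ^ (s + 1) = 2 * 2 ^ s := by rw [pow_succ]; ring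
      have hsub : n - (s + 1) = n - s - 1 := by omega
      rw [hsub]
      omega
    rcases le_or_gt i t with h | h
    · -- climb up from i to t
      have : ∀ d, i + d ≤ n →
          2 * FF (n - i) + 2 ^ i ≤ 2 * FF (n - (i + d)) + 2 ^ (i + d) := by
        intro d
        induction d with
        | zero => simp
        | succ d ih =>
          intro hd
          have h1 := ih (by omega)
          have h2 := up (i + d) (by omega) (by omega)
          calc 2 * FF (n - i) + 2 ^ i ≤ 2 * FF (n - (i + d)) + 2 ^ (i + d) := h1
            _ ≤ 2 * FF (n - (i + d + 1)) + 2 ^ (i + d + 1) := h2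
            _ = 2 * FF (n - (i + (d + 1))) + 2 ^ (i + (d + 1)) := by ring_nf
      have := this (t - i) (by omega)
      rwa [show i + (t - i) = t by omega] at this
    · -- climb down from i to t
      have : ∀ d, ∀ s, 1 ≤ s → s + d = i →
          2 * FF (n - i) + 2 ^ i ≤ 2 * FF (n - s) + 2 ^ s := by
        intro d
        induction d with
        | zero => intro s _ hs; rw [show s = i by omega]
        | succ d ih =>
          intro s hs1 hs2
          have h1 := ih (s + 1) (by omega) (by omega)
          have h2 := down s hs1 (by omega)
          exact le_trans h1 h2
      exact this (i - t) t ht1 (by omega)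
  have p3 : 1 ≤ 2 ^ i := Nat.one_le_two_pow
  have p4 : 1 ≤ 2 ^ t := Nat.one_le_two_pow
  omega

private lemma S4_eq_FF (S4 : ℕ → ℕ) (h0 : S4 0 = 0)
    (hrec : ∀ n, 1 ≤ n →
      S4 n = sInf {v | ∃ t, 1 ≤ t ∧ t ≤ n ∧ v = 2 * S4 (n - t) + (2 ^ t - 1)}) :
    ∀ n, S4 n = FF n := by
  intro n
  induction n using Nat.strong_induction_on with
  | _ n ih =>
    match n with
    | 0 => simpa [FF] using h0
    | Nat.succ n =>
      rw [hrec (n + 1) (by omega)]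
      have hsets : {v | ∃ t, 1 ≤ t ∧ t ≤ n + 1 ∧ v = 2 * S4 (n + 1 - t) + (2 ^ t - 1)}
          = {v | ∃ t, 1 ≤ t ∧ t ≤ n + 1 ∧ v = 2 * FF (n + 1 - t) + (2 ^ t - 1)} := by
        ext v
        constructor <;> rintro ⟨t, ht1, ht2, rfl⟩ <;>
          exact ⟨t, ht1, ht2, by rw [ih (n + 1 - t) (by omega)]⟩
      rw [hsets]
      have hmem : FF (n + 1) ∈
          {v | ∃ t, 1 ≤ t ∧ t ≤ n + 1 ∧ v = 2 * FF (n + 1 - t) + (2 ^ t - 1)} := by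
        refine ⟨idxx (n + 1), idx_pos (by omega), idx_le_self, ?_⟩
        exact FF_exact (n + 1) (by omega)
      apply le_antisymm
      · exact Nat.sInf_le hmem
      · refine le_csInf ⟨_, hmem⟩ ?_
        rintro b ⟨t, ht1, ht2, rfl⟩
        exact FF_lb (n + 1) t (by omega) ht1 ht2

/-- Classical Frame–Stewart numbers with 4 pegs: S4(n) − S4(n−1) = 2^(i−1)
whenever binom(i,2) < n ≤ binom(i+1,2). -/
theorem frame_stewart_four_pegs_diff
    (S4 : ℕ → ℕ) (h0 : S4 0 = 0)
    (hrec : ∀ n, 1 ≤ n →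
      S4 n = sInf {v | ∃ t, 1 ≤ t ∧ t ≤ n ∧ v = 2 * S4 (n - t) + (2 ^ t - 1)})
    (i n : ℕ) (h1 : i.choose 2 < n) (h2 : n ≤ (i + 1).choose 2) :
    S4 n - S4 (n - 1) = 2 ^ (i - 1) := by
  have hS := S4_eq_FF S4 h0 hrec
  have hn : 1 ≤ n := by omega
  have hi : idxx n = i := idx_eq h1 h2
  rw [hS, hS, FF_step hn, hi]
  exact Nat.add_sub_cancel_left _ _
end

section
/- Let (p_i)_{i≥3} be a sequence of integers all greater than 1, and for each k ≥ 3 let (u^k_j)_{j≥1} be the nondecreasing enumeration (with multiplicity) of all products ∏_{i=3}^{k} p_i^{α_i} with α_i ≥ 0. For k ≥ 4, define k_1 = 1 and k_j = min{ l > k_{j−1} : u^k_l = u^{k−1}_j } for j ≥ 2. Then for every integer n with k_j < n < k_{j+1}, we have u^k_n = p_k · u^k_{n−j}. -/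
def IsSmoothEnum (p : ℕ → ℕ) (k : ℕ) (u : ℕ → ℕ) : Prop :=
  (∀ j, 1 ≤ j → u j ≤ u (j + 1)) ∧
  ∃ e : {j : ℕ // 1 ≤ j} ≃ (Finset.Icc 3 k → ℕ),
    ∀ j : {j : ℕ // 1 ≤ j}, u j.1 = ∏ i : (Finset.Icc 3 k : Finset ℕ), p i.1 ^ e j i

namespace SmoothAux

def S (u : ℕ → ℕ) (x : ℕ) : Set ℕ := {l | 1 ≤ l ∧ u l ≤ x}

noncomputable def F (u : ℕ → ℕ) (x : ℕ) : ℕ := (S u x).ncard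

theorem mono (u : ℕ → ℕ) (h : ∀ j, 1 ≤ j → u j ≤ u (j + 1)) {a b : ℕ}
    (ha : 1 ≤ a) (hab : a ≤ b) : u a ≤ u b := by
  induction b, hab using Nat.le_induction with
  | base => exact le_rfl
  | succ n hn ih => exact ih.trans (h n (ha.trans hn))

theorem one_le {p : ℕ → ℕ} {k : ℕ} {u : ℕ → ℕ} (hu : IsSmoothEnum p k u)
    (hp : ∀ i ∈ Finset.Icc 3 k, 1 < p i) {l : ℕ} (hl : 1 ≤ l) : 1 ≤ u l := by
  obtain ⟨hmono, e, he⟩ := hu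
  rw [he ⟨l, hl⟩]
  exact Finset.one_le_prod' fun i _ => Nat.one_le_pow _ _ (by
    have := hp i.1 i.2; omega)

theorem finite_S {p : ℕ → ℕ} {k : ℕ} {u : ℕ → ℕ} (hu : IsSmoothEnum p k u)
    (hp : ∀ i ∈ Finset.Icc 3 k, 1 < p i) (x : ℕ) : (S u x).Finite := by
  obtain ⟨hmono, e, he⟩ := hu
  have hT : (Set.univ.pi (fun _ : (Finset.Icc 3 k : Finset ℕ) => Set.Iic x)).Finite :=
    Set.Finite.pi (fun _ => Set.finite_Iic x)
  set φ : ℕ → ((Finset.Icc 3 k : Finset ℕ) → ℕ) :=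
    fun l => if h : 1 ≤ l then e ⟨l, h⟩ else fun _ => 0 with hφ
  apply Set.Finite.of_finite_image (f := φ)
  · apply hT.subset
    rintro g ⟨l, ⟨hl1, hlx⟩, rfl⟩
    intro i _
    simp only [φ, dif_pos hl1]
    have hprod : u l ≤ x := hlx
    rw [he ⟨l, hl1⟩] at hprod
    have h1 : p i.1 ^ (e ⟨l, hl1⟩) i ≤ x := by
      refine le_trans ?_ hprod
      exact Finset.single_le_prod' (fun i' _ => Nat.one_le_pow _ _ (Nat.zero_lt_one.trans (hp i'.1 i'.2)))
        (Finset.mem_univ i)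
    have h2 : (e ⟨l, hl1⟩) i < p i.1 ^ (e ⟨l, hl1⟩) i := Nat.lt_pow_self (hp i.1 i.2)
    exact Set.mem_Iic.mpr (by omega)
  · intro a ⟨ha1, _⟩ b ⟨hb1, _⟩ hab
    simp only [φ, dif_pos ha1, dif_pos hb1] at hab
    have := e.injective hab
    exact congrArg Subtype.val (by exact_mod_cast this)

theorem char {p : ℕ → ℕ} {k : ℕ} {u : ℕ → ℕ} (hu : IsSmoothEnum p k u)
    (hp : ∀ i ∈ Finset.Icc 3 k, 1 < p i) {x n : ℕ} (hn : 1 ≤ n) :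
    u n ≤ x ↔ n ≤ F u x := by
  constructor
  · intro h
    have hsub : Set.Icc 1 n ⊆ S u x := by
      rintro a ⟨ha1, han⟩
      exact ⟨ha1, (mono u hu.1 ha1 han).trans h⟩
    have : (Set.Icc 1 n).ncard ≤ F u x := Set.ncard_le_ncard hsub (finite_S hu hp x)
    rwa [← Finset.coe_Icc, Set.ncard_coe_finset, Nat.card_Icc, Nat.add_sub_cancel] at this
  · intro h
    by_contra hc
    push_neg at hc
    have hsub : S u x ⊆ Set.Icc 1 (n - 1) := by
      rintro a ⟨ha1, hax⟩
      refine ⟨ha1, ?_⟩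
      by_contra hna
      push_neg at hna
      have : u n ≤ u a := mono u hu.1 hn (by omega)
      omega
    have h2 : F u x ≤ n - 1 := by
      have := Set.ncard_le_ncard hsub (Set.finite_Icc 1 (n - 1))
      rwa [← Finset.coe_Icc, Set.ncard_coe_finset, Nat.card_Icc, Nat.add_sub_cancel] at this
    omega

theorem F_mono {p : ℕ → ℕ} {k : ℕ} {u : ℕ → ℕ} (hu : IsSmoothEnum p k u)
    (hp : ∀ i ∈ Finset.Icc 3 k, 1 < p i) {x y : ℕ} (hxy : x ≤ y) : F u x ≤ F u y := by
  rcases Nat.eq_zero_or_pos (F u x) with h | h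
  · omega
  · exact (char hu hp h).mp (((char hu hp h).mpr le_rfl).trans hxy)

theorem u_one {p : ℕ → ℕ} {k : ℕ} {u : ℕ → ℕ} (hu : IsSmoothEnum p k u)
    (hp : ∀ i ∈ Finset.Icc 3 k, 1 < p i) : u 1 = 1 := by
  have h1 : 1 ≤ u 1 := one_le hu hp le_rfl
  obtain ⟨hmono, e, he⟩ := hu
  have h0 : u (e.symm 0).1 = 1 := by
    rw [he (e.symm 0)]
    simp
  have h2 : u 1 ≤ u (e.symm 0).1 := mono u hmono le_rfl (e.symm 0).2
  omega

theorem F_zero {p : ℕ → ℕ} {k : ℕ} {u : ℕ → ℕ} (hu : IsSmoothEnum p k u)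
    (hp : ∀ i ∈ Finset.Icc 3 k, 1 < p i) : F u 0 = 0 := by
  have : S u 0 = ∅ := by
    ext l
    simp only [S, Set.mem_setOf_eq, Set.mem_empty_iff_false, iff_false, not_and]
    intro hl
    have := one_le ⟨hu.1, hu.2⟩ hp hl
    omega
  rw [F, this, Set.ncard_empty]

def Pr (p : ℕ → ℕ) (k : ℕ) (g : (Finset.Icc 3 k : Finset ℕ) → ℕ) : ℕ :=
  ∏ i : (Finset.Icc 3 k : Finset ℕ), p i.1 ^ g i

def resF (k : ℕ) (g : (Finset.Icc 3 k : Finset ℕ) → ℕ) :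
    (Finset.Icc 3 (k - 1) : Finset ℕ) → ℕ :=
  fun i => g ⟨i.1, by
    have := Finset.mem_Icc.mp i.2
    exact Finset.mem_Icc.mpr ⟨this.1, by omega⟩⟩

def extF (k : ℕ) (h : (Finset.Icc 3 (k - 1) : Finset ℕ) → ℕ) :
    (Finset.Icc 3 k : Finset ℕ) → ℕ :=
  fun i => if hik : i.1 = k then 0 else h ⟨i.1, by
    have := Finset.mem_Icc.mp i.2
    exact Finset.mem_Icc.mpr ⟨this.1, by omega⟩⟩

theorem split {p : ℕ → ℕ} {k : ℕ} (hk : 4 ≤ k)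
    (hp : ∀ i ∈ Finset.Icc 3 k, 1 < p i)
    {uk uk1 : ℕ → ℕ} (huk : IsSmoothEnum p k uk) (huk1 : IsSmoothEnum p (k - 1) uk1)
    (x : ℕ) : F uk x = F uk1 x + F uk (x / p k) := by
  have hp1 : ∀ i ∈ Finset.Icc 3 (k - 1), 1 < p i := by
    intro i hi
    have := Finset.mem_Icc.mp hi
    exact hp i (Finset.mem_Icc.mpr ⟨this.1, by omega⟩)
  have hfin1 : Finite ↥(S uk x) := (finite_S huk hp x).to_subtype
  have hfin2 : Finite ↥(S uk1 x) := (finite_S huk1 hp1 x).to_subtype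
  have hfin3 : Finite ↥(S uk (x / p k)) := (finite_S huk hp (x / p k)).to_subtype
  obtain ⟨mk, e, he⟩ := huk
  obtain ⟨mk1, f, hf⟩ := huk1
  have hpk : 1 < p k := hp k (Finset.mem_Icc.mpr ⟨by omega, le_rfl⟩)
  have hκmem : k ∈ (Finset.Icc 3 k : Finset ℕ) := Finset.mem_Icc.mpr ⟨by omega, le_rfl⟩
  set κ : (Finset.Icc 3 k : Finset ℕ) := ⟨k, hκmem⟩ with hκ
  -- product decomposition lemmas
  have update_prod : ∀ (g : (Finset.Icc 3 k : Finset ℕ) → ℕ) (m : ℕ),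
      Pr p k (Function.update g κ m) = p k ^ m * ∏ i ∈ Finset.univ.erase κ, p i.1 ^ g i := by
    intro g m
    rw [Pr, ← Finset.mul_prod_erase Finset.univ
      (fun i : (Finset.Icc 3 k : Finset ℕ) => p i.1 ^ (Function.update g κ m i))
      (Finset.mem_univ κ)]
    congr 1
    · rw [Function.update_self]
    · exact Finset.prod_congr rfl fun i hi => by
        rw [Function.update_of_ne (Finset.ne_of_mem_erase hi)]
  have self_prod : ∀ g : (Finset.Icc 3 k : Finset ℕ) → ℕ,
      Pr p k g = p k ^ g κ * ∏ i ∈ Finset.univ.erase κ, p i.1 ^ g i := by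
    intro g
    conv_lhs => rw [← Function.update_eq_self κ g]
    exact update_prod g (g κ)
  have P_succ : ∀ g : (Finset.Icc 3 k : Finset ℕ) → ℕ,
      Pr p k (Function.update g κ (g κ + 1)) = p k * Pr p k g := by
    intro g
    rw [update_prod, self_prod g, pow_succ]
    ring
  have split_prod : ∀ g : (Finset.Icc 3 k : Finset ℕ) → ℕ,
      Pr p k g = Pr p (k - 1) (resF k g) * p k ^ g κ := by
    intro g
    set Gn : ℕ → ℕ := fun i => if h : i ∈ (Finset.Icc 3 k : Finset ℕ)
      then p i ^ g ⟨i, h⟩ else 1 with hGn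
    have h1 : Pr p k g = ∏ i ∈ Finset.Icc 3 k, Gn i := by
      rw [← Finset.prod_coe_sort (Finset.Icc 3 k) Gn, Pr]
      exact Finset.prod_congr rfl fun i _ => by
        simp only [hGn]; rw [dif_pos i.2]
    have h2 : Pr p (k - 1) (resF k g) = ∏ i ∈ Finset.Icc 3 (k - 1), Gn i := by
      rw [← Finset.prod_coe_sort (Finset.Icc 3 (k - 1)) Gn, Pr]
      refine Finset.prod_congr rfl fun i _ => ?_
      have hi : i.1 ∈ (Finset.Icc 3 k : Finset ℕ) := by
        have := Finset.mem_Icc.mp i.2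
        exact Finset.mem_Icc.mpr ⟨this.1, by omega⟩
      simp only [hGn]; rw [dif_pos hi]
      rfl
    have hk1 : k - 1 + 1 = k := by omega
    have h3 : ∏ i ∈ Finset.Icc 3 k, Gn i =
        (∏ i ∈ Finset.Icc 3 (k - 1), Gn i) * Gn k := by
      rw [← hk1]
      exact Finset.prod_Icc_succ_top (by omega) Gn
    have h4 : Gn k = p k ^ g κ := by
      simp only [hGn]; rw [dif_pos hκmem]
    rw [h1, h3, h2.symm, h4]
  have ext_κ : ∀ h, extF k h κ = 0 := fun h => by
    rw [extF]; simp [hκ]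
  have res_ext : ∀ h, resF k (extF k h) = h := by
    intro h
    funext i
    have hi : i.1 ≠ k := by have := Finset.mem_Icc.mp i.2; omega
    rw [resF, extF]
    simp only [dif_neg hi]
  have ext_res : ∀ g, g κ = 0 → extF k (resF k g) = g := by
    intro g hg
    funext i
    rw [extF]
    by_cases hik : i.1 = k
    · rw [dif_pos hik]
      have : i = κ := Subtype.ext hik
      rw [this, hg]
    · rw [dif_neg hik]
      rfl
  have P_ext : ∀ h, Pr p k (extF k h) = Pr p (k - 1) h := by
    intro h
    rw [split_prod, res_ext, ext_κ, pow_zero, mul_one]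
  have P_res : ∀ g, g κ = 0 → Pr p (k - 1) (resF k g) = Pr p k g := by
    intro g hg
    rw [split_prod g, hg, pow_zero, mul_one]
  have cancel1 : ∀ g : (Finset.Icc 3 k : Finset ℕ) → ℕ, g κ ≠ 0 →
      Function.update (Function.update g κ (g κ - 1)) κ
        (Function.update g κ (g κ - 1) κ + 1) = g := by
    intro g hg
    rw [Function.update_self, Function.update_idem, Nat.sub_add_cancel
      (Nat.one_le_iff_ne_zero.mpr hg), Function.update_eq_self]
  have cancel2 : ∀ g : (Finset.Icc 3 k : Finset ℕ) → ℕ,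
      Function.update (Function.update g κ (g κ + 1)) κ
        (Function.update g κ (g κ + 1) κ - 1) = g := by
    intro g
    rw [Function.update_self, Function.update_idem, Nat.add_sub_cancel,
      Function.update_eq_self]
  -- equivalences
  have e1 : ∀ (u : ℕ → ℕ) (y : ℕ), ↥(S u y) ≃ {j : {j : ℕ // 1 ≤ j} // u j.1 ≤ y} :=
    fun u y => (Equiv.subtypeSubtypeEquivSubtypeInter (fun l => 1 ≤ l) (fun l => u l ≤ y)).symm
  have e2 : ∀ y : ℕ, {j : {j : ℕ // 1 ≤ j} // uk j.1 ≤ y} ≃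
      {g : (Finset.Icc 3 k : Finset ℕ) → ℕ // Pr p k g ≤ y} :=
    fun y => e.subtypeEquiv (fun a => by rw [he a]; exact Iff.rfl)
  have e2' : {j : {j : ℕ // 1 ≤ j} // uk1 j.1 ≤ x} ≃
      {g : (Finset.Icc 3 (k - 1) : Finset ℕ) → ℕ // Pr p (k - 1) g ≤ x} :=
    f.subtypeEquiv (fun a => by rw [hf a]; exact Iff.rfl)
  have e3 : {g : (Finset.Icc 3 k : Finset ℕ) → ℕ // Pr p k g ≤ x} ≃
      {y : {g : (Finset.Icc 3 k : Finset ℕ) → ℕ // Pr p k g ≤ x} // y.1 κ = 0} ⊕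
      {y : {g : (Finset.Icc 3 k : Finset ℕ) → ℕ // Pr p k g ≤ x} // ¬ y.1 κ = 0} :=
    (Equiv.sumCompl _).symm
  have e4L : {y : {g : (Finset.Icc 3 k : Finset ℕ) → ℕ // Pr p k g ≤ x} // y.1 κ = 0} ≃
      {g : (Finset.Icc 3 k : Finset ℕ) → ℕ // Pr p k g ≤ x ∧ g κ = 0} :=
    Equiv.subtypeSubtypeEquivSubtypeInter (fun g => Pr p k g ≤ x) (fun g => g κ = 0)
  have e5L : {g : (Finset.Icc 3 k : Finset ℕ) → ℕ // Pr p k g ≤ x ∧ g κ = 0} ≃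
      {h : (Finset.Icc 3 (k - 1) : Finset ℕ) → ℕ // Pr p (k - 1) h ≤ x} :=
    { toFun := fun y => ⟨resF k y.1, by rw [P_res y.1 y.2.2]; exact y.2.1⟩
      invFun := fun z => ⟨extF k z.1, by rw [P_ext]; exact z.2, ext_κ z.1⟩
      left_inv := fun y => Subtype.ext (ext_res y.1 y.2.2)
      right_inv := fun z => Subtype.ext (res_ext z.1) }
  have e4R : {y : {g : (Finset.Icc 3 k : Finset ℕ) → ℕ // Pr p k g ≤ x} // ¬ y.1 κ = 0} ≃
      {g : (Finset.Icc 3 k : Finset ℕ) → ℕ // Pr p k g ≤ x ∧ ¬ g κ = 0} :=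
    Equiv.subtypeSubtypeEquivSubtypeInter (fun g => Pr p k g ≤ x) (fun g => ¬ g κ = 0)
  have hpk0 : 0 < p k := by omega
  have e5R : {g : (Finset.Icc 3 k : Finset ℕ) → ℕ // Pr p k g ≤ x ∧ ¬ g κ = 0} ≃
      {g : (Finset.Icc 3 k : Finset ℕ) → ℕ // Pr p k g ≤ x / p k} :=
    { toFun := fun y => ⟨Function.update y.1 κ (y.1 κ - 1), by
        have h2 : Pr p k y.1 = p k * Pr p k (Function.update y.1 κ (y.1 κ - 1)) := by
          conv_lhs => rw [← cancel1 y.1 y.2.2]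
          rw [P_succ]
        rw [Nat.le_div_iff_mul_le hpk0, mul_comm, ← h2]
        exact y.2.1⟩
      invFun := fun z => ⟨Function.update z.1 κ (z.1 κ + 1), by
        constructor
        · rw [P_succ]
          have hz := (Nat.le_div_iff_mul_le hpk0).mp z.2
          rw [mul_comm] at hz
          exact hz
        · rw [Function.update_self]
          exact Nat.succ_ne_zero _⟩
      left_inv := fun y => Subtype.ext (cancel1 y.1 y.2.2)
      right_inv := fun z => Subtype.ext (cancel2 z.1) }
  have Ψ : ↥(S uk x) ≃ ↥(S uk1 x) ⊕ ↥(S uk (x / p k)) :=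
    ((e1 uk x).trans (e2 x)).trans (e3.trans (Equiv.sumCongr
      ((e4L.trans e5L).trans (e2'.symm.trans (e1 uk1 x).symm))
      ((e4R.trans e5R).trans ((e2 (x / p k)).symm.trans (e1 uk (x / p k)).symm))))
  have hcard := Nat.card_congr Ψ
  rw [Nat.card_sum] at hcard
  simp only [F]
  rw [← Nat.card_coe_set_eq, ← Nat.card_coe_set_eq, ← Nat.card_coe_set_eq]
  exact hcard


end SmoothAux

open SmoothAux in
/-- Lemma 1: for k_j < n < k_{j+1}, u^k_n = p_k · u^k_{n−j}. -/
theorem smooth_enum_recursive_structure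
    (p : ℕ → ℕ) (k : ℕ) (hk : 4 ≤ k)
    (hp : ∀ i, 3 ≤ i → i ≤ k → 1 < p i)
    (uk uk1 : ℕ → ℕ)
    (huk : IsSmoothEnum p k uk) (huk1 : IsSmoothEnum p (k - 1) uk1)
    (K : ℕ → ℕ) (hK1 : K 1 = 1)
    (hK : ∀ j, 2 ≤ j → K j = sInf {l | K (j - 1) < l ∧ uk l = uk1 j})
    (j n : ℕ) (hj : 1 ≤ j) (h1 : K j < n) (h2 : n < K (j + 1)) :
    uk n = p k * uk (n - j) := by
  have hpIcc : ∀ i ∈ Finset.Icc 3 k, 1 < p i := fun i hi => by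
    have := Finset.mem_Icc.mp hi
    exact hp i this.1 this.2
  have hpIcc1 : ∀ i ∈ Finset.Icc 3 (k - 1), 1 < p i := fun i hi => by
    have := Finset.mem_Icc.mp hi
    exact hp i this.1 (by omega)
  have hpk0 : 0 < p k := by have := hp k (by omega) le_rfl; omega
  have charK : ∀ {n x : ℕ}, 1 ≤ n → (uk n ≤ x ↔ n ≤ F uk x) :=
    fun hn => char huk hpIcc hn
  have charK1 : ∀ {n x : ℕ}, 1 ≤ n → (uk1 n ≤ x ↔ n ≤ F uk1 x) :=
    fun hn => char huk1 hpIcc1 hn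
  have charG : ∀ {m x : ℕ}, 1 ≤ m → (p k * uk m ≤ x ↔ m ≤ F uk (x / p k)) := by
    intro m x hm
    rw [← char huk hpIcc hm, Nat.le_div_iff_mul_le hpk0, mul_comm]
  have Gmono : ∀ {a b : ℕ}, a ≤ b → F uk (a / p k) ≤ F uk (b / p k) :=
    fun h => F_mono huk hpIcc (Nat.div_le_div_right h)
  -- closed formula for K
  have Kform : ∀ j, 1 ≤ j → K j = j + F uk ((uk1 j - 1) / p k) := by
    intro j hj
    induction j, hj using Nat.le_induction with
    | base =>
      rw [hK1, u_one huk1 hpIcc1]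
      simp [Nat.zero_div, F_zero huk hpIcc]
    | succ j hj ih =>
      have h2j : 2 ≤ j + 1 := by omega
      rw [hK (j + 1) h2j]
      simp only [Nat.add_sub_cancel]
      have hv'v : uk1 j ≤ uk1 (j + 1) := huk1.1 j hj
      have hv1 : 1 ≤ uk1 (j + 1) := one_le huk1 hpIcc1 (by omega)
      have hv'1 : 1 ≤ uk1 j := one_le huk1 hpIcc1 hj
      set c := j + 1 + F uk ((uk1 (j + 1) - 1) / p k) with hc
      have hc1 : 1 ≤ c := by omega
      have hukc_le : uk c ≤ uk1 (j + 1) := by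
        rw [charK hc1, split hk hpIcc huk huk1]
        have hA : j + 1 ≤ F uk1 (uk1 (j + 1)) := (charK1 (by omega)).mp le_rfl
        have hB : F uk ((uk1 (j + 1) - 1) / p k) ≤ F uk (uk1 (j + 1) / p k) :=
          Gmono (by omega)
        omega
      have hukc_ge : uk1 (j + 1) ≤ uk c := by
        by_contra hcon
        push_neg at hcon
        have h5 : uk c ≤ uk1 (j + 1) - 1 := by omega
        rw [charK hc1, split hk hpIcc huk huk1] at h5
        have h6 : F uk1 (uk1 (j + 1) - 1) ≤ j := by
          by_contra h7
          push_neg at h7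
          have := (charK1 (show 1 ≤ j + 1 by omega)).mpr h7
          omega
        omega
      have hukc : uk c = uk1 (j + 1) := le_antisymm hukc_le hukc_ge
      have hKjc : K j < c := by
        rw [ih]
        have := Gmono (show uk1 j - 1 ≤ uk1 (j + 1) - 1 by omega)
        omega
      have hlb : ∀ l, K j < l ∧ uk l = uk1 (j + 1) → c ≤ l := by
        rintro l ⟨hl1, hl2⟩
        have hl0 : 1 ≤ l := by rw [ih] at hl1; omega
        by_cases hcase : uk1 j = uk1 (j + 1)
        · rw [ih, hcase] at hl1
          omega
        · have hlt : uk1 j < uk1 (j + 1) := lt_of_le_of_ne hv'v hcase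
          have h8 : j ≤ F uk1 (uk1 (j + 1) - 1) := (charK1 hj).mp (by omega)
          have h9 : ¬ l ≤ F uk (uk1 (j + 1) - 1) := by
            rw [← charK hl0]
            omega
          rw [split hk hpIcc huk huk1] at h9
          omega
      refine le_antisymm (Nat.sInf_le ⟨hKjc, hukc⟩) ?_
      have hne : {l | K j < l ∧ uk l = uk1 (j + 1)}.Nonempty := ⟨c, hKjc, hukc⟩
      exact hlb _ (Nat.sInf_mem hne)
  -- main argument
  have hKj := Kform j hj
  have hKj1 := Kform (j + 1) (by omega)
  have hn1 : 1 ≤ n := by omega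
  have hm1 : 1 ≤ n - j := by omega
  set m := n - j with hm
  have hGv : F uk ((uk1 j - 1) / p k) < m := by omega
  have hGw : m ≤ F uk ((uk1 (j + 1) - 1) / p k) := by omega
  have hv1 : 1 ≤ uk1 j := one_le huk1 hpIcc1 hj
  have hw1 : 1 ≤ uk1 (j + 1) := one_le huk1 hpIcc1 (by omega)
  have hy_ge : uk1 j ≤ p k * uk m := by
    by_contra hcon
    push_neg at hcon
    have h5 : p k * uk m ≤ uk1 j - 1 := by omega
    rw [charG hm1] at h5
    omega
  have hy_lt : p k * uk m ≤ uk1 (j + 1) - 1 := (charG hm1).mpr hGw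
  have hFk1_ge : j ≤ F uk1 (p k * uk m) := (charK1 hj).mp hy_ge
  have hFk1_le : F uk1 (p k * uk m) ≤ j := by
    by_contra h7
    push_neg at h7
    have := (charK1 (show 1 ≤ j + 1 by omega)).mpr h7
    omega
  have hG_ge : m ≤ F uk (p k * uk m / p k) := (charG hm1).mp le_rfl
  have hle : uk n ≤ p k * uk m := by
    rw [charK hn1, split hk hpIcc huk huk1]
    omega
  have hge : p k * uk m ≤ uk n := by
    by_contra hcon
    push_neg at hcon
    have hy1 : 1 ≤ p k * uk m := le_trans hv1 hy_ge
    have h5 : uk n ≤ p k * uk m - 1 := by omega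
    rw [charK hn1, split hk hpIcc huk huk1] at h5
    have h6 : F uk1 (p k * uk m - 1) ≤ j :=
      le_trans (F_mono huk1 hpIcc1 (by omega)) hFk1_le
    have h7 : F uk ((p k * uk m - 1) / p k) < m := by
      by_contra h8
      push_neg at h8
      have := (charG hm1).mpr h8
      omega
    omega
  exact le_antisymm hle hge
end

section
/- Let (p_i)_{i≥3} be a sequence of positive integers and define G^1_3(0)=0, G^1_3(n) = p_3·G^1_3(n−1) + 1, and for k ≥ 4, G^1_k(n) = min_{1≤t≤n}{ p_k·G^1_k(n−t) + G^1_{k−1}(t) }, G^1_k(0)=0. Let (u^k_j)_{j≥1} be the nondecreasing enumeration with multiplicity of all integers ∏_{i=3}^{k} p_i^{α_i}, α_i ≥ 0. Then G^1_k(n) = Σ_{j=1}^{n} u^k_j for every n ≥ 1 and k ≥ 3. -/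
open Finset
open scoped Classical

lemma FS_mono {u : ℕ → ℕ} (h : ∀ j, 1 ≤ j → u j ≤ u (j+1)) :
    ∀ j j', 1 ≤ j → j ≤ j' → u j ≤ u j' := by
  intro j j' h1 hle
  induction j', hle using Nat.le_induction with
  | base => exact le_refl _
  | succ m hm ih => exact ih.trans (h m (h1.trans hm))

lemma FS_le_of_rearrange {f g : ℕ → ℕ}
    (hf : ∀ j, 1 ≤ j → f j ≤ f (j+1)) (hg : ∀ j, 1 ≤ j → g j ≤ g (j+1))
    (σ : {j : ℕ // 1 ≤ j} ≃ {j : ℕ // 1 ≤ j})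
    (hσ : ∀ j, f j.1 = g (σ j).1) :
    ∀ j, 1 ≤ j → g j ≤ f j := by
  intro j h1
  by_contra hlt
  push_neg at hlt
  -- σ maps [1,j] into [1,j-1]
  have key : ∀ i (hi : 1 ≤ i), i ≤ j → (σ ⟨i, hi⟩).1 ≤ j - 1 := by
    intro i hi hij
    by_contra hge
    push_neg at hge
    have h2 : j ≤ (σ ⟨i, hi⟩).1 := by omega
    have : g j ≤ g (σ ⟨i, hi⟩).1 := FS_mono hg j _ h1 h2
    have h3 : f i ≤ f j := FS_mono hf i j hi hij
    have h4 : f i = g (σ ⟨i, hi⟩).1 := hσ ⟨i, hi⟩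
    omega
  have hinj : Set.InjOn (fun i => if h : 1 ≤ i then (σ ⟨i, h⟩).1 else 0)
      (Finset.Icc 1 j : Finset ℕ) := by
    intro a ha b hb hab
    simp only [Finset.coe_Icc, Set.mem_Icc] at ha hb
    simp only [dif_pos ha.1, dif_pos hb.1] at hab
    have := σ.injective (Subtype.ext hab)
    exact congrArg Subtype.val this
  have hmaps : ∀ i ∈ Finset.Icc 1 j, (fun i => if h : 1 ≤ i then (σ ⟨i, h⟩).1 else 0) i ∈ Finset.Icc 1 (j-1) := by
    intro i hi
    simp only [Finset.mem_Icc] at hi ⊢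
    rw [dif_pos hi.1]
    exact ⟨(σ ⟨i, hi.1⟩).2, key i hi.1 hi.2⟩
  have := Finset.card_le_card_of_injOn _ hmaps hinj
  rw [Nat.card_Icc, Nat.card_Icc] at this
  omega

lemma FS_enum_unique {f g : ℕ → ℕ}
    (hf : ∀ j, 1 ≤ j → f j ≤ f (j+1)) (hg : ∀ j, 1 ≤ j → g j ≤ g (j+1))
    (σ : {j : ℕ // 1 ≤ j} ≃ {j : ℕ // 1 ≤ j})
    (hσ : ∀ j, f j.1 = g (σ j).1) :
    ∀ j, 1 ≤ j → f j = g j := by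
  intro j h1
  have h2 : ∀ j : {j : ℕ // 1 ≤ j}, g j.1 = f (σ.symm j).1 := by
    intro j
    have := hσ (σ.symm j)
    simpa using this.symm
  exact le_antisymm (FS_le_of_rearrange hg hf σ.symm h2 j h1)
    (FS_le_of_rearrange hf hg σ hσ j h1)

lemma FS_sum_smallest {u : ℕ → ℕ} (hu : ∀ j, 1 ≤ j → u j ≤ u (j+1)) :
    ∀ (n : ℕ) (s : Finset ℕ), (∀ m ∈ s, 1 ≤ m) → s.card = n →
    ∑ j ∈ Finset.Icc 1 n, u j ≤ ∑ m ∈ s, u m := by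
  intro n
  induction n with
  | zero => intro s hs hc; simp
  | succ n ih =>
    intro s hs hc
    have hne : s.Nonempty := by rw [← Finset.card_pos, hc]; omega
    set M := s.max' hne with hM
    have hMs : M ∈ s := s.max'_mem hne
    have hsub : s ⊆ Finset.Icc 1 M := by
      intro x hx
      simp only [Finset.mem_Icc]
      exact ⟨hs x hx, s.le_max' x hx⟩
    have hMn : n + 1 ≤ M := by
      have := Finset.card_le_card hsub
      rw [hc, Nat.card_Icc] at this; omega
    have herase : (s.erase M).card = n := by rw [Finset.card_erase_of_mem hMs, hc]; omega
    have h1 : ∑ j ∈ Finset.Icc 1 n, u j ≤ ∑ m ∈ s.erase M, u m :=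
      ih _ (fun m hm => hs m (Finset.mem_of_mem_erase hm)) herase
    have h2 : u (n+1) ≤ u M := FS_mono hu (n+1) M (by omega) hMn
    have h3 : ∑ m ∈ s, u m = u M + ∑ m ∈ s.erase M, u m :=
      (Finset.add_sum_erase s u hMs).symm
    rw [Finset.sum_Icc_succ_top (by omega : 1 ≤ n+1)]
    omega

lemma FS_filter_range {q : ℕ → Prop} [DecidablePred q] (hq : (setOf q).Infinite) (m : ℕ) :
    (Finset.range m).filter q = (Finset.range (Nat.count q m)).image (Nat.nth q) := by
  ext x
  simp only [Finset.mem_filter, Finset.mem_range, Finset.mem_image]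
  constructor
  · rintro ⟨hxm, hqx⟩
    refine ⟨Nat.count q x, ?_, Nat.nth_count hqx⟩
    have : Nat.count q x < Nat.count q (x+1) := by
      rw [Nat.count_succ, if_pos hqx]; omega
    exact lt_of_lt_of_le this (Nat.count_monotone q hxm)
  · rintro ⟨i, hi, rfl⟩
    exact ⟨(Nat.lt_nth_iff_count_lt hq).mp hi, Nat.nth_mem_of_infinite hq i⟩

section
variable (k : ℕ) (hk : 3 ≤ k)

def FSK : (Finset.Icc 3 (k+1) : Finset ℕ) := ⟨k+1, by simp only [Finset.mem_Icc]; omega⟩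

def FSE (e : {j : ℕ // 1 ≤ j} ≃ ((Finset.Icc 3 (k+1) : Finset ℕ) → ℕ)) :
    ℕ → ((Finset.Icc 3 (k+1) : Finset ℕ) → ℕ) :=
  fun m => if h : 1 ≤ m then e ⟨m, h⟩ else fun _ => 0

variable (e : {j : ℕ // 1 ≤ j} ≃ ((Finset.Icc 3 (k+1) : Finset ℕ) → ℕ))

def FSPp : ℕ → Prop := fun m => 1 ≤ m ∧ FSE k e m (FSK k hk) = 0
def FSQp : ℕ → Prop := fun m => 1 ≤ m ∧ FSE k e m (FSK k hk) ≠ 0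

lemma FSE_eq {m : ℕ} (h : 1 ≤ m) : FSE k e m = e ⟨m, h⟩ := dif_pos h

lemma FSE_symm (f : (Finset.Icc 3 (k+1) : Finset ℕ) → ℕ) :
    FSE k e (e.symm f).1 = f := by
  rw [FSE_eq k e (e.symm f).2]
  rw [show (⟨(e.symm f).1, (e.symm f).2⟩ : {j : ℕ // 1 ≤ j}) = e.symm f from Subtype.ext rfl]
  exact e.apply_symm_apply f

lemma FSPp_infinite : (setOf (FSPp k hk e)).Infinite := by
  have h3 : (3 : ℕ) ∈ Finset.Icc 3 (k+1) := by simp only [Finset.mem_Icc]; omega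
  set g : ℕ → ((Finset.Icc 3 (k+1) : Finset ℕ) → ℕ) :=
    fun t => Function.update (fun _ => 0) ⟨3, h3⟩ t with hg
  have hne : (⟨3, h3⟩ : (Finset.Icc 3 (k+1) : Finset ℕ)) ≠ FSK k hk := by
    intro hc
    have := congrArg Subtype.val hc
    simp [FSK] at this; omega
  refine Set.infinite_of_injective_forall_mem (f := fun t => (e.symm (g t)).1) ?_ ?_
  · intro a b hab
    have h2 : g a = g b := e.symm.injective (Subtype.ext hab)
    have := congrFun h2 ⟨3, h3⟩
    simpa [hg, Function.update_self] using this
  · intro t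
    refine ⟨(e.symm (g t)).2, ?_⟩
    rw [FSE_symm]
    simp [hg, Function.update_of_ne hne.symm]

lemma FSQp_infinite : (setOf (FSQp k hk e)).Infinite := by
  set g : ℕ → ((Finset.Icc 3 (k+1) : Finset ℕ) → ℕ) :=
    fun t => Function.update (fun _ => 0) (FSK k hk) (t+1) with hg
  refine Set.infinite_of_injective_forall_mem (f := fun t => (e.symm (g t)).1) ?_ ?_
  · intro a b hab
    have h2 : g a = g b := e.symm.injective (Subtype.ext hab)
    have := congrFun h2 (FSK k hk)
    simpa [hg, Function.update_self] using this
  · intro t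
    refine ⟨(e.symm (g t)).2, ?_⟩
    rw [FSE_symm]
    simp [hg, Function.update_self]

def FSrestrict : ((Finset.Icc 3 (k+1) : Finset ℕ) → ℕ) → ((Finset.Icc 3 k : Finset ℕ) → ℕ) :=
  fun f i => f ⟨i.1, by have := i.2; simp only [Finset.mem_Icc] at *; omega⟩

def FSextend : ((Finset.Icc 3 k : Finset ℕ) → ℕ) → ((Finset.Icc 3 (k+1) : Finset ℕ) → ℕ) :=
  fun g i => if h : i.1 ∈ Finset.Icc 3 k then g ⟨i.1, h⟩ else 0

lemma FSextend_K (g : (Finset.Icc 3 k : Finset ℕ) → ℕ) : FSextend k g (FSK k hk) = 0 := by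
  rw [FSextend, dif_neg]
  simp [FSK, Finset.mem_Icc]

lemma FSrestrict_extend (g : (Finset.Icc 3 k : Finset ℕ) → ℕ) :
    FSrestrict k (FSextend k g) = g := by
  funext i
  rw [FSrestrict, FSextend, dif_pos i.2]

lemma FSextend_restrict (f : (Finset.Icc 3 (k+1) : Finset ℕ) → ℕ) (hf : f (FSK k hk) = 0) :
    FSextend k (FSrestrict k f) = f := by
  funext i
  by_cases h : i.1 ∈ Finset.Icc 3 k
  · rw [FSextend, dif_pos h, FSrestrict]
  · have hi := i.2
    simp only [Finset.mem_Icc] at h hi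
    have hiK : i = FSK k hk := Subtype.ext (by simp only [FSK]; omega)
    rw [FSextend, dif_neg (by rw [hiK]; simp [FSK, Finset.mem_Icc]), hiK, hf]

noncomputable def FSeP : {j : ℕ // 1 ≤ j} ≃ ((Finset.Icc 3 k : Finset ℕ) → ℕ) where
  toFun j := FSrestrict k (FSE k e (Nat.nth (FSPp k hk e) (j.1 - 1)))
  invFun g := ⟨Nat.count (FSPp k hk e) (e.symm (FSextend k g)).1 + 1, by omega⟩
  left_inv := by
    intro j
    dsimp only
    set m := Nat.nth (FSPp k hk e) (j.1 - 1) with hm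
    have hPm : FSPp k hk e m := Nat.nth_mem_of_infinite (FSPp_infinite k hk e) _
    have h1 : (e.symm (FSE k e m)).1 = m := by
      rw [FSE_eq k e hPm.1, e.symm_apply_apply]
    apply Subtype.ext
    simp only
    rw [FSextend_restrict k hk _ hPm.2, h1, hm,
      Nat.count_nth_of_infinite (FSPp_infinite k hk e)]
    have := j.2; omega
  right_inv := by
    intro g
    dsimp only
    set x := e.symm (FSextend k g) with hx
    have hE : FSE k e x.1 = FSextend k g := FSE_symm k e _
    have hPx : FSPp k hk e x.1 := ⟨x.2, by rw [hE]; exact FSextend_K k hk g⟩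
    simp only [Nat.add_sub_cancel]
    rw [Nat.nth_count hPx, hE, FSrestrict_extend]

noncomputable def FSeQ : {j : ℕ // 1 ≤ j} ≃ ((Finset.Icc 3 (k+1) : Finset ℕ) → ℕ) where
  toFun j := Function.update (FSE k e (Nat.nth (FSQp k hk e) (j.1 - 1))) (FSK k hk)
    (FSE k e (Nat.nth (FSQp k hk e) (j.1 - 1)) (FSK k hk) - 1)
  invFun g := ⟨Nat.count (FSQp k hk e)
    (e.symm (Function.update g (FSK k hk) (g (FSK k hk) + 1))).1 + 1, by omega⟩
  left_inv := by
    intro j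
    dsimp only
    set m := Nat.nth (FSQp k hk e) (j.1 - 1) with hm
    have hQm : FSQp k hk e m := Nat.nth_mem_of_infinite (FSQp_infinite k hk e) _
    have h0 : Function.update (Function.update (FSE k e m) (FSK k hk) (FSE k e m (FSK k hk) - 1))
        (FSK k hk) (Function.update (FSE k e m) (FSK k hk)
          (FSE k e m (FSK k hk) - 1) (FSK k hk) + 1)
        = FSE k e m := by
      rw [Function.update_self, Function.update_idem]
      have h2 : FSE k e m (FSK k hk) - 1 + 1 = FSE k e m (FSK k hk) := by
        have := hQm.2; omega
      rw [h2, Function.update_eq_self]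
    simp only [h0]
    have h1 : (e.symm (FSE k e m)).1 = m := by
      rw [FSE_eq k e hQm.1, e.symm_apply_apply]
    apply Subtype.ext
    simp only
    rw [h1, hm, Nat.count_nth_of_infinite (FSQp_infinite k hk e)]
    have := j.2; omega
  right_inv := by
    intro g
    dsimp only
    set g' := Function.update g (FSK k hk) (g (FSK k hk) + 1) with hg'
    set x := e.symm g' with hx
    have hE : FSE k e x.1 = g' := FSE_symm k e _
    have hQx : FSQp k hk e x.1 := ⟨x.2, by rw [hE, hg', Function.update_self]; omega⟩
    simp only [Nat.add_sub_cancel]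
    rw [Nat.nth_count hQx, hE, hg', Function.update_self, Function.update_idem]
    simp [Function.update_eq_self]
def FSbar (f : (Finset.Icc 3 k : Finset ℕ) → ℕ) : ℕ → ℕ :=
  fun m => if h : m ∈ Finset.Icc 3 k then f ⟨m, h⟩ else 0

lemma FSbar_spec (f : (Finset.Icc 3 k : Finset ℕ) → ℕ) (i : (Finset.Icc 3 k : Finset ℕ)) :
    FSbar k f i.1 = f i := by
  rw [FSbar, dif_pos i.2]

lemma FS_prod_eq (p : ℕ → ℕ) (f : (Finset.Icc 3 k : Finset ℕ) → ℕ) :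
    ∏ i : (Finset.Icc 3 k : Finset ℕ), p i.1 ^ f i
      = ∏ m ∈ Finset.Icc 3 k, p m ^ FSbar k f m := by
  rw [← Finset.prod_coe_sort (Finset.Icc 3 k) (fun m => p m ^ FSbar k f m)]
  exact Finset.prod_congr rfl (fun i _ => by rw [FSbar_spec])

lemma FSbar_K (f : (Finset.Icc 3 (k+1) : Finset ℕ) → ℕ) :
    FSbar (k+1) f (k+1) = f (FSK k hk) := FSbar_spec (k+1) f (FSK k hk)

lemma FS_prod_split (p : ℕ → ℕ) (f : (Finset.Icc 3 (k+1) : Finset ℕ) → ℕ) :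
    ∏ i : (Finset.Icc 3 (k+1) : Finset ℕ), p i.1 ^ f i
      = p (k+1) ^ f (FSK k hk) * ∏ m ∈ Finset.Icc 3 k, p m ^ FSbar (k+1) f m := by
  rw [FS_prod_eq, ← Finset.insert_Icc_right_eq_Icc_add_one (by omega : 3 ≤ k+1),
    Finset.prod_insert (by simp), FSbar_K k hk]

lemma FSbar_restrict (f : (Finset.Icc 3 (k+1) : Finset ℕ) → ℕ) (m : ℕ)
    (hm : m ∈ Finset.Icc 3 k) :
    FSbar k (FSrestrict k f) m = FSbar (k+1) f m := by
  have hm' : m ∈ Finset.Icc 3 (k+1) := by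
    simp only [Finset.mem_Icc] at *; omega
  rw [FSbar, FSbar, dif_pos hm, dif_pos hm']
  rfl

lemma FSbar_update (f : (Finset.Icc 3 (k+1) : Finset ℕ) → ℕ) (v : ℕ) (m : ℕ)
    (hm : m ∈ Finset.Icc 3 k) :
    FSbar (k+1) (Function.update f (FSK k hk) v) m = FSbar (k+1) f m := by
  have hm' : m ∈ Finset.Icc 3 (k+1) := by
    simp only [Finset.mem_Icc] at *; omega
  rw [FSbar, FSbar, dif_pos hm', dif_pos hm']
  apply Function.update_of_ne
  intro hc
  have h5 := congrArg Subtype.val hc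
  simp only [FSK] at h5
  simp only [Finset.mem_Icc] at hm
  omega

section Main
variable (p : ℕ → ℕ) (u : ℕ → ℕ)
  (humono : ∀ j, 1 ≤ j → u j ≤ u (j + 1))
  (huform : ∀ j : {j : ℕ // 1 ≤ j},
    u j.1 = ∏ i : (Finset.Icc 3 (k+1) : Finset ℕ), p i.1 ^ e j i)

include humono huform in
lemma FS_uP : IsSmoothEnum p k (fun j => u (Nat.nth (FSPp k hk e) (j-1))) := by
  constructor
  · intro j hj
    have h1 : Nat.nth (FSPp k hk e) (j-1) ≤ Nat.nth (FSPp k hk e) (j+1-1) :=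
      (Nat.nth_strictMono (FSPp_infinite k hk e)).monotone (by omega)
    exact FS_mono humono _ _ (Nat.nth_mem_of_infinite (FSPp_infinite k hk e) (j-1)).1 h1
  · refine ⟨FSeP k hk e, ?_⟩
    intro j
    dsimp only
    set m := Nat.nth (FSPp k hk e) (j.1 - 1) with hm
    have hPm : FSPp k hk e m := Nat.nth_mem_of_infinite (FSPp_infinite k hk e) _
    have h1 : u m = ∏ i : (Finset.Icc 3 (k+1) : Finset ℕ), p i.1 ^ FSE k e m i := by
      rw [FSE_eq k e hPm.1]
      exact huform ⟨m, hPm.1⟩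
    have h2 : (FSeP k hk e) j = FSrestrict k (FSE k e m) := rfl
    rw [h2, h1, FS_prod_split k hk, hPm.2, pow_zero, one_mul, FS_prod_eq]
    exact Finset.prod_congr rfl (fun i hi => by rw [FSbar_restrict k _ _ hi])

include humono huform in
lemma FS_bQ (hp1 : 1 ≤ p (k+1)) :
    ∀ j, 1 ≤ j → u (Nat.nth (FSQp k hk e) (j-1)) = p (k+1) * u j := by
  classical
  set w : ℕ → ℕ := fun j => if h : 1 ≤ j then
    ∏ i : (Finset.Icc 3 (k+1) : Finset ℕ), p i.1 ^ (FSeQ k hk e ⟨j, h⟩) i else 0 with hw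
  have hw1 : ∀ j, 1 ≤ j → u (Nat.nth (FSQp k hk e) (j-1)) = p (k+1) * w j := by
    intro j hj
    set m := Nat.nth (FSQp k hk e) (j - 1) with hm
    have hQm : FSQp k hk e m := Nat.nth_mem_of_infinite (FSQp_infinite k hk e) _
    have h1 : u m = ∏ i : (Finset.Icc 3 (k+1) : Finset ℕ), p i.1 ^ FSE k e m i := by
      rw [FSE_eq k e hQm.1]
      exact huform ⟨m, hQm.1⟩
    have h2 : w j = ∏ i : (Finset.Icc 3 (k+1) : Finset ℕ), p i.1 ^
        (Function.update (FSE k e m) (FSK k hk) (FSE k e m (FSK k hk) - 1)) i := by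
      simp only [hw]
      rw [dif_pos hj]
      simp only [FSeQ, Equiv.coe_fn_mk]
      rfl
    obtain ⟨b, hb⟩ : ∃ b, FSE k e m (FSK k hk) = b + 1 :=
      ⟨FSE k e m (FSK k hk) - 1, by have := hQm.2; omega⟩
    have h3 : ∏ mm ∈ Finset.Icc 3 k, p mm ^ FSbar (k+1)
        (Function.update (FSE k e m) (FSK k hk) (FSE k e m (FSK k hk) - 1)) mm
        = ∏ mm ∈ Finset.Icc 3 k, p mm ^ FSbar (k+1) (FSE k e m) mm :=
      Finset.prod_congr rfl (fun i hi => by rw [FSbar_update k hk _ _ _ hi])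
    rw [h1, h2, FS_prod_split k hk, FS_prod_split k hk, Function.update_self, h3, hb,
      Nat.add_sub_cancel, pow_succ]
    ring
  have hwmono : ∀ j, 1 ≤ j → w j ≤ w (j + 1) := by
    intro j hj
    have h1 : Nat.nth (FSQp k hk e) (j-1) ≤ Nat.nth (FSQp k hk e) (j+1-1) :=
      (Nat.nth_strictMono (FSQp_infinite k hk e)).monotone (by omega)
    have h2 := FS_mono humono _ _ (Nat.nth_mem_of_infinite (FSQp_infinite k hk e) (j-1)).1 h1
    rw [hw1 j hj, hw1 (j+1) (by omega)] at h2
    exact Nat.le_of_mul_le_mul_left h2 (by omega)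
  have hwform : ∀ j : {j : ℕ // 1 ≤ j},
      w j.1 = ∏ i : (Finset.Icc 3 (k+1) : Finset ℕ), p i.1 ^ (FSeQ k hk e j) i := by
    intro j
    simp only [hw]
    rw [dif_pos j.2]
  have hweq : ∀ j, 1 ≤ j → u j = w j := by
    apply FS_enum_unique humono hwmono (e.trans (FSeQ k hk e).symm)
    intro j
    have h1 := hwform ((e.trans (FSeQ k hk e).symm) j)
    rw [h1]
    have h2 : FSeQ k hk e ((e.trans (FSeQ k hk e).symm) j) = e j := by
      simp only [Equiv.trans_apply]
      exact (FSeQ k hk e).apply_symm_apply _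
    rw [h2]
    exact huform j
  intro j hj
  rw [hw1 j hj, hweq j hj]

end Main

end

section
variable (p : ℕ → ℕ) (G1 : ℕ → ℕ → ℕ)
  (hG10 : ∀ k, G1 k 0 = 0)
  (hG13 : ∀ n, 1 ≤ n → G1 3 n = p 3 * G1 3 (n - 1) + 1)
  (hG1k : ∀ k, 4 ≤ k → ∀ n, 1 ≤ n →
      G1 k n = sInf {v | ∃ t, 1 ≤ t ∧ t ≤ n ∧ v = p k * G1 k (n - t) + G1 (k - 1) t})

include hG10 hG13 in
lemma FS_G13 : ∀ n, G1 3 n = ∑ i ∈ Finset.range n, p 3 ^ i := by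
  intro n
  induction n with
  | zero => simpa using hG10 3
  | succ n ih =>
    rw [hG13 (n+1) (by omega)]
    simp only [Nat.add_sub_cancel, ih, Finset.mul_sum]
    rw [Finset.sum_range_succ' (fun i => p 3 ^ i) n]
    simp [pow_succ, Nat.mul_comm]

include hG10 hG13 hG1k in
lemma FS_caseA : ∀ k, 3 ≤ k → (∀ i, 3 ≤ i → i ≤ k → p i = 1) → ∀ n, G1 k n = n := by
  intro k hk
  induction k, hk using Nat.le_induction with
  | base =>
    intro hall n
    rw [FS_G13 p G1 hG10 hG13 n]
    simp [hall 3 le_rfl le_rfl]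
  | succ k hk ih =>
    intro hall
    have ih' : ∀ n, G1 k n = n := ih (fun i h3 hik => hall i h3 (by omega))
    intro n
    induction n using Nat.strong_induction_on with
    | _ n ihn =>
      rcases n with _ | n
      · exact hG10 _
      · rw [hG1k (k+1) (by omega) (n+1) (by omega)]
        have hset : {v | ∃ t, 1 ≤ t ∧ t ≤ n+1 ∧ v = p (k+1) * G1 (k+1) (n+1-t) + G1 ((k+1)-1) t}
            = {n+1} := by
          ext v
          simp only [Set.mem_setOf_eq, Set.mem_singleton_iff, Nat.add_sub_cancel]
          constructor
          · rintro ⟨t, ht1, ht2, rfl⟩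
            rw [hall (k+1) (by omega) le_rfl, ihn (n+1-t) (by omega), ih' t]
            omega
          · rintro rfl
            refine ⟨1, le_rfl, by omega, ?_⟩
            rw [hall (k+1) (by omega) le_rfl, ih' 1]
            have : G1 (k+1) (n+1-1) = n := by
              rw [show n+1-1 = n from rfl, ihn n (by omega)]
            rw [this]; omega
        rw [hset, csInf_singleton]
end


lemma FS_reindex (g : ℕ → ℕ) (q : ℕ → Prop) (t : ℕ) :
    ∑ j ∈ Finset.Icc 1 t, g (Nat.nth q (j-1)) = ∑ i ∈ Finset.range t, g (Nat.nth q i) := by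
  rw [← Finset.Ico_add_one_right_eq_Icc, Finset.sum_Ico_eq_sum_range]
  apply Finset.sum_congr
  · congr 1
  · intro i _
    have h : 1 + i - 1 = i := by omega
    rw [h]

lemma FS_sum_filter (q : ℕ → Prop) [DecidablePred q] (hq : (setOf q).Infinite)
    (hq1 : ∀ m, q m → 1 ≤ m) (u : ℕ → ℕ) (n : ℕ) :
    ∑ m ∈ (Finset.Icc 1 n).filter q, u m
      = ∑ i ∈ Finset.range (Nat.count q (n+1)), u (Nat.nth q i) := by
  have h1 : (Finset.Icc 1 n).filter q = (Finset.range (n+1)).filter q := by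
    ext x
    simp only [Finset.mem_filter, Finset.mem_Icc, Finset.mem_range]
    constructor
    · rintro ⟨⟨hx1, hx2⟩, hx3⟩; exact ⟨by omega, hx3⟩
    · rintro ⟨hx1, hx3⟩; exact ⟨⟨hq1 x hx3, by omega⟩, hx3⟩
  rw [h1, FS_filter_range hq, Finset.sum_image (fun a _ b _ h => Nat.nth_injective hq h)]

lemma FS_k3 (p u : ℕ → ℕ) (hp3 : 1 ≤ p 3)
    (humono : ∀ j, 1 ≤ j → u j ≤ u (j+1))
    (e3 : {j : ℕ // 1 ≤ j} ≃ ((Finset.Icc 3 3 : Finset ℕ) → ℕ))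
    (huform : ∀ j : {j : ℕ // 1 ≤ j},
      u j.1 = ∏ i : (Finset.Icc 3 3 : Finset ℕ), p i.1 ^ e3 j i) :
    ∀ j, 1 ≤ j → u j = p 3 ^ (j-1) := by
  have h3 : (3:ℕ) ∈ Finset.Icc 3 3 := by simp
  have hprod : ∀ f : ((Finset.Icc 3 3 : Finset ℕ) → ℕ),
      ∏ i : (Finset.Icc 3 3 : Finset ℕ), p i.1 ^ f i = p 3 ^ f ⟨3, h3⟩ := by
    intro f
    rw [FS_prod_eq 3 p f,
      Finset.prod_eq_single_of_mem 3 h3 (fun b hb hne => by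
        simp only [Finset.mem_Icc] at hb; omega)]
    congr 1
  set ev : {j : ℕ // 1 ≤ j} ≃ ((Finset.Icc 3 3 : Finset ℕ) → ℕ) :=
    { toFun := fun j _ => j.1 - 1
      invFun := fun g => ⟨g ⟨3, h3⟩ + 1, by omega⟩
      left_inv := by
        intro j
        apply Subtype.ext
        show (j.1 - 1) + 1 = j.1
        have := j.2; omega
      right_inv := by
        intro g; funext i
        have hi : i = ⟨3, h3⟩ := Subtype.ext (show i.1 = 3 by
          have := i.2; simp only [Finset.mem_Icc] at this; omega)
        rw [hi]
        show (g ⟨3, h3⟩ + 1) - 1 = g ⟨3, h3⟩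
        omega } with hev
  have hvmono : ∀ j, 1 ≤ j → p 3 ^ (j-1) ≤ p 3 ^ (j+1-1) :=
    fun j hj => Nat.pow_le_pow_right hp3 (by omega)
  refine FS_enum_unique humono hvmono (e3.trans ev.symm) (fun j => ?_)
  rw [huform j, hprod]
  have h1 : ((e3.trans ev.symm) j).1 = e3 j ⟨3, h3⟩ + 1 := rfl
  rw [h1]
  congr 1

lemma FS_caseA_enum (k : ℕ) (hk : 3 ≤ k)
    (e : {j : ℕ // 1 ≤ j} ≃ ((Finset.Icc 3 (k+1) : Finset ℕ) → ℕ))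
    (p u : ℕ → ℕ)
    (humono : ∀ j, 1 ≤ j → u j ≤ u (j + 1))
    (huform : ∀ j : {j : ℕ // 1 ≤ j},
      u j.1 = ∏ i : (Finset.Icc 3 (k+1) : Finset ℕ), p i.1 ^ e j i)
    (hpk : p (k+1) = 1) :
    (∀ i, 3 ≤ i → i ≤ k+1 → p i = 1) ∧ (∀ j, 1 ≤ j → u j = 1) := by
  have hval : ∀ g : ((Finset.Icc 3 (k+1) : Finset ℕ) → ℕ),
      u (e.symm g).1 = ∏ i : (Finset.Icc 3 (k+1) : Finset ℕ), p i.1 ^ g i := by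
    intro g
    have h := huform (e.symm g)
    simp only [Equiv.apply_symm_apply] at h
    exact h
  set g1 := e ⟨1, le_rfl⟩ with hg1
  have hgm : ∀ m : ℕ, ∏ i : (Finset.Icc 3 (k+1) : Finset ℕ),
      p i.1 ^ (Function.update g1 (FSK k hk) m) i = u 1 := by
    intro m
    rw [huform ⟨1, le_rfl⟩]
    apply Finset.prod_congr rfl
    intro i _
    by_cases hiK : i = FSK k hk
    · subst hiK
      have hp1 : p (FSK k hk).1 = 1 := hpk
      rw [hp1, one_pow, one_pow]
    · rw [Function.update_of_ne hiK]
  have hinj : Function.Injective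
      (fun m => (e.symm (Function.update g1 (FSK k hk) m)).1) := by
    intro a b hab
    have h2 := e.symm.injective (Subtype.ext hab)
    have h3 := congrFun h2 (FSK k hk)
    simpa [Function.update_self] using h3
  have hval2 : ∀ m, u ((e.symm (Function.update g1 (FSK k hk) m)).1) = u 1 :=
    fun m => by rw [hval, hgm]
  have hub : ∀ j, 1 ≤ j → u j ≤ u 1 := by
    intro j hj
    obtain ⟨m, hm⟩ : ∃ m, j ≤ (e.symm (Function.update g1 (FSK k hk) m)).1 := by
      by_contra hc
      push_neg at hc
      obtain ⟨a, ha, b, hb, hne, heq⟩ := Finset.exists_ne_map_eq_of_card_lt_of_maps_to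
        (t := Finset.range j) (by simp)
        (fun m (_ : m ∈ Finset.range (j+1)) => Finset.mem_range.mpr (hc m))
      exact hne (hinj heq)
    calc u j ≤ u _ := FS_mono humono _ _ hj hm
      _ = u 1 := hval2 m
  have huc : ∀ j, 1 ≤ j → u j = u 1 :=
    fun j hj => le_antisymm (hub j hj) (FS_mono humono 1 j le_rfl hj)
  have hu1 : u 1 = 1 := by
    have h0 := hval (fun _ => 0)
    simp only [pow_zero, Finset.prod_const_one] at h0
    rw [huc _ (e.symm _).2] at h0
    exact h0
  refine ⟨?_, fun j hj => by rw [huc j hj, hu1]⟩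
  intro i h3i hik
  have hmem : i ∈ Finset.Icc 3 (k+1) := by simp only [Finset.mem_Icc]; omega
  have h0 := hval (Function.update (fun _ => 0) ⟨i, hmem⟩ 1)
  have hpr : ∏ ii : (Finset.Icc 3 (k+1) : Finset ℕ),
      p ii.1 ^ (Function.update (fun _ => 0) ⟨i, hmem⟩ 1) ii = p i := by
    rw [Fintype.prod_eq_single (⟨i, hmem⟩ : (Finset.Icc 3 (k+1) : Finset ℕ))
      (fun x hx => by rw [Function.update_of_ne hx, pow_zero])]
    rw [Function.update_self, pow_one]
  rw [hpr, huc _ (e.symm _).2, hu1] at h0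
  exact h0.symm


/-- Theorem 1 with unit q-weights: G^1_k(n) = Σ_{j=1}^{n} u^k_j. -/
theorem generalized_frame_stewart_unit_q_sum
    (p : ℕ → ℕ) (hp : ∀ i, 1 ≤ p i)
    (G1 : ℕ → ℕ → ℕ)
    (hG10 : ∀ k, G1 k 0 = 0)
    (hG13 : ∀ n, 1 ≤ n → G1 3 n = p 3 * G1 3 (n - 1) + 1)
    (hG1k : ∀ k, 4 ≤ k → ∀ n, 1 ≤ n →
      G1 k n = sInf {v | ∃ t, 1 ≤ t ∧ t ≤ n ∧ v = p k * G1 k (n - t) + G1 (k - 1) t})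
    (k : ℕ) (hk : 3 ≤ k)
    (u : ℕ → ℕ) (hu : IsSmoothEnum p k u)
    (n : ℕ) (hn : 1 ≤ n) :
    G1 k n = ∑ j ∈ Finset.Icc 1 n, u j := by
  classical
  revert u n
  induction k, hk using Nat.le_induction with
  | base =>
    intro u hu n hn
    obtain ⟨humono, e3, huform⟩ := hu
    have hueq : ∀ j, 1 ≤ j → u j = p 3 ^ (j-1) :=
      FS_k3 p u (hp 3) humono e3 huform
    rw [FS_G13 p G1 hG10 hG13 n,
      Finset.sum_congr rfl (fun j hj => hueq j (Finset.mem_Icc.mp hj).1)]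
    rw [← Finset.Ico_add_one_right_eq_Icc, Finset.sum_Ico_eq_sum_range]
    apply Finset.sum_congr
    · congr 1
    · intro i _
      congr 1
      omega
  | succ k hk IH =>
    intro u hu n hn
    obtain ⟨humono, e, huform⟩ := hu
    by_cases hpk : p (k+1) = 1
    · -- all parameters are 1
      obtain ⟨hall, hone⟩ := FS_caseA_enum k hk e p u humono huform hpk
      rw [FS_caseA p G1 hG10 hG13 hG1k (k+1) (by omega) hall n,
        Finset.sum_congr rfl (fun j hj => hone j (Finset.mem_Icc.mp hj).1)]
      simp [Nat.card_Icc]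
    · have hp2 : 2 ≤ p (k+1) := by have := hp (k+1); omega
      have hPinf := FSPp_infinite k hk e
      have hQinf := FSQp_infinite k hk e
      have huP : IsSmoothEnum p k (fun j => u (Nat.nth (FSPp k hk e) (j-1))) :=
        FS_uP k hk e p u humono huform
      have hbQ : ∀ j, 1 ≤ j → u (Nat.nth (FSQp k hk e) (j-1)) = p (k+1) * u j :=
        FS_bQ k hk e p u humono huform (by omega)
      have hP1 : FSPp k hk e 1 := by
        refine ⟨le_rfl, ?_⟩
        by_contra hQ1
        have h1 : u 1 = ∏ i : (Finset.Icc 3 (k+1) : Finset ℕ),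
            p i.1 ^ e ⟨1, le_rfl⟩ i := huform ⟨1, le_rfl⟩
        have h2 : p (k+1) ^ (e ⟨1, le_rfl⟩ (FSK k hk)) ≤ u 1 := by
          rw [h1]
          exact Finset.single_le_prod'
            (fun i _ => Nat.one_le_pow (e ⟨1, le_rfl⟩ i) (p i.1) (by have := hp i.1; omega))
            (Finset.mem_univ (FSK k hk))
        have h3 : e ⟨1, le_rfl⟩ (FSK k hk) ≠ 0 := by
          rwa [FSE_eq k e (le_refl 1)] at hQ1
        have h4 : 2 ≤ p (k+1) ^ (e ⟨1, le_rfl⟩ (FSK k hk)) :=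
          le_trans hp2 (Nat.le_self_pow h3 _)
        have h5 : u (e.symm (fun _ => 0)).1 = 1 := by
          have h := huform (e.symm (fun _ => 0))
          simp only [Equiv.apply_symm_apply, pow_zero, Finset.prod_const_one] at h
          exact h
        have h6 : u 1 ≤ u (e.symm (fun _ => 0)).1 :=
          FS_mono humono _ _ le_rfl (e.symm _).2
        omega
      have hcnt : ∀ M : ℕ,
          Nat.count (FSPp k hk e) (M+1) + Nat.count (FSQp k hk e) (M+1) = M := by
        intro M
        induction M with
        | zero =>
          rw [Nat.count_one, Nat.count_one, if_neg (by intro h; exact absurd h.1 (by omega)),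
            if_neg (by intro h; exact absurd h.1 (by omega))]
        | succ M ihM =>
          have e1 := Nat.count_succ (p := FSPp k hk e) (M+1)
          have e2 := Nat.count_succ (p := FSQp k hk e) (M+1)
          by_cases hc : FSE k e (M+1) (FSK k hk) = 0
          · rw [if_pos (show FSPp k hk e (M+1) from ⟨by omega, hc⟩)] at e1
            rw [if_neg (show ¬ FSQp k hk e (M+1) from fun h => h.2 hc)] at e2
            omega
          · rw [if_neg (show ¬ FSPp k hk e (M+1) from fun h => hc h.2)] at e1
            rw [if_pos (show FSQp k hk e (M+1) from ⟨by omega, hc⟩)] at e2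
            omega
      -- strong induction on n
      revert hn
      induction n using Nat.strong_induction_on with
      | _ n ihn =>
      intro hn
      rw [hG1k (k+1) (by omega) n hn]
      simp only [Nat.add_sub_cancel]
      have hGt : ∀ t, 1 ≤ t → t ≤ n → p (k+1) * G1 (k+1) (n-t) + G1 k t
          = ∑ j ∈ Finset.Icc 1 (n-t), (p (k+1) * u j)
            + ∑ j ∈ Finset.Icc 1 t, u (Nat.nth (FSPp k hk e) (j-1)) := by
        intro t ht1 htn
        have hA : G1 (k+1) (n-t) = ∑ j ∈ Finset.Icc 1 (n-t), u j := by
          rcases Nat.lt_or_ge t n with h | h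
          · exact ihn (n-t) (by omega) (by omega)
          · have ht : t = n := by omega
            rw [ht, Nat.sub_self, hG10]
            simp
        have hB : G1 k t = ∑ j ∈ Finset.Icc 1 t, u (Nat.nth (FSPp k hk e) (j-1)) :=
          IH _ huP t ht1
        rw [hA, hB, Finset.mul_sum]
      set t0 := Nat.count (FSPp k hk e) (n+1) with ht0
      have ht01 : 1 ≤ t0 := by
        have h1 : Nat.count (FSPp k hk e) 2 ≤ t0 :=
          Nat.count_monotone _ (by omega)
        have h2 : 1 ≤ Nat.count (FSPp k hk e) 2 := by
          rw [Nat.count_succ, if_pos hP1]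
          omega
        omega
      have ht0n : t0 ≤ n := by have := hcnt n; omega
      have hle : ∀ t, 1 ≤ t → t ≤ n →
          ∑ j ∈ Finset.Icc 1 n, u j ≤ ∑ j ∈ Finset.Icc 1 (n-t), (p (k+1) * u j)
            + ∑ j ∈ Finset.Icc 1 t, u (Nat.nth (FSPp k hk e) (j-1)) := by
        intro t ht1 htn
        have hb' : ∀ j ∈ Finset.Icc 1 (n-t),
            p (k+1) * u j = u (Nat.nth (FSQp k hk e) (j-1)) :=
          fun j hj => (hbQ j (Finset.mem_Icc.mp hj).1).symm
        rw [Finset.sum_congr rfl hb', FS_reindex, FS_reindex]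
        have hdisj : Disjoint ((Finset.range (n-t)).image (Nat.nth (FSQp k hk e)))
            ((Finset.range t).image (Nat.nth (FSPp k hk e))) := by
          rw [Finset.disjoint_left]
          intro a haQ haP
          obtain ⟨i, _, rfl⟩ := Finset.mem_image.mp haQ
          obtain ⟨i', _, hi'⟩ := Finset.mem_image.mp haP
          have hQ : FSQp k hk e (Nat.nth (FSQp k hk e) i) :=
            Nat.nth_mem_of_infinite hQinf i
          have hP : FSPp k hk e (Nat.nth (FSPp k hk e) i') :=
            Nat.nth_mem_of_infinite hPinf i'
          rw [hi'] at hP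
          exact hQ.2 hP.2
        have hcard : (((Finset.range (n-t)).image (Nat.nth (FSQp k hk e)))
            ∪ ((Finset.range t).image (Nat.nth (FSPp k hk e)))).card = n := by
          rw [Finset.card_union_of_disjoint hdisj,
            Finset.card_image_of_injective _ (Nat.nth_injective hQinf),
            Finset.card_image_of_injective _ (Nat.nth_injective hPinf),
            Finset.card_range, Finset.card_range]
          omega
        have hs1 : ∀ m ∈ ((Finset.range (n-t)).image (Nat.nth (FSQp k hk e)))
            ∪ ((Finset.range t).image (Nat.nth (FSPp k hk e))), 1 ≤ m := by
          intro m hm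
          rcases Finset.mem_union.mp hm with h | h
          · obtain ⟨i, _, rfl⟩ := Finset.mem_image.mp h
            exact (Nat.nth_mem_of_infinite hQinf i).1
          · obtain ⟨i, _, rfl⟩ := Finset.mem_image.mp h
            exact (Nat.nth_mem_of_infinite hPinf i).1
        have hsum := FS_sum_smallest humono n _ hs1 hcard
        rw [Finset.sum_union hdisj,
          Finset.sum_image (fun a _ b _ h => Nat.nth_injective hQinf h),
          Finset.sum_image (fun a _ b _ h => Nat.nth_injective hPinf h)] at hsum
        exact hsum
      have heq : ∑ j ∈ Finset.Icc 1 n, u j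
          = ∑ j ∈ Finset.Icc 1 (n-t0), (p (k+1) * u j)
            + ∑ j ∈ Finset.Icc 1 t0, u (Nat.nth (FSPp k hk e) (j-1)) := by
        have hb' : ∀ j ∈ Finset.Icc 1 (n-t0),
            p (k+1) * u j = u (Nat.nth (FSQp k hk e) (j-1)) :=
          fun j hj => (hbQ j (Finset.mem_Icc.mp hj).1).symm
        rw [Finset.sum_congr rfl hb', FS_reindex, FS_reindex]
        have hpart := (Finset.sum_filter_add_sum_filter_not (Finset.Icc 1 n)
          (FSPp k hk e) u).symm
        have hQfilt : (Finset.Icc 1 n).filter (fun m => ¬ FSPp k hk e m)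
            = (Finset.Icc 1 n).filter (FSQp k hk e) := by
          apply Finset.filter_congr
          intro m hm
          have h1 : 1 ≤ m := (Finset.mem_Icc.mp hm).1
          simp only [FSPp, FSQp, eq_iff_iff]
          constructor
          · intro h
            exact ⟨h1, fun hc => h ⟨h1, hc⟩⟩
          · intro h hc
            exact h.2 hc.2
        have hcn : Nat.count (FSQp k hk e) (n+1) = n - t0 := by
          have := hcnt n; omega
        rw [hQfilt, FS_sum_filter _ hPinf (fun m hm => hm.1) u n,
          FS_sum_filter _ hQinf (fun m hm => hm.1) u n, hcn, ← ht0] at hpart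
        rw [hpart]
        omega
      apply le_antisymm
      · apply Nat.sInf_le
        refine ⟨t0, ht01, ht0n, ?_⟩
        rw [hGt t0 ht01 ht0n]
        exact heq
      · refine le_csInf ⟨p (k+1) * G1 (k+1) (n - t0) + G1 k t0, ⟨t0, ht01, ht0n, rfl⟩⟩ ?_
        rintro v ⟨t, ht1, htn, rfl⟩
        rw [hGt t ht1 htn]
        exact hle t ht1 htn
end

section
/- Let (p_i)_{i≥3} and (q_i)_{i≥3} be sequences of positive integers and let G_k(n) be the generalized Frame-Stewart numbers. Then G_k(n) = q · Σ_{j=1}^{n} u^k_j, where q = ∏_{i=3}^{k} q_i and u^k_j is the j-th term of the nondecreasing enumeration with multiplicity of all integers ∏_{i=3}^{k} p_i^{α_i} with α_i ≥ 0. -/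
namespace FrameStewartAux

abbrev Tup (k : ℕ) := (Finset.Icc 3 k : Finset ℕ) → ℕ

noncomputable def cntF (p : ℕ → ℕ) (k x : ℕ) : Finset (Tup k) :=
  ((Fintype.piFinset (fun _ : (Finset.Icc 3 k : Finset ℕ) => Finset.range (x+1))).filter
    (fun α : Tup k => ∏ i : (Finset.Icc 3 k : Finset ℕ), p i.1 ^ α i ≤ x))

noncomputable def cnt (p : ℕ → ℕ) (k x : ℕ) : ℕ := (cntF p k x).card

lemma mem_cntF (p : ℕ → ℕ) (k x : ℕ) (h2 : ∀ i ∈ Finset.Icc 3 k, 2 ≤ p i) (α : Tup k) :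
    α ∈ cntF p k x ↔ ∏ i : (Finset.Icc 3 k : Finset ℕ), p i.1 ^ α i ≤ x := by
  simp only [cntF, Finset.mem_filter, Fintype.mem_piFinset, Finset.mem_range,
    and_iff_right_iff_imp]
  intro hprod i
  have h1 : ∀ j : (Finset.Icc 3 k : Finset ℕ), 1 ≤ p j.1 ^ α j := fun j =>
    Nat.one_le_pow _ _ (lt_of_lt_of_le (by norm_num) (h2 j.1 j.2))
  have hle : p i.1 ^ α i ≤ x :=
    le_trans (Finset.single_le_prod' (fun j _ => h1 j) (Finset.mem_univ i)) hprod
  have h2i : 2 ≤ p i.1 := h2 i.1 i.2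
  have h2a : 2 ^ (α i) ≤ x := le_trans (Nat.pow_le_pow_left h2i _) hle
  have : α i < 2 ^ α i := Nat.lt_two_pow_self
  omega

lemma cnt_mono (p : ℕ → ℕ) (k : ℕ) (h2 : ∀ i ∈ Finset.Icc 3 k, 2 ≤ p i) :
    Monotone (cnt p k) := by
  intro x y hxy
  apply Finset.card_le_card
  intro α hα
  rw [mem_cntF p k _ h2] at *
  omega

lemma cnt_lb (p : ℕ → ℕ) (k : ℕ) (hk : 3 ≤ k) (h2 : ∀ i ∈ Finset.Icc 3 k, 2 ≤ p i)
    (j : ℕ) : j ≤ cnt p k (p 3 ^ (j-1)) := by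
  have h3 : (3 : ℕ) ∈ Finset.Icc 3 k := Finset.mem_Icc.2 ⟨le_refl _, hk⟩
  have hp3 : 1 ≤ p 3 := le_trans (by norm_num) (h2 3 h3)
  have key : ∀ m : ℕ, (∏ i : (Finset.Icc 3 k : Finset ℕ),
      p i.1 ^ (if i.1 = 3 then m else 0)) = p 3 ^ m := by
    intro m
    rw [Finset.prod_eq_single (⟨3, h3⟩ : (Finset.Icc 3 k : Finset ℕ))]
    · simp
    · intro b _ hb
      have : b.1 ≠ 3 := fun h => hb (Subtype.ext h)
      simp [this]
    · simp
  have hcard : (Finset.range j).card ≤ (cntF p k (p 3 ^ (j-1))).card := by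
    apply Finset.card_le_card_of_injOn
      (fun m => (fun i => if i.1 = 3 then m else 0 : Tup k))
    · intro m hm
      rw [Finset.mem_coe, mem_cntF p k _ h2, key]
      exact Nat.pow_le_pow_right hp3 (by simp only [Finset.mem_coe, Finset.mem_range] at hm; omega)
    · intro a _ b _ hab
      have := congrFun hab ⟨3, h3⟩
      simpa using this
  simpa [cnt] using le_trans (by simp) hcard

lemma cnt_unbounded (p : ℕ → ℕ) (k : ℕ) (hk : 3 ≤ k)
    (h2 : ∀ i ∈ Finset.Icc 3 k, 2 ≤ p i) : ∀ j, ∃ x, j ≤ cnt p k x :=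
  fun j => ⟨p 3 ^ (j-1), cnt_lb p k hk h2 j⟩

lemma cnt_zero (p : ℕ → ℕ) (k : ℕ) (h2 : ∀ i ∈ Finset.Icc 3 k, 2 ≤ p i) :
    cnt p k 0 = 0 := by
  rw [cnt, Finset.card_eq_zero]
  ext α
  rw [mem_cntF p k _ h2]
  simp only [Finset.notMem_empty, iff_false, not_le]
  exact Finset.prod_pos (fun j _ =>
    pow_pos (lt_of_lt_of_le (by norm_num) (h2 j.1 j.2)) _)

noncomputable def Uu (p : ℕ → ℕ) (k j : ℕ) : ℕ := sInf {x | j ≤ cnt p k x}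

lemma Uu_galois (p : ℕ → ℕ) (k : ℕ) (hk : 3 ≤ k) (h2 : ∀ i ∈ Finset.Icc 3 k, 2 ≤ p i)
    (j x : ℕ) : Uu p k j ≤ x ↔ j ≤ cnt p k x := by
  have hne : {x | j ≤ cnt p k x}.Nonempty := cnt_unbounded p k hk h2 j
  constructor
  · intro h
    have h1 : j ≤ cnt p k (Uu p k j) := Nat.sInf_mem hne
    exact le_trans h1 (cnt_mono p k h2 h)
  · intro h
    exact Nat.sInf_le h

/-! ### abstract merge machinery -/

section Merge

lemma galois_mono {α A : ℕ → ℕ} (hA : ∀ j x, A j ≤ x ↔ j ≤ α x) : Monotone A := by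
  intro a b hab
  rw [hA]
  exact le_trans hab ((hA b (A b)).1 le_rfl)

lemma sum_repr {α A : ℕ → ℕ} (hA : ∀ j x, A j ≤ x ↔ j ≤ α x) (n X : ℕ)
    (hX : ∀ j, 1 ≤ j → j ≤ n → A j < X) :
    ∑ j ∈ Finset.Icc 1 n, A j = ∑ x ∈ Finset.range X, (n - α x) := by
  have h1 : ∀ j ∈ Finset.Icc 1 n, A j = ((Finset.range X).filter (fun x => α x < j)).card := by
    intro j hj
    rw [Finset.mem_Icc] at hj
    have : (Finset.range X).filter (fun x => α x < j) = Finset.range (A j) := by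
      ext x
      simp only [Finset.mem_filter, Finset.mem_range]
      have hiff := hA j x
      have hAX := hX j hj.1 hj.2
      constructor
      · intro ⟨_, h⟩
        have : ¬ (A j ≤ x) := by rw [hiff]; omega
        omega
      · intro h
        have : ¬ (j ≤ α x) := by rw [← hiff]; omega
        omega
    rw [this, Finset.card_range]
  rw [Finset.sum_congr rfl h1]
  simp only [Finset.card_filter]
  rw [Finset.sum_comm]
  apply Finset.sum_congr rfl
  intro x _
  rw [← Finset.card_filter]
  have : (Finset.Icc 1 n).filter (fun j => α x < j) = Finset.Icc (α x + 1) n := by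
    ext j
    simp only [Finset.mem_filter, Finset.mem_Icc]
    omega
  rw [this, Nat.card_Icc]
  omega

variable {a b A B C : ℕ → ℕ}

lemma merge_lower (hA : ∀ j x, A j ≤ x ↔ j ≤ a x) (hB : ∀ j x, B j ≤ x ↔ j ≤ b x)
    (hC : ∀ j x, C j ≤ x ↔ j ≤ a x + b x) (n t : ℕ) (ht : t ≤ n) :
    ∑ j ∈ Finset.Icc 1 n, C j ≤
      (∑ j ∈ Finset.Icc 1 (n - t), A j) + ∑ j ∈ Finset.Icc 1 t, B j := by
  set X := A n + B n + C n + 1 with hXdef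
  have hAm := galois_mono hA
  have hBm := galois_mono hB
  have hCm := galois_mono hC
  have rA : ∑ j ∈ Finset.Icc 1 (n - t), A j = ∑ x ∈ Finset.range X, ((n-t) - a x) :=
    sum_repr hA _ X (fun j _ hj => lt_of_le_of_lt (hAm (le_trans hj (Nat.sub_le n t))) (by omega))
  have rB : ∑ j ∈ Finset.Icc 1 t, B j = ∑ x ∈ Finset.range X, (t - b x) :=
    sum_repr hB _ X (fun j _ hj => lt_of_le_of_lt (hBm (le_trans hj ht)) (by omega))
  have rC : ∑ j ∈ Finset.Icc 1 n, C j = ∑ x ∈ Finset.range X, (n - (a x + b x)) :=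
    sum_repr hC _ X (fun j _ hj => lt_of_le_of_lt (hCm hj) (by omega))
  rw [rA, rB, rC, ← Finset.sum_add_distrib]
  apply Finset.sum_le_sum
  intro x _
  omega

lemma merge_exists (hA : ∀ j x, A j ≤ x ↔ j ≤ a x) (hB : ∀ j x, B j ≤ x ↔ j ≤ b x)
    (hC : ∀ j x, C j ≤ x ↔ j ≤ a x + b x) (ha : Monotone a) (hb : Monotone b)
    (hBA : B 1 ≤ A 1) (n : ℕ) (hn : 1 ≤ n) :
    ∃ t, 1 ≤ t ∧ t ≤ n ∧ ∑ j ∈ Finset.Icc 1 n, C j =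
      (∑ j ∈ Finset.Icc 1 (n - t), A j) + ∑ j ∈ Finset.Icc 1 t, B j := by
  have hAm := galois_mono hA
  have hBm := galois_mono hB
  have hCm := galois_mono hC
  have hne : {x | n ≤ a x + b x}.Nonempty := ⟨C n, (hC n (C n)).1 le_rfl⟩
  set x0 := sInf {x | n ≤ a x + b x} with hx0def
  have hx0 : n ≤ a x0 + b x0 := Nat.sInf_mem hne
  have hlt : ∀ x, x < x0 → a x + b x < n := by
    intro x hx
    by_contra h
    have hmem : x ∈ {x | n ≤ a x + b x} := by
      simp only [Set.mem_setOf_eq]; omega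
    have := Nat.sInf_le hmem
    omega
  obtain ⟨t, ht1, ht2, htle⟩ : ∃ t, (n - a x0 ≤ t) ∧ (x0 ≠ 0 → b (x0 - 1) ≤ t) ∧
      (∀ c, n - a x0 ≤ c → (x0 = 0 ∨ b (x0 - 1) ≤ c) → t ≤ c) := by
    refine ⟨max (n - a x0) (if x0 = 0 then 0 else b (x0 - 1)), le_max_left _ _, ?_, ?_⟩
    · intro h; rw [if_neg h]; exact le_max_right _ _
    · intro c h1 h2
      apply max_le h1
      split_ifs with h0
      · exact Nat.zero_le c
      · rcases h2 with h2 | h2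
        · exact absurd h2 h0
        · exact h2
  have htn : t ≤ n := by
    apply htle _ (by omega)
    rcases Nat.eq_zero_or_pos x0 with h0 | h0
    · exact Or.inl h0
    · have := hlt (x0 - 1) (by omega)
      omega
  have hpt : ∀ x, ((n-t) - a x) + (t - b x) = n - (a x + b x) := by
    intro x
    rcases le_or_gt x0 x with hx | hx
    · have h1 : n ≤ a x + b x := le_trans hx0 (by have := ha hx; have := hb hx; omega)
      have haa := ha hx
      have h2 : n - t ≤ a x := by omega
      have h3 : t ≤ b x := by
        have hbb := hb hx
        apply htle _ (by omega)
        rcases Nat.eq_zero_or_pos x0 with h0 | h0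
        · exact Or.inl h0
        · exact Or.inr (hb (by omega))
      omega
    · have hxle : x ≤ x0 - 1 := by omega
      have h1 : a x + b x < n := hlt x hx
      have h2 : b x ≤ t := le_trans (hb hxle) (ht2 (by omega))
      have h3 : a x ≤ n - t := by
        have haa : a x ≤ a (x0 - 1) := ha hxle
        have hg : a (x0 - 1) + b (x0 - 1) < n := hlt (x0 - 1) (by omega)
        have haa0 : a x ≤ a x0 := ha (by omega)
        have : t ≤ n - a x := htle _ (by omega) (Or.inr (by omega))
        omega
      omega
  set X := A n + B n + C n + 1 with hXdef
  have rA : ∑ j ∈ Finset.Icc 1 (n - t), A j = ∑ x ∈ Finset.range X, ((n-t) - a x) :=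
    sum_repr hA _ X (fun j _ hj => lt_of_le_of_lt (hAm (le_trans hj (Nat.sub_le n t))) (by omega))
  have rB : ∑ j ∈ Finset.Icc 1 t, B j = ∑ x ∈ Finset.range X, (t - b x) :=
    sum_repr hB _ X (fun j _ hj => lt_of_le_of_lt (hBm (le_trans hj htn)) (by omega))
  have rC : ∑ j ∈ Finset.Icc 1 n, C j = ∑ x ∈ Finset.range X, (n - (a x + b x)) :=
    sum_repr hC _ X (fun j _ hj => lt_of_le_of_lt (hCm hj) (by omega))
  have hsum : ∑ j ∈ Finset.Icc 1 n, C j =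
      (∑ j ∈ Finset.Icc 1 (n - t), A j) + ∑ j ∈ Finset.Icc 1 t, B j := by
    rw [rA, rB, rC, ← Finset.sum_add_distrib]
    exact (Finset.sum_congr rfl (fun x _ => (hpt x).symm))
  rcases Nat.eq_zero_or_pos t with ht0 | ht1
  · refine ⟨1, le_rfl, hn, le_antisymm (merge_lower hA hB hC n 1 hn) ?_⟩
    have e1 : ∑ j ∈ Finset.Icc 1 n, C j = ∑ j ∈ Finset.Icc 1 n, A j := by
      rw [hsum, ht0]
      simp
    have e2 : ∑ j ∈ Finset.Icc 1 n, A j =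
        (∑ j ∈ Finset.Icc 1 (n-1), A j) + A n := by
      have : Finset.Icc 1 n = insert n (Finset.Icc 1 (n-1)) := by
        ext j; simp only [Finset.mem_Icc, Finset.mem_insert]; omega
      rw [this, Finset.sum_insert (by simp only [Finset.mem_Icc]; omega)]
      exact Nat.add_comm _ _
    have e3 : ∑ j ∈ Finset.Icc 1 (1:ℕ), B j = B 1 := by simp
    have : B 1 ≤ A n := le_trans hBA (hAm hn)
    omega
  · exact ⟨t, ht1, htn, hsum⟩

end Merge

/-! ### count recursion -/

section Rec

variable (p : ℕ → ℕ) (k : ℕ)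

lemma hsub (hk : 3 ≤ k) : Finset.Icc 3 k ⊆ Finset.Icc 3 (k+1) := by
  intro m hm; simp only [Finset.mem_Icc] at *; omega

def Kel (hk : 3 ≤ k) : (Finset.Icc 3 (k+1) : Finset ℕ) :=
  ⟨k+1, by simp only [Finset.mem_Icc]; omega⟩

def rho (hk : 3 ≤ k) (α : Tup (k+1)) : Tup k :=
  fun i => α ⟨i.1, hsub k hk i.2⟩

def eps (hk : 3 ≤ k) (β : Tup k) : Tup (k+1) :=
  fun i => if h : i.1 ∈ Finset.Icc 3 k then β ⟨i.1, h⟩ else 0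

def dec (hk : 3 ≤ k) (α : Tup (k+1)) : Tup (k+1) :=
  fun i => if i = Kel k hk then α i - 1 else α i

def inc (hk : 3 ≤ k) (α : Tup (k+1)) : Tup (k+1) :=
  fun i => if i = Kel k hk then α i + 1 else α i

variable (hk : 3 ≤ k)

lemma Kval_ne (i : (Finset.Icc 3 k : Finset ℕ)) :
    (⟨i.1, hsub k hk i.2⟩ : (Finset.Icc 3 (k+1) : Finset ℕ)) ≠ Kel k hk := by
  intro h
  have := congrArg Subtype.val h
  have hi := i.2
  simp only [Finset.mem_Icc] at hi
  simp only [Kel] at this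
  omega

lemma prod_split (α : Tup (k+1)) :
    ∏ i : (Finset.Icc 3 (k+1) : Finset ℕ), p i.1 ^ α i =
      p (k+1) ^ (α (Kel k hk)) *
        ∏ i : (Finset.Icc 3 k : Finset ℕ), p i.1 ^ (rho k hk α i) := by
  classical
  set ext : ℕ → ℕ := fun m => if h : m ∈ Finset.Icc 3 (k+1) then α ⟨m, h⟩ else 0 with hext
  have h1 : ∏ i : (Finset.Icc 3 (k+1) : Finset ℕ), p i.1 ^ α i =
      ∏ m ∈ Finset.Icc 3 (k+1), p m ^ ext m := by
    rw [← Finset.prod_coe_sort (Finset.Icc 3 (k+1)) (fun m => p m ^ ext m)]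
    apply Finset.prod_congr rfl
    intro i _
    congr 1
    rw [hext]
    simp only [i.2, dif_pos]
  have hins : Finset.Icc 3 (k+1) = insert (k+1) (Finset.Icc 3 k) := by
    ext m; simp only [Finset.mem_Icc, Finset.mem_insert]; omega
  have hnot : k + 1 ∉ Finset.Icc 3 k := by simp only [Finset.mem_Icc]; omega
  have h2 : ∏ m ∈ Finset.Icc 3 (k+1), p m ^ ext m =
      p (k+1) ^ ext (k+1) * ∏ m ∈ Finset.Icc 3 k, p m ^ ext m := by
    rw [hins, Finset.prod_insert hnot]
  have h3 : ∏ m ∈ Finset.Icc 3 k, p m ^ ext m =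
      ∏ i : (Finset.Icc 3 k : Finset ℕ), p i.1 ^ (rho k hk α i) := by
    rw [← Finset.prod_coe_sort (Finset.Icc 3 k) (fun m => p m ^ ext m)]
    apply Finset.prod_congr rfl
    intro i _
    congr 1
    rw [hext]
    simp only [hsub k hk i.2, dif_pos]
    rfl
  have h4 : ext (k+1) = α (Kel k hk) := by
    rw [hext]
    simp only [Kel]
    rw [dif_pos (by simp only [Finset.mem_Icc]; omega)]
  rw [h1, h2, h3, h4]

lemma rho_eps (β : Tup k) : rho k hk (eps k hk β) = β := by
  funext i
  simp only [rho, eps, dif_pos i.2]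

lemma eps_K (β : Tup k) : eps k hk β (Kel k hk) = 0 := by
  simp only [eps, Kel]
  exact dif_neg (by simp only [Finset.mem_Icc]; omega)

lemma prod_eps (β : Tup k) :
    ∏ i : (Finset.Icc 3 (k+1) : Finset ℕ), p i.1 ^ eps k hk β i =
      ∏ i : (Finset.Icc 3 k : Finset ℕ), p i.1 ^ β i := by
  rw [prod_split p k hk, eps_K, pow_zero, one_mul, rho_eps]

lemma prod_dec (α : Tup (k+1)) (hα : 1 ≤ α (Kel k hk)) :
    ∏ i : (Finset.Icc 3 (k+1) : Finset ℕ), p i.1 ^ α i =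
      p (k+1) * ∏ i : (Finset.Icc 3 (k+1) : Finset ℕ), p i.1 ^ dec k hk α i := by
  rw [prod_split p k hk α, prod_split p k hk (dec k hk α)]
  have e1 : dec k hk α (Kel k hk) = α (Kel k hk) - 1 := by simp [dec]
  have e2 : rho k hk (dec k hk α) = rho k hk α := by
    funext i
    simp only [rho, dec, if_neg (Kval_ne k hk i)]
  rw [e1, e2, ← mul_assoc]
  congr 1
  rw [← pow_succ']
  congr 1
  omega

lemma cnt_rec (hk : 3 ≤ k) (h2 : ∀ i ∈ Finset.Icc 3 (k+1), 2 ≤ p i) (x : ℕ) :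
    cnt p (k+1) x = cnt p k x + cnt p (k+1) (x / p (k+1)) := by
  classical
  have h2' : ∀ i ∈ Finset.Icc 3 k, 2 ≤ p i := fun i hi => h2 i (hsub k hk hi)
  have hpk : 2 ≤ p (k+1) := h2 _ (Kel k hk).2
  have part1 : ((cntF p (k+1) x).filter (fun α => α (Kel k hk) = 0)).card = cnt p k x := by
    rw [cnt]
    refine Finset.card_nbij' (rho k hk) (eps k hk) ?_ ?_ ?_ ?_
    · intro α hα
      rw [Finset.mem_coe, Finset.mem_filter] at hα
      obtain ⟨hα1, hα2⟩ := hα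
      rw [mem_cntF p (k+1) x h2] at hα1
      rw [Finset.mem_coe, mem_cntF p k x h2']
      rw [prod_split p k hk α, hα2, pow_zero, one_mul] at hα1
      exact hα1
    · intro β hβ
      rw [Finset.mem_coe, mem_cntF p k x h2'] at hβ
      rw [Finset.mem_coe, Finset.mem_filter]
      refine ⟨?_, eps_K k hk β⟩
      rw [mem_cntF p (k+1) x h2, prod_eps p k hk]
      exact hβ
    · intro α hα
      rw [Finset.mem_coe, Finset.mem_filter] at hα
      funext i
      by_cases h : i.1 ∈ Finset.Icc 3 k
      · simp only [eps, dif_pos h, rho]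
      · simp only [eps, dif_neg h]
        have hiK : i = Kel k hk := by
          apply Subtype.ext
          have := i.2
          simp only [Finset.mem_Icc] at this h ⊢
          simp only [Kel]
          omega
        rw [hiK]
        exact hα.2.symm
    · intro β _
      exact rho_eps k hk β
  have part2 : ((cntF p (k+1) x).filter (fun α => ¬ α (Kel k hk) = 0)).card =
      cnt p (k+1) (x / p (k+1)) := by
    clear part1
    rw [cnt]
    refine Finset.card_nbij' (dec k hk) (inc k hk) ?_ ?_ ?_ ?_
    · intro α hα
      rw [Finset.mem_coe, Finset.mem_filter] at hα
      obtain ⟨hα1, hα2⟩ := hα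
      rw [mem_cntF p (k+1) x h2] at hα1
      rw [Finset.mem_coe, mem_cntF p (k+1) _ h2]
      rw [prod_dec p k hk α (by omega)] at hα1
      rw [Nat.le_div_iff_mul_le (by omega : 0 < p (k+1))]
      linarith
    · intro β hβ
      rw [Finset.mem_coe, mem_cntF p (k+1) _ h2] at hβ
      rw [Finset.mem_coe, Finset.mem_filter]
      constructor
      · rw [mem_cntF p (k+1) x h2]
        have h1 : 1 ≤ inc k hk β (Kel k hk) := by simp [inc]
        rw [prod_dec p k hk _ h1]
        have e : dec k hk (inc k hk β) = β := by
          funext i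
          simp only [dec, inc]
          by_cases h : i = Kel k hk
          · rw [if_pos h, if_pos h]
            omega
          · rw [if_neg h, if_neg h]
        rw [e]
        rw [Nat.le_div_iff_mul_le (by omega : 0 < p (k+1))] at hβ
        linarith
      · simp [inc]
    · intro α hα
      rw [Finset.mem_coe, Finset.mem_filter] at hα
      have h2a := hα.2
      funext i
      simp only [inc, dec]
      by_cases h : i = Kel k hk
      · rw [if_pos h, if_pos h, h]
        omega
      · rw [if_neg h, if_neg h]
    · intro β _
      funext i
      simp only [dec, inc]
      by_cases h : i = Kel k hk
      · rw [if_pos h, if_pos h]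
        omega
      · rw [if_neg h, if_neg h]
  have hsplit := Finset.card_filter_add_card_filter_not
    (s := cntF p (k+1) x) (p := fun α => α (Kel k hk) = 0)
  rw [cnt, ← hsplit, part1, part2]

end Rec

/-! ### link between IsSmoothEnum and cnt -/

lemma u_mono {p : ℕ → ℕ} {k : ℕ} {u : ℕ → ℕ} (hu : IsSmoothEnum p k u) :
    ∀ j j', 1 ≤ j → j ≤ j' → u j ≤ u j' := by
  intro j j' hj hjj
  induction j' with
  | zero => omega
  | succ m ih =>
    rcases Nat.eq_or_lt_of_le hjj with h | h
    · rw [h]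
    · exact le_trans (ih (by omega)) (hu.1 m (by omega))

lemma smooth_count {p : ℕ → ℕ} {k : ℕ} {u : ℕ → ℕ} (hu : IsSmoothEnum p k u)
    (h2 : ∀ i ∈ Finset.Icc 3 k, 2 ≤ p i) (j x : ℕ) (hj : 1 ≤ j) :
    u j ≤ x ↔ j ≤ cnt p k x := by
  obtain ⟨hmono, e, he⟩ := hu
  constructor
  · intro h
    have hcard : (Finset.Icc 1 j).card ≤ (cntF p k x).card := by
      apply Finset.card_le_card_of_injOn (fun j' => e ⟨max j' 1, le_max_right _ 1⟩)
      · intro j' hj'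
        rw [Finset.mem_coe, Finset.mem_Icc] at hj'
        rw [Finset.mem_coe, mem_cntF p k x h2]
        rw [← he ⟨max j' 1, le_max_right _ 1⟩]
        have heq : (⟨max j' 1, le_max_right _ 1⟩ : {j : ℕ // 1 ≤ j}) = ⟨j', hj'.1⟩ :=
          Subtype.ext (show max j' 1 = j' by omega)
        rw [heq]
        exact le_trans (u_mono ⟨hmono, e, he⟩ j' j hj'.1 hj'.2) h
      · intro a ha b hb hab
        simp only [Finset.coe_Icc, Set.mem_Icc] at ha hb
        have := e.injective hab
        have := congrArg Subtype.val this
        simp only at this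
        omega
    rw [Nat.card_Icc] at hcard
    simpa [cnt] using le_trans (by omega) hcard
  · intro h
    by_contra hx
    push_neg at hx
    have hcard : (cntF p k x).card ≤ (Finset.Icc 1 (j-1)).card := by
      apply Finset.card_le_card_of_injOn (fun α => (e.symm α).1)
      · intro α hα
        rw [Finset.mem_coe, mem_cntF p k x h2] at hα
        rw [Finset.mem_coe, Finset.mem_Icc]
        refine ⟨(e.symm α).2, ?_⟩
        have hval : u (e.symm α).1 = ∏ i : (Finset.Icc 3 k : Finset ℕ), p i.1 ^ α i := by
          have := he (e.symm α)
          rwa [Equiv.apply_symm_apply] at this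
        have hlt : u (e.symm α).1 < u j := by omega
        by_contra hc
        push_neg at hc
        have : u j ≤ u (e.symm α).1 :=
          u_mono ⟨hmono, e, he⟩ j (e.symm α).1 hj (by omega)
        omega
      · intro a _ b _ hab
        exact e.symm.injective (Subtype.ext hab)
    rw [Nat.card_Icc] at hcard
    rw [cnt] at h
    omega

lemma u_eq_Uu {p : ℕ → ℕ} {k : ℕ} {u : ℕ → ℕ} (hu : IsSmoothEnum p k u) (hk : 3 ≤ k)
    (h2 : ∀ i ∈ Finset.Icc 3 k, 2 ≤ p i) (j : ℕ) (hj : 1 ≤ j) : u j = Uu p k j := by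
  apply le_antisymm
  · rw [smooth_count hu h2 j _ hj]
    exact (Uu_galois p k hk h2 j _).1 le_rfl
  · rw [Uu_galois p k hk h2]
    exact (smooth_count hu h2 j _ hj).1 le_rfl



lemma cnt3' (p : ℕ → ℕ) (hp : 2 ≤ p 3) (j x : ℕ) (hj : 1 ≤ j) :
    j ≤ cnt p 3 x ↔ p 3 ^ (j-1) ≤ x := by
  have h3 : (3:ℕ) ∈ Finset.Icc 3 3 := by simp
  have h2 : ∀ i ∈ Finset.Icc 3 3, 2 ≤ p i := by
    intro i hi
    simp only [Finset.mem_Icc] at hi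
    have : i = 3 := by omega
    rw [this]; exact hp
  have hps : ∀ α : Tup 3, ∏ i : (Finset.Icc 3 3 : Finset ℕ), p i.1 ^ α i
      = p 3 ^ α ⟨3, h3⟩ := by
    intro α
    refine Finset.prod_eq_single (⟨3, h3⟩ : (Finset.Icc 3 3 : Finset ℕ)) ?_ ?_
    · intro b _ hb
      exfalso
      apply hb
      apply Subtype.ext
      have hb2 := b.2
      simp only [Finset.mem_Icc] at hb2
      exact le_antisymm hb2.2 hb2.1
    · intro h
      exact absurd (Finset.mem_univ _) h
  constructor
  · intro h
    by_contra hx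
    push_neg at hx
    have hcard : (cntF p 3 x).card ≤ (Finset.range (j-1)).card := by
      apply Finset.card_le_card_of_injOn (fun α => α ⟨3, h3⟩)
      · intro α hα
        rw [Finset.mem_coe, mem_cntF p 3 x h2, hps α] at hα
        rw [Finset.mem_coe, Finset.mem_range]
        by_contra hc
        push_neg at hc
        have : p 3 ^ (j-1) ≤ p 3 ^ (α ⟨3, h3⟩) :=
          Nat.pow_le_pow_right (by omega) hc
        omega
      · intro α _ β _ hab
        funext i
        have : i = ⟨3, h3⟩ := by
          apply Subtype.ext
          have hi2 := i.2
          simp only [Finset.mem_Icc] at hi2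
          exact le_antisymm hi2.2 hi2.1
        rw [this]
        exact hab
    rw [Finset.card_range] at hcard
    rw [cnt] at h
    omega
  · intro h
    exact le_trans (cnt_lb p 3 le_rfl h2 j) (cnt_mono p 3 h2 h)

lemma dichotomy {p : ℕ → ℕ} {k : ℕ} {u : ℕ → ℕ} (hp : ∀ i, 1 ≤ p i)
    (hu : IsSmoothEnum p k u) :
    (∀ i ∈ Finset.Icc 3 k, p i = 1) ∨ (∀ i ∈ Finset.Icc 3 k, 2 ≤ p i) := by
  by_cases hall : ∀ i ∈ Finset.Icc 3 k, p i = 1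
  · exact Or.inl hall
  push_neg at hall
  obtain ⟨i0, hi0, hne0⟩ := hall
  have hp2 : 2 ≤ p i0 := by have := hp i0; omega
  right
  intro i hi
  by_contra hlt
  have hpi : p i = 1 := by have := hp i; omega
  obtain ⟨hmono, e, he⟩ := hu
  have hδ : u (e.symm (fun i' => if i'.1 = i0 then 1 else 0)).1 = p i0 := by
    have h := he (e.symm (fun i' => if i'.1 = i0 then 1 else 0))
    rw [Equiv.apply_symm_apply] at h
    rw [h]
    rw [Finset.prod_eq_single (⟨i0, hi0⟩ : (Finset.Icc 3 k : Finset ℕ))]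
    · simp
    · intro b _ hb
      have : b.1 ≠ i0 := fun hh => hb (Subtype.ext hh)
      simp [this]
    · simp
  set j0 := (e.symm (fun i' => if i'.1 = i0 then 1 else 0)).1 with hj0
  have hone : ∀ m : ℕ, u (e.symm (fun i' => if i'.1 = i then m else 0)).1 = 1 := by
    intro m
    have h := he (e.symm (fun i' => if i'.1 = i then m else 0))
    rw [Equiv.apply_symm_apply] at h
    rw [h]
    rw [Finset.prod_eq_single (⟨i, hi⟩ : (Finset.Icc 3 k : Finset ℕ))]
    · simp [hpi]
    · intro b _ hb
      have : b.1 ≠ i := fun hh => hb (Subtype.ext hh)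
      simp [this]
    · simp
  set f : ℕ → ℕ := fun m => (e.symm (fun i' => if i'.1 = i then m else 0)).1 with hf
  have hinj : Function.Injective f := by
    intro m m' h
    have h1 : (e.symm (fun i' => if i'.1 = i then m else 0)) =
        (e.symm (fun i' => if i'.1 = i then m' else 0)) := Subtype.ext h
    have h2 := congrFun (e.symm.injective h1) ⟨i, hi⟩
    simpa using h2
  have hex : ∃ m, j0 ≤ f m := by
    by_contra hc
    push_neg at hc
    have hsub2 : (Finset.range (j0+1)).image f ⊆ Finset.range j0 := by
      intro y hy
      rw [Finset.mem_image] at hy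
      obtain ⟨m, _, rfl⟩ := hy
      rw [Finset.mem_range]
      exact hc m
    have := Finset.card_le_card hsub2
    rw [Finset.card_image_of_injective _ hinj, Finset.card_range, Finset.card_range] at this
    omega
  obtain ⟨m, hm⟩ := hex
  have h1j : 1 ≤ j0 := (e.symm (fun i' => if i'.1 = i0 then 1 else 0)).2
  have hum := u_mono ⟨hmono, e, he⟩ j0 (f m) h1j hm
  rw [hδ, hone m] at hum
  omega



lemma Uu3 (p : ℕ → ℕ) (hp : 2 ≤ p 3) (j : ℕ) (hj : 1 ≤ j) : Uu p 3 j = p 3 ^ (j-1) := by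
  have h2 : ∀ i ∈ Finset.Icc 3 3, 2 ≤ p i := by
    intro i hi
    simp only [Finset.mem_Icc] at hi
    have : i = 3 := by omega
    rw [this]; exact hp
  apply le_antisymm
  · exact (Uu_galois p 3 le_rfl h2 j _).2 ((cnt3' p hp j _ hj).2 le_rfl)
  · exact (cnt3' p hp j _ hj).1 ((Uu_galois p 3 le_rfl h2 j _).1 le_rfl)

lemma sum_Icc_succ_top' (f : ℕ → ℕ) (n : ℕ) (hn : 1 ≤ n) :
    ∑ j ∈ Finset.Icc 1 n, f j = (∑ j ∈ Finset.Icc 1 (n-1), f j) + f n := by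
  have : Finset.Icc 1 n = insert n (Finset.Icc 1 (n-1)) := by
    ext j; simp only [Finset.mem_Icc, Finset.mem_insert]; omega
  rw [this, Finset.sum_insert (by simp only [Finset.mem_Icc]; omega)]
  exact Nat.add_comm _ _

lemma sumU3 (p : ℕ → ℕ) (hp : 2 ≤ p 3) (n : ℕ) (hn : 1 ≤ n) :
    ∑ j ∈ Finset.Icc 1 n, Uu p 3 j = p 3 * (∑ j ∈ Finset.Icc 1 (n-1), Uu p 3 j) + 1 := by
  induction n, hn using Nat.le_induction with
  | base => simp [Uu3 p hp 1 le_rfl]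
  | succ n hn ih =>
    have e1 : ∑ j ∈ Finset.Icc 1 (n+1), Uu p 3 j =
        (∑ j ∈ Finset.Icc 1 n, Uu p 3 j) + Uu p 3 (n+1) := by
      have := sum_Icc_succ_top' (Uu p 3) (n+1) (by omega)
      simpa using this
    have e2 : Uu p 3 (n+1) = p 3 ^ n := by
      have := Uu3 p hp (n+1) (by omega)
      simpa using this
    have e4 : ∑ j ∈ Finset.Icc 1 n, Uu p 3 j =
        (∑ j ∈ Finset.Icc 1 (n-1), Uu p 3 j) + p 3 ^ (n-1) := by
      rw [sum_Icc_succ_top' (Uu p 3) n hn, Uu3 p hp n hn]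
    have hpow : p 3 * p 3 ^ (n-1) = p 3 ^ n := by
      rw [← pow_succ']
      congr 1
      omega
    simp only [Nat.add_sub_cancel]
    have e5 : (∑ j ∈ Finset.Icc 1 (n-1), Uu p 3 j) + p 3 ^ (n-1) =
        p 3 * (∑ j ∈ Finset.Icc 1 (n-1), Uu p 3 j) + 1 := by
      rw [← e4, ih]
    rw [e1, e2, e4, Nat.mul_add, hpow]
    omega

/-! ### main aux theorems -/

theorem aux2 (p q : ℕ → ℕ) (G : ℕ → ℕ → ℕ)
    (hG0 : ∀ k, G k 0 = 0)
    (hG3 : ∀ n, 1 ≤ n → G 3 n = p 3 * G 3 (n - 1) + q 3)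
    (hGk : ∀ k, 4 ≤ k → ∀ n, 1 ≤ n →
      G k n = sInf {v | ∃ t, 1 ≤ t ∧ t ≤ n ∧ v = p k * G k (n - t) + q k * G (k - 1) t}) :
    ∀ k, 3 ≤ k → (∀ i ∈ Finset.Icc 3 k, 2 ≤ p i) →
    ∀ n, G k n = (∏ i ∈ Finset.Icc 3 k, q i) * ∑ j ∈ Finset.Icc 1 n, Uu p k j := by
  intro k hk
  induction k, hk using Nat.le_induction with
  | base =>
    intro h2 n
    induction n with
    | zero => simp [hG0]
    | succ m ih =>
      have hp3 : 2 ≤ p 3 := h2 3 (by simp)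
      rw [hG3 (m+1) (by omega)]
      simp only [Nat.add_sub_cancel]
      rw [ih, sumU3 p hp3 (m+1) (by omega)]
      simp only [Nat.add_sub_cancel]
      rw [show (∏ i ∈ Finset.Icc 3 3, q i) = q 3 from by
        rw [Finset.Icc_self, Finset.prod_singleton]]
      ring
  | succ k hk ihk =>
    intro h2
    have h2' : ∀ i ∈ Finset.Icc 3 k, 2 ≤ p i := fun i hi => h2 i (hsub k hk hi)
    have hpk : 2 ≤ p (k+1) := h2 (k+1) (by simp only [Finset.mem_Icc]; omega)
    intro n
    induction n using Nat.strong_induction_on with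
    | _ n ihn =>
    rcases Nat.eq_zero_or_pos n with h0 | hn
    · simp [h0, hG0]
    have hA : ∀ j x, p (k+1) * Uu p (k+1) j ≤ x ↔ j ≤ cnt p (k+1) (x / p (k+1)) := by
      intro j x
      rw [← Uu_galois p (k+1) (by omega) h2 j (x / p (k+1)),
        Nat.le_div_iff_mul_le (by omega : 0 < p (k+1)), Nat.mul_comm]
    have hB : ∀ j x, Uu p k j ≤ x ↔ j ≤ cnt p k x := Uu_galois p k hk h2'
    have hC : ∀ j x, Uu p (k+1) j ≤ x ↔ j ≤ cnt p (k+1) (x / p (k+1)) + cnt p k x := by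
      intro j x
      rw [Uu_galois p (k+1) (by omega) h2 j x, cnt_rec p k hk h2 x, Nat.add_comm]
    have ha_mono : Monotone (fun x => cnt p (k+1) (x / p (k+1))) :=
      fun x y h => cnt_mono p (k+1) h2 (Nat.div_le_div_right h)
    have hb_mono : Monotone (cnt p k) := cnt_mono p k h2'
    have hBA : Uu p k 1 ≤ p (k+1) * Uu p (k+1) 1 := by
      have hB1 : Uu p k 1 ≤ 1 := by
        rw [Uu_galois p k hk h2' 1 1]
        have := cnt_lb p k hk h2' 1
        simpa using this
      have hA1 : 1 ≤ Uu p (k+1) 1 := by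
        by_contra h
        have h0' : Uu p (k+1) 1 ≤ 0 := by omega
        rw [Uu_galois p (k+1) (by omega) h2 1 0, cnt_zero p (k+1) h2] at h0'
        omega
      calc Uu p k 1 ≤ 1 := hB1
        _ ≤ p (k+1) * Uu p (k+1) 1 := Nat.one_le_iff_ne_zero.2 (by positivity)
    obtain ⟨ts, hts1, hts2, heq⟩ := merge_exists hA hB hC ha_mono hb_mono hBA n hn
    rw [hGk (k+1) (by omega) n hn]
    simp only [Nat.add_sub_cancel]
    have hQ : ∏ i ∈ Finset.Icc 3 (k+1), q i = q (k+1) * ∏ i ∈ Finset.Icc 3 k, q i := by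
      have hins : Finset.Icc 3 (k+1) = insert (k+1) (Finset.Icc 3 k) := by
        ext m; simp only [Finset.mem_Icc, Finset.mem_insert]; omega
      rw [hins, Finset.prod_insert (by simp only [Finset.mem_Icc]; omega)]
    have hval : ∀ t, 1 ≤ t → t ≤ n →
        p (k+1) * G (k+1) (n - t) + q (k+1) * G k t
        = (∏ i ∈ Finset.Icc 3 (k+1), q i) *
          ((∑ j ∈ Finset.Icc 1 (n-t), p (k+1) * Uu p (k+1) j) +
            ∑ j ∈ Finset.Icc 1 t, Uu p k j) := by
      intro t h1 h2t
      rw [ihn (n - t) (by omega), ihk h2' t, hQ, ← Finset.mul_sum]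
      ring
    apply le_antisymm
    · apply Nat.sInf_le
      exact ⟨ts, hts1, hts2, by rw [hval ts hts1 hts2, ← heq]⟩
    · apply le_csInf
      · exact ⟨_, n, hn, le_rfl, rfl⟩
      · rintro v ⟨t, h1, h2t, rfl⟩
        rw [hval t h1 h2t]
        exact Nat.mul_le_mul_left _ (merge_lower hA hB hC n t h2t)

theorem aux1 (p q : ℕ → ℕ) (G : ℕ → ℕ → ℕ)
    (hG0 : ∀ k, G k 0 = 0)
    (hG3 : ∀ n, 1 ≤ n → G 3 n = p 3 * G 3 (n - 1) + q 3)
    (hGk : ∀ k, 4 ≤ k → ∀ n, 1 ≤ n →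
      G k n = sInf {v | ∃ t, 1 ≤ t ∧ t ≤ n ∧ v = p k * G k (n - t) + q k * G (k - 1) t}) :
    ∀ k, 3 ≤ k → (∀ i ∈ Finset.Icc 3 k, p i = 1) →
    ∀ n, G k n = (∏ i ∈ Finset.Icc 3 k, q i) * n := by
  intro k hk
  induction k, hk using Nat.le_induction with
  | base =>
    intro h1 n
    have hp3 : p 3 = 1 := h1 3 (by simp)
    have hq3 : ∏ i ∈ Finset.Icc 3 3, q i = q 3 := by
      rw [Finset.Icc_self, Finset.prod_singleton]
    induction n with
    | zero => simp [hG0]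
    | succ m ih =>
      rw [hG3 (m+1) (by omega)]
      simp only [Nat.add_sub_cancel]
      rw [ih, hp3, hq3, one_mul]
      ring
  | succ k hk ihk =>
    intro h1
    have h1' : ∀ i ∈ Finset.Icc 3 k, p i = 1 := fun i hi => h1 i (hsub k hk hi)
    have hpk : p (k+1) = 1 := h1 (k+1) (by simp only [Finset.mem_Icc]; omega)
    have hQ : ∏ i ∈ Finset.Icc 3 (k+1), q i = q (k+1) * ∏ i ∈ Finset.Icc 3 k, q i := by
      have hins : Finset.Icc 3 (k+1) = insert (k+1) (Finset.Icc 3 k) := by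
        ext m; simp only [Finset.mem_Icc, Finset.mem_insert]; omega
      rw [hins, Finset.prod_insert (by simp only [Finset.mem_Icc]; omega)]
    intro n
    induction n using Nat.strong_induction_on with
    | _ n ihn =>
    rcases Nat.eq_zero_or_pos n with h0 | hn
    · simp [h0, hG0]
    rw [hGk (k+1) (by omega) n hn]
    simp only [Nat.add_sub_cancel]
    have hval : ∀ t, 1 ≤ t → t ≤ n →
        p (k+1) * G (k+1) (n - t) + q (k+1) * G k t
        = (∏ i ∈ Finset.Icc 3 (k+1), q i) * n := by
      intro t ht1 ht2
      rw [ihn (n - t) (by omega), ihk h1' t, hQ, hpk, one_mul]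
      have : (n - t) + t = n := by omega
      calc (q (k+1) * ∏ i ∈ Finset.Icc 3 k, q i) * (n - t)
            + q (k+1) * ((∏ i ∈ Finset.Icc 3 k, q i) * t)
          = (q (k+1) * ∏ i ∈ Finset.Icc 3 k, q i) * ((n-t) + t) := by ring
        _ = (q (k+1) * ∏ i ∈ Finset.Icc 3 k, q i) * n := by rw [this]
    apply le_antisymm
    · exact Nat.sInf_le ⟨n, hn, le_rfl, (hval n hn le_rfl).symm⟩
    · apply le_csInf
      · exact ⟨_, n, hn, le_rfl, rfl⟩
      · rintro v ⟨t, ht1, ht2, rfl⟩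
        rw [hval t ht1 ht2]


end FrameStewartAux

open FrameStewartAux in
/-- Theorem 1: G_k(n) = (∏_{i=3}^k q_i) · Σ_{j=1}^{n} u^k_j. -/
theorem generalized_frame_stewart_main
    (p q : ℕ → ℕ) (hp : ∀ i, 1 ≤ p i) (hq : ∀ i, 1 ≤ q i)
    (G : ℕ → ℕ → ℕ)
    (hG0 : ∀ k, G k 0 = 0)
    (hG3 : ∀ n, 1 ≤ n → G 3 n = p 3 * G 3 (n - 1) + q 3)
    (hGk : ∀ k, 4 ≤ k → ∀ n, 1 ≤ n →
      G k n = sInf {v | ∃ t, 1 ≤ t ∧ t ≤ n ∧ v = p k * G k (n - t) + q k * G (k - 1) t})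
    (k : ℕ) (hk : 3 ≤ k)
    (u : ℕ → ℕ) (hu : IsSmoothEnum p k u)
    (n : ℕ) (hn : 1 ≤ n) :
    G k n = (∏ i ∈ Finset.Icc 3 k, q i) * ∑ j ∈ Finset.Icc 1 n, u j := by
  classical
  rcases dichotomy hp hu with hall | h2
  · have hsum : ∑ j ∈ Finset.Icc 1 n, u j = n := by
      have hu1 : ∀ j ∈ Finset.Icc 1 n, u j = 1 := by
        intro j hj
        rw [Finset.mem_Icc] at hj
        obtain ⟨hmono, e, he⟩ := hu
        have h : u j = ∏ i : (Finset.Icc 3 k : Finset ℕ), p i.1 ^ e ⟨j, hj.1⟩ i :=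
          he ⟨j, hj.1⟩
        rw [h]
        apply Finset.prod_eq_one
        intro i _
        rw [hall i.1 i.2, one_pow]
      rw [Finset.sum_congr rfl hu1, Finset.sum_const, Nat.card_Icc]
      simp
    rw [hsum]
    exact aux1 p q G hG0 hG3 hGk k hk hall n
  · rw [aux2 p q G hG0 hG3 hGk k hk h2 n]
    congr 1
    apply Finset.sum_congr rfl
    intro j hj
    rw [Finset.mem_Icc] at hj
    exact (u_eq_Uu hu hk h2 j hj.1).symm
end

section
/- With all p_i > 1 and notation as in the smooth-sequence lemma, suppose G^1_i(l) − G^1_i(l−1) = u^i_l for 3 ≤ i ≤ k−1 and all l ≥ 1, and G^1_k(l) − G^1_k(l−1) = u^k_l for 1 ≤ l ≤ n−1. Let j be the unique integer with k_j ≤ n < k_{j+1}. Then the function t ↦ p_k·G^1_k(n−t) + G^1_{k−1}(t) on 1 ≤ t ≤ n attains its minimum at t = j. -/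
namespace GFSaux
open Finset

variable (p : ℕ → ℕ)

def pr (k : ℕ) (α : (Finset.Icc 3 k : Finset ℕ) → ℕ) : ℕ :=
  ∏ i : (Finset.Icc 3 k : Finset ℕ), p i.1 ^ α i

lemma pr_pos (k : ℕ) (hp : ∀ i ∈ Finset.Icc 3 k, 1 < p i)
    (α : (Finset.Icc 3 k : Finset ℕ) → ℕ) : 1 ≤ pr p k α := by
  apply Finset.one_le_prod'
  intro i _
  exact Nat.one_le_pow _ _ (lt_trans Nat.zero_lt_one (hp i.1 i.2))

lemma pr_finite (k x : ℕ) (hp : ∀ i ∈ Finset.Icc 3 k, 1 < p i) :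
    {α : (Finset.Icc 3 k : Finset ℕ) → ℕ | pr p k α ≤ x}.Finite := by
  apply Set.Finite.subset (Set.Finite.pi (fun i => Set.finite_Iic x))
  intro α hα
  simp only [Set.mem_pi, Set.mem_univ, Set.mem_Iic, forall_true_left]
  intro i
  have h1 : p i.1 ^ α i ≤ pr p k α := by
    unfold pr
    exact Finset.single_le_prod'
      (fun (i' : (Finset.Icc 3 k : Finset ℕ)) _ => Nat.one_le_pow _ _
        (lt_trans Nat.zero_lt_one (hp i'.1 i'.2))) (Finset.mem_univ i)
  have h2 : α i < 2 ^ α i := Nat.lt_two_pow_self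
  have h3 : 2 ^ α i ≤ p i.1 ^ α i := Nat.pow_le_pow_left (hp i.1 i.2) _
  exact le_trans (le_of_lt (lt_of_lt_of_le h2 h3)) (le_trans h1 hα)

noncomputable def cnt (k x : ℕ) : ℕ := Nat.card {α // pr p k α ≤ x}

lemma cnt_zero (k : ℕ) (hp : ∀ i ∈ Finset.Icc 3 k, 1 < p i) : cnt p k 0 = 0 := by
  have : IsEmpty {α // pr p k α ≤ 0} := by
    constructor; rintro ⟨α, hα⟩
    exact absurd hα (by have := pr_pos p k hp α; omega)
  exact Nat.card_of_isEmpty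

lemma cnt_mono (k : ℕ) (hp : ∀ i ∈ Finset.Icc 3 k, 1 < p i) {x y : ℕ} (h : x ≤ y) :
    cnt p k x ≤ cnt p k y := by
  have := Nat.card_mono (pr_finite p k y hp)
    (show {α | pr p k α ≤ x} ⊆ {α | pr p k α ≤ y} from fun α hα => le_trans hα h)
  exact this


lemma k_mem {k : ℕ} (hk : 4 ≤ k) : k ∈ Finset.Icc 3 k := by simp [Finset.mem_Icc]; omega

lemma up_mem {k : ℕ} {m : ℕ} (h : m ∈ Finset.Icc 3 (k-1)) : m ∈ Finset.Icc 3 k := by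
  simp [Finset.mem_Icc] at h ⊢; omega

lemma dn_mem {k : ℕ} {m : ℕ} (h : m ∈ Finset.Icc 3 k) (h2 : m ≠ k) : m ∈ Finset.Icc 3 (k-1) := by
  simp [Finset.mem_Icc] at h ⊢; omega

def splitE (k : ℕ) (hk : 4 ≤ k) :
    ((Finset.Icc 3 k : Finset ℕ) → ℕ) ≃ ℕ × ((Finset.Icc 3 (k-1) : Finset ℕ) → ℕ) where
  toFun α := (α ⟨k, k_mem hk⟩, fun i => α ⟨i.1, up_mem i.2⟩)
  invFun q := fun i => if h : i.1 = k then q.1 else q.2 ⟨i.1, dn_mem i.2 h⟩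
  left_inv α := by
    funext i
    dsimp only
    by_cases h : i.1 = k
    · rw [dif_pos h]; congr 1; exact Subtype.ext h.symm
    · rw [dif_neg h]
  right_inv q := by
    refine Prod.ext ?_ ?_
    · simp
    · funext i
      have h : i.1 ≠ k := by
        have := Finset.mem_Icc.mp i.2; omega
      dsimp only
      simp only [dif_neg h]

lemma pr_split {k : ℕ} (hk : 4 ≤ k) (α : (Finset.Icc 3 k : Finset ℕ) → ℕ) :
    pr p k α = p k ^ (splitE k hk α).1 * pr p (k-1) (splitE k hk α).2 := by
  classical
  set g : ℕ → ℕ := fun m => if h : m ∈ Finset.Icc 3 k then p m ^ α ⟨m, h⟩ else 1 with hg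
  have h1 : pr p k α = ∏ m ∈ Finset.Icc 3 k, g m := by
    rw [← Finset.prod_coe_sort (Finset.Icc 3 k) g]
    unfold pr
    apply Finset.prod_congr rfl
    intro i _
    simp only [hg, dif_pos i.2]
  have h2 : Finset.Icc 3 k = insert k (Finset.Icc 3 (k-1)) := by
    ext m; simp [Finset.mem_Icc]; omega
  have h3 : k ∉ Finset.Icc 3 (k-1) := by simp [Finset.mem_Icc]; omega
  have h4 : ∏ m ∈ Finset.Icc 3 (k-1), g m = pr p (k-1) (splitE k hk α).2 := by
    rw [← Finset.prod_coe_sort (Finset.Icc 3 (k-1)) g]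
    unfold pr
    apply Finset.prod_congr rfl
    intro i _
    simp only [hg, dif_pos (up_mem i.2)]
    rfl
  have h5 : g k = p k ^ (splitE k hk α).1 := by
    simp only [hg, dif_pos (k_mem hk)]
    rfl
  have h6 : ∏ m ∈ Finset.Icc 3 k, g m = g k * ∏ m ∈ Finset.Icc 3 (k-1), g m := by
    rw [h2, Finset.prod_insert h3]
  rw [h1, h6, h5, h4]

def stepEquiv (c : ℕ) (hc : 0 < c) {G : Type} (W : G → ℕ) (x : ℕ) :
    {q : ℕ × G // c ^ q.1 * W q.2 ≤ x} ≃
      {g : G // W g ≤ x} ⊕ {q : ℕ × G // c ^ q.1 * W q.2 ≤ x / c} where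
  toFun q :=
    if h : q.1.1 = 0 then
      Sum.inl ⟨q.1.2, by have hq := q.2; rw [h, pow_zero, one_mul] at hq; exact hq⟩
    else
      Sum.inr ⟨(q.1.1 - 1, q.1.2), by
        have hq := q.2
        rw [Nat.le_div_iff_mul_le hc]
        have : c ^ (q.1.1 - 1) * W q.1.2 * c = c ^ q.1.1 * W q.1.2 := by
          rw [mul_comm _ c, ← mul_assoc, ← pow_succ']
          congr 2
          omega
        rw [this]; exact hq⟩
  invFun s :=
    match s with
    | Sum.inl g => ⟨(0, g.1), by rw [pow_zero, one_mul]; exact g.2⟩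
    | Sum.inr q => ⟨(q.1.1 + 1, q.1.2), by
        have hq := q.2
        rw [Nat.le_div_iff_mul_le hc] at hq
        calc c ^ (q.1.1 + 1) * W q.1.2 = c ^ q.1.1 * W q.1.2 * c := by ring
        _ ≤ x := hq⟩
  left_inv q := by
    rcases q with ⟨⟨m, g⟩, h⟩
    cases m with
    | zero => simp
    | succ m => simp
  right_inv s := by
    rcases s with g | q
    · simp
    · rcases q with ⟨⟨m, g⟩, h⟩
      simp

lemma cnt_rec (k : ℕ) (hk : 4 ≤ k) (hp : ∀ i ∈ Finset.Icc 3 k, 1 < p i) (x : ℕ) :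
    cnt p k x = cnt p (k-1) x + cnt p k (x / p k) := by
  have hp' : ∀ i ∈ Finset.Icc 3 (k-1), 1 < p i := fun i hi => hp i (up_mem hi)
  have hpk : 0 < p k := lt_trans Nat.zero_lt_one (hp k (k_mem hk))
  have e1 : ∀ y : ℕ, cnt p k y =
      Nat.card {q : ℕ × ((Finset.Icc 3 (k-1) : Finset ℕ) → ℕ) //
        p k ^ q.1 * pr p (k-1) q.2 ≤ y} := by
    intro y
    apply Nat.card_congr
    apply (splitE k hk).subtypeEquiv
    intro α
    rw [pr_split p hk α]
  haveI f1 : Finite {g : (Finset.Icc 3 (k-1) : Finset ℕ) → ℕ // pr p (k-1) g ≤ x} :=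
    (pr_finite p (k-1) x hp').to_subtype
  haveI fv : Finite {α : (Finset.Icc 3 k : Finset ℕ) → ℕ // pr p k α ≤ x / p k} :=
    (pr_finite p k (x / p k) hp).to_subtype
  haveI f2 : Finite {q : ℕ × ((Finset.Icc 3 (k-1) : Finset ℕ) → ℕ) //
      p k ^ q.1 * pr p (k-1) q.2 ≤ x / p k} := by
    have e2 : {α : (Finset.Icc 3 k : Finset ℕ) → ℕ // pr p k α ≤ x / p k} ≃
        {q : ℕ × ((Finset.Icc 3 (k-1) : Finset ℕ) → ℕ) //
          p k ^ q.1 * pr p (k-1) q.2 ≤ x / p k} :=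
      (splitE k hk).subtypeEquiv (fun α => by rw [pr_split p hk α])
    exact Finite.of_equiv _ e2
  rw [e1 x, Nat.card_congr (stepEquiv (p k) hpk (pr p (k-1)) x), Nat.card_sum,
    e1 (x / p k)]
  rfl


section Enum
variable {p : ℕ → ℕ} {k : ℕ} {u : ℕ → ℕ}

lemma enum_mono (hsm : IsSmoothEnum p k u) {m l : ℕ} (hm : 1 ≤ m) (h : m ≤ l) : u m ≤ u l := by
  induction l with
  | zero => omega
  | succ l ih =>
    rcases Nat.lt_or_ge m (l+1) with h' | h'
    · exact le_trans (ih (by omega)) (hsm.1 l (by omega))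
    · have : m = l + 1 := by omega
      rw [this]

lemma enum_card (hp : ∀ i ∈ Finset.Icc 3 k, 1 < p i) (hsm : IsSmoothEnum p k u) (x : ℕ) :
    Nat.card {l : ℕ // 1 ≤ l ∧ u l ≤ x} = cnt p k x := by
  obtain ⟨hmono, e, he⟩ := hsm
  have e1 : {l : ℕ // 1 ≤ l ∧ u l ≤ x} ≃ {j : {j : ℕ // 1 ≤ j} // u j.1 ≤ x} :=
    (Equiv.subtypeSubtypeEquivSubtypeInter (fun l : ℕ => 1 ≤ l) (fun l => u l ≤ x)).symm
  have e2 : {j : {j : ℕ // 1 ≤ j} // u j.1 ≤ x} ≃ {α // pr p k α ≤ x} :=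
    e.subtypeEquiv (fun j => by rw [he j]; exact Iff.rfl)
  rw [Nat.card_congr (e1.trans e2)]
  rfl

lemma enum_finite (hp : ∀ i ∈ Finset.Icc 3 k, 1 < p i) (hsm : IsSmoothEnum p k u) (x : ℕ) :
    {l : ℕ | 1 ≤ l ∧ u l ≤ x}.Finite := by
  obtain ⟨hmono, e, he⟩ := hsm
  have e1 : {l : ℕ // 1 ≤ l ∧ u l ≤ x} ≃ {j : {j : ℕ // 1 ≤ j} // u j.1 ≤ x} :=
    (Equiv.subtypeSubtypeEquivSubtypeInter (fun l : ℕ => 1 ≤ l) (fun l => u l ≤ x)).symm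
  have e2 : {j : {j : ℕ // 1 ≤ j} // u j.1 ≤ x} ≃ {α // pr p k α ≤ x} :=
    e.subtypeEquiv (fun j => by rw [he j]; exact Iff.rfl)
  haveI : Finite {α // pr p k α ≤ x} := (pr_finite p k x hp).to_subtype
  have : Finite {l : ℕ // 1 ≤ l ∧ u l ≤ x} := Finite.of_equiv _ (e1.trans e2).symm
  exact Set.finite_coe_iff.mp this

lemma enum_le_iff (hp : ∀ i ∈ Finset.Icc 3 k, 1 < p i) (hsm : IsSmoothEnum p k u) (x : ℕ)
    {l : ℕ} (hl : 1 ≤ l) : u l ≤ x ↔ l ≤ cnt p k x := by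
  classical
  have hfin : {m : ℕ | 1 ≤ m ∧ u m ≤ x}.Finite := enum_finite hp hsm x
  have hcard : ({m : ℕ | 1 ≤ m ∧ u m ≤ x}).ncard = cnt p k x := by
    rw [← Nat.card_coe_set_eq]
    exact enum_card hp hsm x
  constructor
  · intro h
    have hsub : Set.Icc 1 l ⊆ {m : ℕ | 1 ≤ m ∧ u m ≤ x} := by
      intro m hm
      exact ⟨hm.1, le_trans (enum_mono ⟨hsm.1, hsm.2⟩ hm.1 hm.2) h⟩
    have hle := Set.ncard_le_ncard hsub hfin
    have hIcc : (Set.Icc 1 l).ncard = l := by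
      rw [Set.ncard_eq_toFinset_card']; simp
    omega
  · intro h
    by_contra hx
    push_neg at hx
    have hsub : {m : ℕ | 1 ≤ m ∧ u m ≤ x} ⊆ Set.Icc 1 (l-1) := by
      intro m hm
      refine ⟨hm.1, ?_⟩
      by_contra hm'
      push_neg at hm'
      have hml : l ≤ m := by omega
      have := enum_mono ⟨hsm.1, hsm.2⟩ hl hml
      have := hm.2
      omega
    have hle := Set.ncard_le_ncard hsub (Set.finite_Icc _ _)
    have hIcc : (Set.Icc 1 (l-1)).ncard = l - 1 := by
      rw [Set.ncard_eq_toFinset_card']; simp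
    omega

lemma enum_pos (hp : ∀ i ∈ Finset.Icc 3 k, 1 < p i) (hsm : IsSmoothEnum p k u)
    {l : ℕ} (hl : 1 ≤ l) : 1 ≤ u l := by
  obtain ⟨hmono, e, he⟩ := hsm
  rw [show l = (⟨l, hl⟩ : {j : ℕ // 1 ≤ j}).1 from rfl, he ⟨l, hl⟩]
  exact pr_pos p k hp _

lemma enum_first (hp : ∀ i ∈ Finset.Icc 3 k, 1 < p i) (hsm : IsSmoothEnum p k u) :
    u 1 = 1 := by
  have h1 : 1 ≤ u 1 := enum_pos hp hsm le_rfl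
  obtain ⟨hmono, e, he⟩ := hsm
  set j0 : {j : ℕ // 1 ≤ j} := e.symm (fun _ => 0) with hj0
  have h2 : u j0.1 = 1 := by
    rw [he j0]
    have : e j0 = fun _ => 0 := e.apply_symm_apply _
    rw [this]
    simp
  have h3 : u 1 ≤ u j0.1 := enum_mono ⟨hmono, e, he⟩ le_rfl j0.2
  omega

end Enum
end GFSaux

/-- Lemma 2: under the inductive difference hypotheses, the function
t ↦ p_k·G^1_k(n−t) + G^1_{k−1}(t) on 1 ≤ t ≤ n attains its minimum at t = j,
where j is the integer with k_j ≤ n < k_{j+1}. -/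


theorem generalized_frame_stewart_min_at_j
    (p : ℕ → ℕ) (k : ℕ) (hk : 4 ≤ k)
    (hp : ∀ i, 3 ≤ i → i ≤ k → 1 < p i)
    (G1 : ℕ → ℕ → ℕ)
    (hG10 : ∀ k', G1 k' 0 = 0)
    (hG13 : ∀ n, 1 ≤ n → G1 3 n = p 3 * G1 3 (n - 1) + 1)
    (hG1k : ∀ k', 4 ≤ k' → ∀ n, 1 ≤ n →
      G1 k' n = sInf {v | ∃ t, 1 ≤ t ∧ t ≤ n ∧ v = p k' * G1 k' (n - t) + G1 (k' - 1) t})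
    (u : ℕ → ℕ → ℕ)
    (hu : ∀ i, 3 ≤ i → i ≤ k → IsSmoothEnum p i (u i))
    (K : ℕ → ℕ) (hK1 : K 1 = 1)
    (hK : ∀ j, 2 ≤ j → K j = sInf {l | K (j - 1) < l ∧ u k l = u (k - 1) j})
    (n : ℕ) (hn : 1 ≤ n)
    (hdiff1 : ∀ i, 3 ≤ i → i ≤ k - 1 → ∀ l, 1 ≤ l → G1 i l - G1 i (l - 1) = u i l)
    (hdiff2 : ∀ l, 1 ≤ l → l ≤ n - 1 → G1 k l - G1 k (l - 1) = u k l)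
    (j : ℕ) (hj : 1 ≤ j) (hj1 : K j ≤ n) (hj2 : n < K (j + 1)) :
    j ≤ n ∧ ∀ t, 1 ≤ t → t ≤ n →
      p k * G1 k (n - j) + G1 (k - 1) j ≤ p k * G1 k (n - t) + G1 (k - 1) t := by
  classical
  have hk1 : 3 ≤ k - 1 := by omega
  have hpk : ∀ i ∈ Finset.Icc 3 k, 1 < p i := by
    intro i hi; rw [Finset.mem_Icc] at hi; exact hp i hi.1 hi.2
  have hpk1 : ∀ i ∈ Finset.Icc 3 (k-1), 1 < p i := fun i hi => hpk i (GFSaux.up_mem hi)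
  have hsma : IsSmoothEnum p k (u k) := hu k (by omega) le_rfl
  have hsmb : IsSmoothEnum p (k-1) (u (k-1)) := hu (k-1) hk1 (by omega)
  have hppos : 0 < p k := lt_trans Nat.zero_lt_one (hp k (by omega) le_rfl)
  set A : ℕ → ℕ := GFSaux.cnt p k with hA
  set B : ℕ → ℕ := GFSaux.cnt p (k-1) with hB
  set a : ℕ → ℕ := u k with ha
  set b : ℕ → ℕ := u (k-1) with hb
  have hiffa : ∀ x l, 1 ≤ l → (a l ≤ x ↔ l ≤ A x) :=
    fun x l hl => GFSaux.enum_le_iff hpk hsma x hl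
  have hiffb : ∀ x l, 1 ≤ l → (b l ≤ x ↔ l ≤ B x) :=
    fun x l hl => GFSaux.enum_le_iff hpk1 hsmb x hl
  have hArec : ∀ x, A x = B x + A (x / p k) := fun x => GFSaux.cnt_rec p k hk hpk x
  have hA0 : A 0 = 0 := GFSaux.cnt_zero p k hpk
  have hAmono : ∀ {x y : ℕ}, x ≤ y → A x ≤ A y := fun h => GFSaux.cnt_mono p k hpk h
  have hamono : ∀ {m l : ℕ}, 1 ≤ m → m ≤ l → a m ≤ a l :=
    fun hm h => GFSaux.enum_mono hsma hm h
  have hbmono : ∀ {m l : ℕ}, 1 ≤ m → m ≤ l → b m ≤ b l :=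
    fun hm h => GFSaux.enum_mono hsmb hm h
  have hbpos : ∀ l, 1 ≤ l → 1 ≤ b l := fun l hl => GFSaux.enum_pos hpk1 hsmb hl
  have hapos : ∀ l, 1 ≤ l → 1 ≤ a l := fun l hl => GFSaux.enum_pos hpk hsma hl
  have hb1 : b 1 = 1 := GFSaux.enum_first hpk1 hsmb
  -- The key formula for K
  have hKf : ∀ j', 1 ≤ j' → K j' = A ((b j' - 1) / p k) + j' := by
    intro j' hj'
    induction j', hj' using Nat.le_induction with
    | base =>
      rw [hK1, hb1]
      simp [hA0]
    | succ m hm ih =>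
      have hbm1 : 1 ≤ b m := hbpos m hm
      have hbm2 : 1 ≤ b (m+1) := hbpos (m+1) (by omega)
      have hbmm : b m ≤ b (m+1) := hbmono hm (by omega)
      have hy12 : (b m - 1) / p k ≤ (b (m+1) - 1) / p k :=
        Nat.div_le_div_right (by omega)
      have hBlt : B (b (m+1) - 1) < m + 1 := by
        by_contra hc
        push_neg at hc
        have := (hiffb (b (m+1) - 1) (m+1) (by omega)).mpr hc
        omega
      have hABc : A (b (m+1) - 1) = B (b (m+1) - 1) + A ((b (m+1) - 1) / p k) :=
        hArec _
      set c : ℕ := A ((b (m+1) - 1) / p k) + (m+1) with hc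
      have ha_c : a c = b (m+1) := by
        have h1 : ¬ (a c ≤ b (m+1) - 1) := by
          rw [hiffa (b (m+1) - 1) c (by omega)]
          omega
        have h2 : a c ≤ b (m+1) := by
          rw [hiffa (b (m+1)) c (by omega)]
          have h21 : m + 1 ≤ B (b (m+1)) := (hiffb (b (m+1)) (m+1) (by omega)).mp le_rfl
          have h22 : A ((b (m+1) - 1) / p k) ≤ A (b (m+1) / p k) :=
            hAmono (Nat.div_le_div_right (by omega))
          have h23 : A (b (m+1)) = B (b (m+1)) + A (b (m+1) / p k) := hArec _
          omega
        omega
      have hKlt : K m < c := by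
        rw [ih]
        have := hAmono hy12
        omega
      have hc_mem : c ∈ {l | K m < l ∧ a l = b (m+1)} := ⟨hKlt, ha_c⟩
      have hKm1 : 1 ≤ K m := by rw [ih]; omega
      have hmin : ∀ l ∈ {l | K m < l ∧ a l = b (m+1)}, c ≤ l := by
        rintro l ⟨hl1, hl2⟩
        have hl0 : 1 ≤ l := by omega
        have h3 : ¬ (a l ≤ b (m+1) - 1) := by rw [hl2]; omega
        rw [hiffa (b (m+1) - 1) l hl0] at h3
        push_neg at h3
        rcases le_or_gt m (B (b (m+1) - 1)) with hcase | hcase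
        · omega
        · have h4 : ¬ (b m ≤ b (m+1) - 1) := by
            rw [hiffb (b (m+1) - 1) m hm]
            omega
          have h5 : b m = b (m+1) := by omega
          rw [ih, h5] at hl1
          omega
      have hKm1eq : K (m+1) = sInf {l | K m < l ∧ a l = b (m+1)} := by
        have := hK (m+1) (by omega)
        simpa using this
      rw [hKm1eq]
      exact le_antisymm
        (Nat.sInf_le hc_mem)
        (hmin _ (Nat.sInf_mem ⟨c, hc_mem⟩))
  have hKj : K j = A ((b j - 1) / p k) + j := hKf j hj
  have hKj1 : K (j+1) = A ((b (j+1) - 1) / p k) + (j+1) := hKf (j+1) (by omega)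
  have hjn : j ≤ n := by omega
  -- Key inequality 1: for 1 ≤ s < j, b (s+1) ≤ p k * a (n - s)
  have key1 : ∀ s, 1 ≤ s → s + 1 ≤ j → b (s+1) ≤ p k * a (n - s) := by
    intro s hs1 hs2
    have hidx : A ((b j - 1) / p k) + 1 ≤ n - s := by omega
    have h1 : ¬ (a (A ((b j - 1) / p k) + 1) ≤ (b j - 1) / p k) := by
      rw [hiffa ((b j - 1) / p k) _ (by omega)]
      omega
    have h4 : (b j - 1) / p k + 1 ≤ a (A ((b j - 1) / p k) + 1) := by omega
    have h5 : p k * ((b j - 1) / p k + 1) ≤ p k * a (A ((b j - 1) / p k) + 1) :=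
      Nat.mul_le_mul_left _ h4
    have hdm := Nat.div_add_mod (b j - 1) (p k)
    have hmlt := Nat.mod_lt (b j - 1) hppos
    have hms : p k * ((b j - 1) / p k + 1) = p k * ((b j - 1) / p k) + p k := Nat.mul_succ _ _
    have hbj1 : 1 ≤ b j := hbpos j hj
    have h2 : b j ≤ p k * a (A ((b j - 1) / p k) + 1) := by omega
    have h6 : a (A ((b j - 1) / p k) + 1) ≤ a (n - s) := hamono (by omega) hidx
    have h7 : b (s+1) ≤ b j := hbmono (by omega) (by omega)
    have h8 : p k * a (A ((b j - 1) / p k) + 1) ≤ p k * a (n - s) :=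
      Nat.mul_le_mul_left _ h6
    omega
  -- Key inequality 2: for j ≤ s ≤ n-1, p k * a (n - s) ≤ b (s+1)
  have key2 : ∀ s, j ≤ s → s + 1 ≤ n → p k * a (n - s) ≤ b (s+1) := by
    intro s hs1 hs2
    have h1 : a (n - s) ≤ (b (j+1) - 1) / p k := by
      rw [hiffa ((b (j+1) - 1) / p k) (n - s) (by omega)]
      omega
    have h2 : p k * a (n - s) ≤ p k * ((b (j+1) - 1) / p k) :=
      Nat.mul_le_mul_left _ h1
    have h3 : p k * ((b (j+1) - 1) / p k) ≤ b (j+1) - 1 := by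
      rw [mul_comm]; exact Nat.div_mul_le_self _ _
    have h4 : b (j+1) ≤ b (s+1) := hbmono (by omega) (by omega)
    have h5 : 1 ≤ b (j+1) := hbpos (j+1) (by omega)
    omega
  -- step equations for G1
  have hGb : ∀ l, 1 ≤ l → G1 (k-1) l = G1 (k-1) (l-1) + b l := by
    intro l hl
    have h : G1 (k-1) l - G1 (k-1) (l-1) = b l := hdiff1 (k-1) hk1 le_rfl l hl
    have hbl := hbpos l hl
    omega
  have hGa : ∀ l, 1 ≤ l → l ≤ n - 1 → G1 k l = G1 k (l-1) + a l := by
    intro l hl hl2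
    have h : G1 k l - G1 k (l-1) = a l := hdiff2 l hl hl2
    have hal := hapos l hl
    omega
  have step_down : ∀ s, 1 ≤ s → s + 1 ≤ j →
      p k * G1 k (n - (s+1)) + G1 (k-1) (s+1) ≤ p k * G1 k (n - s) + G1 (k-1) s := by
    intro s hs1 hs2
    have h1 : G1 (k-1) (s+1) = G1 (k-1) s + b (s+1) := by
      have := hGb (s+1) (by omega)
      simpa using this
    have h2 : G1 k (n - s) = G1 k (n - (s+1)) + a (n - s) := by
      have h := hGa (n - s) (by omega) (by omega)
      have h3 : n - s - 1 = n - (s+1) := by omega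
      rwa [h3] at h
    have h4 := key1 s hs1 hs2
    have h5 : p k * G1 k (n - s) = p k * G1 k (n - (s+1)) + p k * a (n - s) := by
      rw [h2, Nat.mul_add]
    omega
  have step_up : ∀ s, j ≤ s → s + 1 ≤ n →
      p k * G1 k (n - s) + G1 (k-1) s ≤ p k * G1 k (n - (s+1)) + G1 (k-1) (s+1) := by
    intro s hs1 hs2
    have h1 : G1 (k-1) (s+1) = G1 (k-1) s + b (s+1) := by
      have := hGb (s+1) (by omega)
      simpa using this
    have h2 : G1 k (n - s) = G1 k (n - (s+1)) + a (n - s) := by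
      have h := hGa (n - s) (by omega) (by omega)
      have h3 : n - s - 1 = n - (s+1) := by omega
      rwa [h3] at h
    have h4 := key2 s hs1 hs2
    have h5 : p k * G1 k (n - s) = p k * G1 k (n - (s+1)) + p k * a (n - s) := by
      rw [h2, Nat.mul_add]
    omega
  refine ⟨hjn, ?_⟩
  have down : ∀ d t, 1 ≤ t → t + d = j →
      p k * G1 k (n - j) + G1 (k-1) j ≤ p k * G1 k (n - t) + G1 (k-1) t := by
    intro d
    induction d with
    | zero =>
      intro t ht hd
      have : t = j := by omega
      rw [this]
    | succ d ih =>
      intro t ht hd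
      have hstep := step_down t ht (by omega)
      have hih := ih (t+1) (by omega) (by omega)
      exact le_trans hih hstep
  have upw : ∀ t, j ≤ t → t ≤ n →
      p k * G1 k (n - j) + G1 (k-1) j ≤ p k * G1 k (n - t) + G1 (k-1) t := by
    intro t ht
    induction t, ht using Nat.le_induction with
    | base => intro _; exact le_rfl
    | succ s hs ih =>
      intro hsn
      exact le_trans (ih (by omega)) (step_up s hs (by omega))
  intro t ht1 ht2
  rcases le_or_gt t j with hcase | hcase
  · exact down (j - t) t ht1 (by omega)
  · exact upw t (by omega) ht2
end

section
/- Let k ≥ 4 with all p_i > 1, and let (k_j) be the index sequence defined by k_1 = 1 and k_j = min{ l > k_{j−1} : u^k_l = u^{k−1}_j }. Then for every j ≥ 1 and every n with k_j ≤ n < k_{j+1}, the generalized Frame-Stewart numbers satisfy G_k(n) = p_k·G_k(n−j) + q_k·G_{k−1}(j). -/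
namespace FSaux
open Finset

variable (p : ℕ → ℕ)

noncomputable def PrS (s : Finset ℕ) (α : ↑s → ℕ) : ℕ := ∏ i : ↑s, p i.1 ^ α i

noncomputable def NcS (s : Finset ℕ) (v : ℕ) : ℕ := Nat.card {α : ↑s → ℕ // PrS p s α ≤ v}

variable {p} {s : Finset ℕ} {v w : ℕ}

def splitFun (a : ℕ) (s : Finset ℕ) (ha : a ∉ s) : (↑(insert a s) → ℕ) ≃ (↑s → ℕ) × ℕ where
  toFun α := (fun i => α ⟨i.1, Finset.mem_insert_of_mem i.2⟩, α ⟨a, Finset.mem_insert_self a s⟩)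
  invFun βx := fun i => if h : i.1 ∈ s then βx.1 ⟨i.1, h⟩ else βx.2
  left_inv := by
    intro α; funext i
    rcases i with ⟨i, hi⟩
    by_cases h : i ∈ s
    · simp [h]
    · have hia : i = a := by
        rcases Finset.mem_insert.mp hi with h' | h'
        · exact h'
        · exact absurd h' h
      subst hia; simp [h]
  right_inv := by
    rintro ⟨β, x⟩
    refine Prod.ext (funext fun i => ?_) ?_
    · simp [i.2]
    · simp [ha]

lemma PrS_split (a : ℕ) (ha : a ∉ s) (α : ↑(insert a s) → ℕ) :
    PrS p (insert a s) α = p a ^ (splitFun a s ha α).2 * PrS p s (splitFun a s ha α).1 := by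
  classical
  set g : ℕ → ℕ := fun n => p n ^ (if h : n ∈ insert a s then α ⟨n, h⟩ else 0) with hg
  have h1 : PrS p (insert a s) α = ∏ i ∈ insert a s, g i := by
    rw [PrS, ← Finset.prod_coe_sort (insert a s) g]
    exact Finset.prod_congr rfl (fun i _ => by rw [hg]; simp only [dif_pos i.2])
  have h2 : PrS p s (splitFun a s ha α).1 = ∏ i ∈ s, g i := by
    rw [PrS, ← Finset.prod_coe_sort s g]
    refine Finset.prod_congr rfl (fun i _ => ?_)
    rw [hg]; simp only [dif_pos (Finset.mem_insert_of_mem i.2)]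
    rfl
  rw [h1, Finset.prod_insert ha, h2]
  congr 1
  rw [hg]; simp only [dif_pos (Finset.mem_insert_self a s)]
  rfl

def splitZeroEquiv {X : Type*} (g : X → ℕ) (c v : ℕ) (hc : 0 < c) :
    {γ : X × ℕ // c ^ γ.2 * g γ.1 ≤ v} ≃
      ({x : X // g x ≤ v} ⊕ {γ : X × ℕ // c ^ γ.2 * g γ.1 ≤ v / c}) where
  toFun γ :=
    match γ with
    | ⟨(x, 0), h⟩ => Sum.inl ⟨x, by simpa using h⟩
    | ⟨(x, n+1), h⟩ => Sum.inr ⟨(x, n), by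
        rw [Nat.le_div_iff_mul_le hc]
        calc c ^ n * g x * c = c ^ (n+1) * g x := by ring
        _ ≤ v := h⟩
  invFun γ :=
    match γ with
    | Sum.inl ⟨x, h⟩ => ⟨(x, 0), by simpa using h⟩
    | Sum.inr ⟨(x, n), h⟩ => ⟨(x, n+1), by
        have h2 := (Nat.le_div_iff_mul_le hc).mp h
        calc c ^ (n+1) * g x = c ^ n * g x * c := by ring
        _ ≤ v := h2⟩
  left_inv := by rintro ⟨⟨x, (_ | n)⟩, h⟩ <;> rfl
  right_inv := by rintro (⟨x, h⟩ | ⟨⟨x, n⟩, h⟩) <;> rfl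

lemma finite_sub (hp2 : ∀ i ∈ s, 2 ≤ p i) (v : ℕ) :
    Finite {α : ↑s → ℕ // PrS p s α ≤ v} := by
  apply Finite.of_injective (β := ↑s → Fin (v+1))
    (f := fun α i => ⟨α.1 i, by
      have h1 : p i.1 ^ α.1 i ≤ PrS p s α :=
        Finset.single_le_prod' (f := fun (j : ↑s) => p j.1 ^ α.1 j)
          (fun j _ => Nat.one_le_pow _ _ (by have := hp2 j.1 j.2; omega))
          (Finset.mem_univ i)
      have h2 : 2 ^ α.1 i ≤ p i.1 ^ α.1 i :=
        Nat.pow_le_pow_left (hp2 i.1 i.2) _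
      have h3 : α.1 i < 2 ^ α.1 i := Nat.lt_two_pow_self
      have := α.2
      omega⟩)
  intro a b h
  exact Subtype.ext (funext fun i => congrArg Fin.val (congrFun h i))

/-- the key counting recurrence -/
lemma NcS_insert {a : ℕ} (ha : a ∉ s) (hp2 : ∀ i ∈ insert a s, 2 ≤ p i) (v : ℕ) :
    NcS p (insert a s) v = NcS p s v + NcS p (insert a s) (v / p a) := by
  have hpa : 0 < p a := by have := hp2 a (Finset.mem_insert_self a s); omega
  have hp2s : ∀ i ∈ s, 2 ≤ p i := fun i hi => hp2 i (Finset.mem_insert_of_mem hi)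
  have E : ∀ w, {α : ↑(insert a s) → ℕ // PrS p (insert a s) α ≤ w} ≃
      {γ : (↑s → ℕ) × ℕ // p a ^ γ.2 * PrS p s γ.1 ≤ w} := fun w =>
    (splitFun a s ha).subtypeEquiv (fun α => by rw [PrS_split a ha α])
  have fin1 := finite_sub (p := p) hp2 v
  have fin2 : Finite {x : ↑s → ℕ // PrS p s x ≤ v} := finite_sub hp2s v
  have fin3 : Finite {α : ↑(insert a s) → ℕ // PrS p (insert a s) α ≤ v / p a} :=
    finite_sub hp2 _
  have fin4 : Finite {γ : (↑s → ℕ) × ℕ // p a ^ γ.2 * PrS p s γ.1 ≤ v / p a} :=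
    Finite.of_equiv _ (E _)
  calc NcS p (insert a s) v
      = Nat.card {γ : (↑s → ℕ) × ℕ // p a ^ γ.2 * PrS p s γ.1 ≤ v} := Nat.card_congr (E v)
    _ = Nat.card ({x : ↑s → ℕ // PrS p s x ≤ v} ⊕
        {γ : (↑s → ℕ) × ℕ // p a ^ γ.2 * PrS p s γ.1 ≤ v / p a}) :=
        Nat.card_congr (splitZeroEquiv (PrS p s) (p a) v hpa)
    _ = NcS p s v + NcS p (insert a s) (v / p a) := by
        rw [Nat.card_sum]
        congr 1
        exact Nat.card_congr (E (v / p a)).symm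


variable (p)

noncomputable def Nc (m v : ℕ) : ℕ := NcS p (Finset.Icc 3 m) v

variable {p} {m : ℕ}

lemma one_le_PrS (hp1 : ∀ i ∈ s, 1 ≤ p i) (α : ↑s → ℕ) : 1 ≤ PrS p s α :=
  Finset.one_le_prod' (fun i _ => Nat.one_le_pow _ _ (hp1 i.1 i.2))

lemma NcS_mono (hp2 : ∀ i ∈ s, 2 ≤ p i) (hvw : v ≤ w) : NcS p s v ≤ NcS p s w := by
  have := finite_sub (p := p) hp2 w
  exact Nat.card_le_card_of_injective
    (fun x => (⟨x.1, le_trans x.2 hvw⟩ : {α : ↑s → ℕ // PrS p s α ≤ w}))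
    (by intro a b h; simp only [Subtype.mk.injEq] at h; exact Subtype.ext h)

lemma NcS_zero (hp1 : ∀ i ∈ s, 1 ≤ p i) : NcS p s 0 = 0 := by
  apply Nat.card_eq_zero.mpr
  refine Or.inl ⟨fun x => ?_⟩
  have := one_le_PrS hp1 x.1
  have := x.2
  omega

lemma one_le_NcS_one (hp2 : ∀ i ∈ s, 2 ≤ p i) : 1 ≤ NcS p s 1 := by
  have := finite_sub (p := p) hp2 1
  have : Nonempty {α : ↑s → ℕ // PrS p s α ≤ 1} :=
    ⟨⟨fun _ => 0, by simp [PrS]⟩⟩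
  exact Nat.card_pos

lemma Icc_insert (hm : 2 ≤ m) :
    Finset.Icc 3 (m + 1) = insert (m + 1) (Finset.Icc 3 m) :=
  Finset.ext fun x => by simp only [Finset.mem_Icc, Finset.mem_insert]; omega

lemma notmem_Icc : (m + 1) ∉ Finset.Icc 3 m := by simp

lemma Icc32 : Finset.Icc 3 2 = (∅ : Finset ℕ) := by
  apply Finset.Icc_eq_empty; omega

lemma PrS_empty (α : ↑(∅ : Finset ℕ) → ℕ) : PrS p ∅ α = 1 := by
  rw [PrS]
  exact Finset.prod_of_isEmpty _

lemma NcS_empty_pos (hv : 1 ≤ v) : NcS p ∅ v = 1 := by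
  rw [NcS]
  have : ∀ α : ↑(∅ : Finset ℕ) → ℕ, PrS p ∅ α ≤ v := fun α => by rw [PrS_empty]; omega
  haveI : Unique {α : ↑(∅ : Finset ℕ) → ℕ // PrS p ∅ α ≤ v} :=
    { default := ⟨fun i => (Finset.notMem_empty _ i.2).elim, this _⟩
      uniq := fun a => Subtype.ext (funext fun i => (Finset.notMem_empty _ i.2).elim) }
  exact Nat.card_unique

lemma Nc_rec (hm : 2 ≤ m) (hp2 : ∀ i ∈ Finset.Icc 3 (m + 1), 2 ≤ p i) (v : ℕ) :
    Nc p (m + 1) v = Nc p m v + Nc p (m + 1) (v / p (m + 1)) := by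
  rw [Nc, Nc, Nc, Icc_insert hm]
  exact NcS_insert notmem_Icc (by rw [← Icc_insert hm]; exact hp2) v

lemma Nc3_rec (hp3 : 2 ≤ p 3) (v : ℕ) (hv : 1 ≤ v) :
    Nc p 3 v = 1 + Nc p 3 (v / p 3) := by
  have h1 : Finset.Icc 3 3 = insert 3 (∅ : Finset ℕ) := by
    rw [show (3 : ℕ) = 2 + 1 by rfl, Icc_insert (le_refl 2), Icc32]
  have h2 : ∀ i ∈ insert 3 (∅ : Finset ℕ), 2 ≤ p i := by
    intro i hi; simp at hi; subst hi; exact hp3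
  have := NcS_insert (s := ∅) (a := 3) (by simp) h2 v
  rw [Nc, Nc, h1, this, NcS_empty_pos hv]

lemma Nc_zero (hp2 : ∀ i ∈ Finset.Icc 3 m, 2 ≤ p i) : Nc p m 0 = 0 :=
  NcS_zero (fun i hi => by have := hp2 i hi; omega)

lemma Nc3_iff (hp3 : 2 ≤ p 3) :
    ∀ v i, 1 ≤ i → (i ≤ Nc p 3 v ↔ p 3 ^ (i - 1) ≤ v) := by
  intro v
  induction v using Nat.strong_induction_on with
  | _ v ih =>
    intro i hi
    rcases Nat.eq_zero_or_pos v with hv | hv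
    · subst hv
      rw [Nc_zero (by intro i hi; simp at hi; subst hi; exact hp3)]
      constructor
      · omega
      · intro h
        have hpos : 0 < p 3 ^ (i - 1) := by positivity
        omega
    · rw [Nc3_rec hp3 v hv]
      rcases Nat.eq_or_lt_of_le hi with h1 | h2
      · simp only [← h1]
        constructor
        · intro _; simp only [Nat.sub_self, pow_zero]; omega
        · omega
      · -- 2 ≤ i
        have hdiv : v / p 3 < v := Nat.div_lt_self hv (by omega)
        have := ih (v / p 3) hdiv (i - 1) (by omega)
        constructor
        · intro h
          have : i - 1 ≤ Nc p 3 (v / p 3) := by omega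
          have h3 := (ih (v / p 3) hdiv (i - 1) (by omega)).mp this
          have h4 : p 3 ^ (i - 1 - 1) * p 3 ≤ v := by
            rw [← Nat.le_div_iff_mul_le (by omega)]; exact h3
          calc p 3 ^ (i - 1) = p 3 ^ (i - 1 - 1) * p 3 := by
                rw [← pow_succ]; congr 1; omega
          _ ≤ v := h4
        · intro h
          have h4 : p 3 ^ (i - 1 - 1) * p 3 ≤ v := by
            calc p 3 ^ (i - 1 - 1) * p 3 = p 3 ^ (i - 1) := by
                  rw [← pow_succ]; congr 1; omega
            _ ≤ v := h
          have h3 : p 3 ^ (i - 1 - 1) ≤ v / p 3 := by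
            rw [Nat.le_div_iff_mul_le (by omega)]; exact h4
          have := (ih (v / p 3) hdiv (i - 1) (by omega)).mpr h3
          omega

lemma Nc_unbounded (hm : 3 ≤ m) (hp2 : ∀ i ∈ Finset.Icc 3 m, 2 ≤ p i) :
    ∀ n, ∃ v, n ≤ Nc p m v := by
  induction m, hm using Nat.le_induction with
  | base =>
    intro n
    rcases Nat.eq_zero_or_pos n with h | h
    · exact ⟨0, by omega⟩
    · refine ⟨p 3 ^ (n - 1), ?_⟩
      exact (Nc3_iff (hp2 3 (by simp)) _ n h).mpr le_rfl
  | succ m hm ihm =>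
    intro n
    have hp2' : ∀ i ∈ Finset.Icc 3 m, 2 ≤ p i := fun i hi => by
      apply hp2; simp only [Finset.mem_Icc] at *; omega
    obtain ⟨v, hv⟩ := ihm hp2' n
    refine ⟨v, le_trans hv ?_⟩
    have := NcS_insert (s := Finset.Icc 3 m) (a := m + 1) notmem_Icc
      (by rw [← Icc_insert (by omega)]; exact hp2) v
    rw [Nc, Nc, Icc_insert (by omega), this]
    omega

lemma enum_chain {u : ℕ → ℕ} (humono : ∀ j, 1 ≤ j → u j ≤ u (j + 1)) :
    ∀ i n, 1 ≤ i → i ≤ n → u i ≤ u n := by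
  have key : ∀ d i, 1 ≤ i → u i ≤ u (i + d) := by
    intro d
    induction d with
    | zero => exact fun i _ => le_rfl
    | succ d ihd => exact fun i hi => le_trans (ihd i hi) (humono (i + d) (by omega))
  intro i n hi hin
  have := key (n - i) i hi
  rwa [show i + (n - i) = n by omega] at this

lemma enum_iff (hp2 : ∀ i ∈ Finset.Icc 3 m, 2 ≤ p i) {u : ℕ → ℕ}
    (hu : IsSmoothEnum p m u) {n : ℕ} (hn : 1 ≤ n) (v : ℕ) :
    u n ≤ v ↔ n ≤ Nc p m v := by
  obtain ⟨humono, e, he⟩ := hu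
  have chain := enum_chain humono
  set S : Set ℕ := {j | 1 ≤ j ∧ u j ≤ v} with hS
  have Es : ↥S ≃ {α : ↑(Finset.Icc 3 m) → ℕ // PrS p (Finset.Icc 3 m) α ≤ v} :=
    (Equiv.subtypeSubtypeEquivSubtypeInter (fun j => 1 ≤ j) (fun j => u j ≤ v)).symm.trans
      (e.subtypeEquiv (fun x => by rw [he x]; rfl))
  haveI := finite_sub (p := p) hp2 v
  haveI : Finite ↥S := Finite.of_equiv _ Es.symm
  have hSfin : S.Finite := Set.finite_coe_iff.mp this
  have hcard : S.ncard = Nc p m v := by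
    rw [← Nat.card_coe_set_eq]
    exact Nat.card_congr Es
  constructor
  · intro huv
    have hsub : ↑(Finset.Icc 1 n) ⊆ S := by
      intro x hx
      simp only [Finset.coe_Icc, Set.mem_Icc] at hx
      exact ⟨hx.1, le_trans (chain x n hx.1 hx.2) huv⟩
    have := Set.ncard_le_ncard hsub hSfin
    rw [Set.ncard_coe_finset, Nat.card_Icc] at this
    omega
  · intro hcd
    by_contra huv
    have hsub : S ⊆ ↑(Finset.Ico 1 n) := by
      intro x hx
      obtain ⟨hx1, hx2⟩ := hx
      simp only [Finset.coe_Ico, Set.mem_Ico]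
      refine ⟨hx1, ?_⟩
      by_contra hxn
      exact huv (le_trans (chain n x hn (by omega)) hx2)
    have := Set.ncard_le_ncard hsub (Finset.Ico 1 n).finite_toSet
    rw [Set.ncard_coe_finset, Nat.card_Ico] at this
    omega

end FSaux


namespace Merge

noncomputable def en (N : ℕ → ℕ) (t : ℕ) : ℕ := sInf {v | t ≤ N v}

def NN (N₁ N₂ : ℕ → ℕ) : ℕ → ℕ := fun v => N₁ v + N₂ v

def Ssum (u : ℕ → ℕ) (n : ℕ) : ℕ := ∑ i ∈ Finset.Icc 1 n, u i

variable {N N₁ N₂ : ℕ → ℕ}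

lemma en_le_iff (hm : Monotone N) (hu : ∀ t, ∃ v, t ≤ N v) {t v : ℕ} :
    en N t ≤ v ↔ t ≤ N v := by
  constructor
  · intro h
    have h2 : t ≤ N (en N t) := Nat.sInf_mem (hu t)
    exact le_trans h2 (hm h)
  · exact fun h => Nat.sInf_le h

lemma en_spec (hm : Monotone N) (hu : ∀ t, ∃ v, t ≤ N v) (t : ℕ) : t ≤ N (en N t) :=
  Nat.sInf_mem (hu t)

lemma en_mono (hm : Monotone N) (hu : ∀ t, ∃ v, t ≤ N v) : Monotone (en N) :=
  fun t t' h => (en_le_iff hm hu).mpr (le_trans h (en_spec hm hu t'))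

lemma en_zero : en N 0 = 0 :=
  Nat.sInf_eq_zero.mpr (Or.inl (by simp))

lemma en_unbounded (hm : Monotone N) (hu : ∀ t, ∃ v, t ≤ N v) :
    ∀ V, ∃ r, V ≤ en N r := by
  intro V
  rcases V with _ | V
  · exact ⟨0, Nat.zero_le _⟩
  · refine ⟨N V + 1, ?_⟩
    by_contra h
    push_neg at h
    have : en N (N V + 1) ≤ V := by omega
    have := (en_le_iff hm hu).mp this
    omega

lemma Ssum_zero {u : ℕ → ℕ} : Ssum u 0 = 0 := by simp [Ssum]

lemma Ssum_succ {u : ℕ → ℕ} {n : ℕ} : Ssum u (n + 1) = Ssum u n + u (n + 1) :=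
  Finset.sum_Icc_succ_top (by omega) u

lemma Ssum_pred {u : ℕ → ℕ} {n : ℕ} (hn : 1 ≤ n) :
    Ssum u n = Ssum u (n - 1) + u n := by
  conv_lhs => rw [show n = (n - 1) + 1 by omega]
  rw [Ssum_succ, show (n - 1) + 1 = n by omega]

lemma Ssum_mul {u : ℕ → ℕ} {c n : ℕ} : Ssum (fun i => c * u i) n = c * Ssum u n := by
  simp [Ssum, Finset.mul_sum]

lemma NN_mono (h₁ : Monotone N₁) (h₂ : Monotone N₂) : Monotone (NN N₁ N₂) :=
  fun a b h => Nat.add_le_add (h₁ h) (h₂ h)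

lemma NN_unbounded (hu₁ : ∀ t, ∃ v, t ≤ N₁ v) : ∀ t, ∃ v, t ≤ NN N₁ N₂ v := by
  intro t
  obtain ⟨v, hv⟩ := hu₁ t
  exact ⟨v, le_trans hv (Nat.le_add_right _ _)⟩

section MergeCore

variable (h₁ : Monotone N₁) (h₂ : Monotone N₂)
variable (hu₁ : ∀ t, ∃ v, t ≤ N₁ v) (hu₂ : ∀ t, ∃ v, t ≤ N₂ v)

include h₁ h₂ hu₁ hu₂

lemma merge_min :
    ∀ n t s, t + s = n → Ssum (en (NN N₁ N₂)) n ≤ Ssum (en N₁) t + Ssum (en N₂) s := by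
  have hNm : Monotone (NN N₁ N₂) := NN_mono h₁ h₂
  have hNu : ∀ t, ∃ v, t ≤ NN N₁ N₂ v := NN_unbounded hu₁
  intro n
  induction n with
  | zero =>
    intro t s h
    have ht : t = 0 := by omega
    have hs : s = 0 := by omega
    subst ht; subst hs; simp [Ssum_zero]
  | succ n ihn =>
    intro t s hts
    rcases Nat.eq_zero_or_pos t with ht0 | ht1
    · subst ht0
      have hs : s = n + 1 := by omega
      subst hs
      have hc : en (NN N₁ N₂) (n + 1) ≤ en N₂ (n + 1) := by
        rw [en_le_iff hNm hNu]
        have k := en_spec h₂ hu₂ (n + 1)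
        have : N₂ (en N₂ (n+1)) ≤ NN N₁ N₂ (en N₂ (n+1)) := Nat.le_add_left _ _
        omega
      have := ihn 0 n (by omega)
      rw [Ssum_succ, Ssum_succ]
      omega
    · by_cases hca : en (NN N₁ N₂) (n + 1) ≤ en N₁ t
      · have hih := ihn (t - 1) s (by omega)
        rw [Ssum_succ]
        rw [Ssum_pred (u := en N₁) ht1]
        omega
      · push_neg at hca
        have hmax : en (NN N₁ N₂) (n + 1) ≤ max (en N₁ t) (en N₂ s) := by
          rw [en_le_iff hNm hNu]
          have k1 : t ≤ N₁ (max (en N₁ t) (en N₂ s)) :=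
            le_trans (en_spec h₁ hu₁ t) (h₁ (le_max_left _ _))
          have k2 : s ≤ N₂ (max (en N₁ t) (en N₂ s)) :=
            le_trans (en_spec h₂ hu₂ s) (h₂ (le_max_right _ _))
          show n + 1 ≤ N₁ _ + N₂ _
          omega
        have hcb : en (NN N₁ N₂) (n + 1) ≤ en N₂ s := by
          rcases le_or_gt (en N₁ t) (en N₂ s) with h | h
          · rwa [max_eq_right h] at hmax
          · rw [max_eq_left h.le] at hmax; omega
        have hs1 : 1 ≤ s := by
          by_contra h0
          have : s = 0 := by omega
          subst this
          rw [en_zero] at hcb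
          omega
        have hih := ihn t (s - 1) (by omega)
        rw [Ssum_succ]
        rw [Ssum_pred (u := en N₂) hs1]
        omega


end MergeCore

noncomputable def Tm (N₁ N₂ : ℕ → ℕ) : ℕ → ℕ
  | 0 => 0
  | n + 1 => if en N₁ (Tm N₁ N₂ n + 1) ≤ en N₂ (n + 1 - Tm N₁ N₂ n)
      then Tm N₁ N₂ n + 1 else Tm N₁ N₂ n

lemma Tm_le (n : ℕ) : Tm N₁ N₂ n ≤ n := by
  induction n with
  | zero => simp [Tm]
  | succ n ih => rw [Tm]; split_ifs <;> omega

lemma Tm_succ_cases (n : ℕ) :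
    Tm N₁ N₂ (n + 1) = Tm N₁ N₂ n + 1 ∨ Tm N₁ N₂ (n + 1) = Tm N₁ N₂ n := by
  rw [Tm]; split_ifs <;> simp

lemma Tm_mono : Monotone (Tm N₁ N₂) := by
  apply monotone_nat_of_le_succ
  intro n
  rcases Tm_succ_cases (N₁ := N₁) (N₂ := N₂) n with h | h <;> omega


section MergeCore2

variable (h₁ : Monotone N₁) (h₂ : Monotone N₂)
variable (hu₁ : ∀ t, ∃ v, t ≤ N₁ v) (hu₂ : ∀ t, ∃ v, t ≤ N₂ v)

include h₁ h₂ hu₁ hu₂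

lemma min_aux {n : ℕ}
    (inv1 : en N₁ (Tm N₁ N₂ n) ≤ en N₂ (n - Tm N₁ N₂ n + 1))
    (inv2 : en N₂ (n - Tm N₁ N₂ n) ≤ en N₁ (Tm N₁ N₂ n + 1)) :
    en (NN N₁ N₂) (n + 1) = min (en N₁ (Tm N₁ N₂ n + 1)) (en N₂ (n + 1 - Tm N₁ N₂ n)) := by
  have hNm := NN_mono h₁ h₂
  have hNu := NN_unbounded (N₂ := N₂) hu₁
  have htn : Tm N₁ N₂ n ≤ n := Tm_le n
  set t := Tm N₁ N₂ n with hT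
  have heq : n + 1 - t = n - t + 1 := by omega
  apply le_antisymm
  · rw [en_le_iff hNm hNu]
    rcases le_or_gt (en N₁ (t + 1)) (en N₂ (n + 1 - t)) with h | h
    · rw [min_eq_left h]
      have k1 : t + 1 ≤ N₁ (en N₁ (t + 1)) := en_spec h₁ hu₁ _
      have k2 : n - t ≤ N₂ (en N₁ (t + 1)) :=
        le_trans (en_spec h₂ hu₂ _) (h₂ inv2)
      show n + 1 ≤ N₁ _ + N₂ _
      omega
    · rw [min_eq_right h.le]
      have k2 : n + 1 - t ≤ N₂ (en N₂ (n + 1 - t)) := en_spec h₂ hu₂ _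
      have k1 : t ≤ N₁ (en N₂ (n + 1 - t)) := by
        refine le_trans (en_spec h₁ hu₁ t) (h₁ ?_)
        rw [heq]
        exact inv1
      show n + 1 ≤ N₁ _ + N₂ _
      omega
  · by_contra hlt
    push_neg at hlt
    have hc1 : en (NN N₁ N₂) (n + 1) < en N₁ (t + 1) := lt_of_lt_of_le hlt (min_le_left _ _)
    have hc2 : en (NN N₁ N₂) (n + 1) < en N₂ (n + 1 - t) := lt_of_lt_of_le hlt (min_le_right _ _)
    have k1 : N₁ (en (NN N₁ N₂) (n + 1)) < t + 1 := by
      by_contra hk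
      push_neg at hk
      have := (en_le_iff h₁ hu₁).mpr hk
      omega
    have k2 : N₂ (en (NN N₁ N₂) (n + 1)) < n + 1 - t := by
      by_contra hk
      push_neg at hk
      have := (en_le_iff h₂ hu₂).mpr hk
      omega
    have k := en_spec hNm hNu (n + 1)
    simp only [NN] at k
    omega

end MergeCore2


noncomputable def Pj (N₁ N₂ : ℕ → ℕ) (j : ℕ) : ℕ := sInf {n | j ≤ Tm N₁ N₂ n}

section MergeCore3

variable (h₁ : Monotone N₁) (h₂ : Monotone N₂)
variable (hu₁ : ∀ t, ∃ v, t ≤ N₁ v) (hu₂ : ∀ t, ∃ v, t ≤ N₂ v)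

include h₁ h₂ hu₁ hu₂

lemma Tm_invariant (n : ℕ) :
    en N₁ (Tm N₁ N₂ n) ≤ en N₂ (n - Tm N₁ N₂ n + 1) ∧
    en N₂ (n - Tm N₁ N₂ n) ≤ en N₁ (Tm N₁ N₂ n + 1) ∧
    Ssum (en (NN N₁ N₂)) n = Ssum (en N₁) (Tm N₁ N₂ n) + Ssum (en N₂) (n - Tm N₁ N₂ n) := by
  induction n with
  | zero =>
    refine ⟨?_, ?_, ?_⟩ <;> simp [Tm, en_zero, Ssum_zero]
  | succ n ih =>
    obtain ⟨inv1, inv2, invS⟩ := ih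
    have htn : Tm N₁ N₂ n ≤ n := Tm_le n
    have hmin := min_aux h₁ h₂ hu₁ hu₂ inv1 inv2
    by_cases hcond : en N₁ (Tm N₁ N₂ n + 1) ≤ en N₂ (n + 1 - Tm N₁ N₂ n)
    · have hstep : Tm N₁ N₂ (n + 1) = Tm N₁ N₂ n + 1 := by rw [Tm, if_pos hcond]
      have hc : en (NN N₁ N₂) (n + 1) = en N₁ (Tm N₁ N₂ n + 1) := by
        rw [hmin, min_eq_left hcond]
      refine ⟨?_, ?_, ?_⟩
      · rw [hstep, show n + 1 - (Tm N₁ N₂ n + 1) + 1 = n + 1 - Tm N₁ N₂ n by omega]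
        exact hcond
      · rw [hstep, show n + 1 - (Tm N₁ N₂ n + 1) = n - Tm N₁ N₂ n by omega]
        exact le_trans inv2 (en_mono h₁ hu₁ (by omega))
      · rw [hstep, show n + 1 - (Tm N₁ N₂ n + 1) = n - Tm N₁ N₂ n by omega,
          Ssum_succ, invS, hc, Ssum_succ]
        ring
    · have hstep : Tm N₁ N₂ (n + 1) = Tm N₁ N₂ n := by rw [Tm, if_neg hcond]
      push_neg at hcond
      have hc : en (NN N₁ N₂) (n + 1) = en N₂ (n + 1 - Tm N₁ N₂ n) := by
        rw [hmin, min_eq_right hcond.le]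
      refine ⟨?_, ?_, ?_⟩
      · rw [hstep, show n + 1 - Tm N₁ N₂ n + 1 = (n - Tm N₁ N₂ n + 1) + 1 by omega]
        exact le_trans inv1 (en_mono h₂ hu₂ (by omega))
      · rw [hstep]
        exact hcond.le
      · rw [hstep, Ssum_succ, invS, hc, show n + 1 - Tm N₁ N₂ n = (n - Tm N₁ N₂ n) + 1 by omega,
          Ssum_succ]
        ring

lemma Tm_step_A {n : ℕ}
    (hcond : en N₁ (Tm N₁ N₂ n + 1) ≤ en N₂ (n + 1 - Tm N₁ N₂ n)) :
    Tm N₁ N₂ (n + 1) = Tm N₁ N₂ n + 1 ∧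
    en (NN N₁ N₂) (n + 1) = en N₁ (Tm N₁ N₂ n + 1) := by
  obtain ⟨inv1, inv2, _⟩ := Tm_invariant h₁ h₂ hu₁ hu₂ n
  exact ⟨by rw [Tm, if_pos hcond],
    by rw [min_aux h₁ h₂ hu₁ hu₂ inv1 inv2, min_eq_left hcond]⟩

lemma Tm_step_B {n : ℕ}
    (hcond : ¬ en N₁ (Tm N₁ N₂ n + 1) ≤ en N₂ (n + 1 - Tm N₁ N₂ n)) :
    Tm N₁ N₂ (n + 1) = Tm N₁ N₂ n ∧
    en (NN N₁ N₂) (n + 1) < en N₁ (Tm N₁ N₂ n + 1) := by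
  obtain ⟨inv1, inv2, _⟩ := Tm_invariant h₁ h₂ hu₁ hu₂ n
  refine ⟨by rw [Tm, if_neg hcond], ?_⟩
  push_neg at hcond
  rw [min_aux h₁ h₂ hu₁ hu₂ inv1 inv2, min_eq_right hcond.le]
  exact hcond

lemma Tm_unbounded : ∀ j, ∃ n, j ≤ Tm N₁ N₂ n := by
  intro j
  induction j with
  | zero => exact ⟨0, Nat.zero_le _⟩
  | succ j ihj =>
    obtain ⟨n, hn⟩ := ihj
    obtain ⟨r, hr⟩ := en_unbounded h₂ hu₂ (en N₁ (j + 1))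
    rcases le_or_gt (j + 1) (Tm N₁ N₂ (max n (r + j))) with h | h
    · exact ⟨max n (r + j), h⟩
    · have hTmj : Tm N₁ N₂ (max n (r + j)) = j := by
        have := Tm_mono (N₁ := N₁) (N₂ := N₂) (le_max_left n (r + j))
        omega
      refine ⟨max n (r + j) + 1, ?_⟩
      have hcond : en N₁ (Tm N₁ N₂ (max n (r + j)) + 1) ≤
          en N₂ (max n (r + j) + 1 - Tm N₁ N₂ (max n (r + j))) := by
        rw [hTmj]
        refine le_trans hr (en_mono h₂ hu₂ ?_)
        have : r + j ≤ max n (r + j) := le_max_right _ _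
        omega
      have := (Tm_step_A h₁ h₂ hu₁ hu₂ hcond).1
      omega

lemma Tm_Pj (j : ℕ) : Tm N₁ N₂ (Pj N₁ N₂ j) = j := by
  have hne : {n | j ≤ Tm N₁ N₂ n}.Nonempty := Tm_unbounded h₁ h₂ hu₁ hu₂ j
  have hsp : j ≤ Tm N₁ N₂ (Pj N₁ N₂ j) := Nat.sInf_mem hne
  by_contra hne2
  have hgt : j + 1 ≤ Tm N₁ N₂ (Pj N₁ N₂ j) := by omega
  have hpos : 1 ≤ Pj N₁ N₂ j := by
    by_contra h0
    have h0' : Pj N₁ N₂ j = 0 := by omega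
    rw [h0'] at hsp hgt
    simp [Tm] at hgt
  have hcases := Tm_succ_cases (N₁ := N₁) (N₂ := N₂) (Pj N₁ N₂ j - 1)
  rw [show Pj N₁ N₂ j - 1 + 1 = Pj N₁ N₂ j by omega] at hcases
  have hprev : j ≤ Tm N₁ N₂ (Pj N₁ N₂ j - 1) := by omega
  have := Nat.sInf_le (s := {n | j ≤ Tm N₁ N₂ n}) hprev
  have : Pj N₁ N₂ j ≤ Pj N₁ N₂ j - 1 := this
  omega

lemma Pj_lt (j : ℕ) : Pj N₁ N₂ j < Pj N₁ N₂ (j + 1) := by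
  have h1 : Tm N₁ N₂ (Pj N₁ N₂ (j + 1)) = j + 1 := Tm_Pj h₁ h₂ hu₁ hu₂ _
  have h2 : Pj N₁ N₂ j ≤ Pj N₁ N₂ (j + 1) :=
    Nat.sInf_le (show j ≤ Tm N₁ N₂ (Pj N₁ N₂ (j + 1)) by omega)
  have h3 : Tm N₁ N₂ (Pj N₁ N₂ j) = j := Tm_Pj h₁ h₂ hu₁ hu₂ _
  rcases Nat.eq_or_lt_of_le h2 with h | h
  · rw [h, h1] at h3; omega
  · exact h

lemma Tm_fiber {j n : ℕ} (hjn : Pj N₁ N₂ j ≤ n) (hn : n < Pj N₁ N₂ (j + 1)) :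
    Tm N₁ N₂ n = j := by
  have h1 : j ≤ Tm N₁ N₂ n := by
    have := Tm_mono (N₁ := N₁) (N₂ := N₂) hjn
    rw [Tm_Pj h₁ h₂ hu₁ hu₂ j] at this
    exact this
  have h2 : Tm N₁ N₂ n < j + 1 := by
    by_contra h
    push_neg at h
    have h3 := Nat.sInf_le (s := {m | j + 1 ≤ Tm N₁ N₂ m}) h
    have h4 : Pj N₁ N₂ (j + 1) ≤ n := h3
    omega
  omega

lemma K_eq_Pj (K : ℕ → ℕ) (hK1 : K 1 = 1)
    (hK : ∀ j, 2 ≤ j → K j = sInf {l | K (j - 1) < l ∧ en (NN N₁ N₂) l = en N₁ j})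
    (hab : en N₁ 1 ≤ en N₂ 1) :
    ∀ j, 1 ≤ j → K j = Pj N₁ N₂ j := by
  intro j hj
  induction j, hj using Nat.le_induction with
  | base =>
    have hT0 : Tm N₁ N₂ 0 = 0 := rfl
    have hT1 : Tm N₁ N₂ 1 = 1 := by
      have hcond : en N₁ (Tm N₁ N₂ 0 + 1) ≤ en N₂ (0 + 1 - Tm N₁ N₂ 0) := by
        rw [hT0]; simpa using hab
      have := (Tm_step_A h₁ h₂ hu₁ hu₂ hcond).1
      rw [hT0] at this
      exact this
    have hmem : (1 : ℕ) ∈ {n | 1 ≤ Tm N₁ N₂ n} := by simp [hT1]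
    have hne : {n | 1 ≤ Tm N₁ N₂ n}.Nonempty := ⟨1, hmem⟩
    have hsp : 1 ≤ Tm N₁ N₂ (Pj N₁ N₂ 1) := Nat.sInf_mem hne
    have hpos : Pj N₁ N₂ 1 ≠ 0 := by
      intro h0
      rw [h0, hT0] at hsp
      omega
    rw [hK1]
    exact le_antisymm (by omega) (Nat.sInf_le hmem)
  | succ j hj ihj =>
    have hKj := hK (j + 1) (by omega)
    simp only [Nat.add_sub_cancel] at hKj
    rw [ihj] at hKj
    have hPlt : Pj N₁ N₂ j < Pj N₁ N₂ (j + 1) := Pj_lt h₁ h₂ hu₁ hu₂ j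
    have hmem : Pj N₁ N₂ (j + 1) ∈
        {l | Pj N₁ N₂ j < l ∧ en (NN N₁ N₂) l = en N₁ (j + 1)} := by
      refine ⟨hPlt, ?_⟩
      have hpos : 1 ≤ Pj N₁ N₂ (j + 1) := by omega
      set m := Pj N₁ N₂ (j + 1) - 1 with hm
      have hm1 : m + 1 = Pj N₁ N₂ (j + 1) := by omega
      have hTm1 : Tm N₁ N₂ (m + 1) = j + 1 := by rw [hm1]; exact Tm_Pj h₁ h₂ hu₁ hu₂ _
      have hTmm : Tm N₁ N₂ m = j := Tm_fiber h₁ h₂ hu₁ hu₂ (by omega) (by omega)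
      by_cases hcond : en N₁ (Tm N₁ N₂ m + 1) ≤ en N₂ (m + 1 - Tm N₁ N₂ m)
      · have := (Tm_step_A h₁ h₂ hu₁ hu₂ hcond).2
        rw [hm1] at this
        rw [this, hTmm]
      · have := (Tm_step_B h₁ h₂ hu₁ hu₂ hcond).1
        omega
    rw [hKj]
    apply le_antisymm (Nat.sInf_le hmem)
    have hnel : {l | Pj N₁ N₂ j < l ∧ en (NN N₁ N₂) l = en N₁ (j + 1)}.Nonempty := ⟨_, hmem⟩
    have hl := Nat.sInf_mem hnel
    obtain ⟨hl1, hl2⟩ := hl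
    set l := sInf {l | Pj N₁ N₂ j < l ∧ en (NN N₁ N₂) l = en N₁ (j + 1)} with hldef
    by_contra hlt
    push_neg at hlt
    have hl0 : 1 ≤ l := by omega
    have hTl1 : Tm N₁ N₂ (l - 1) = j := Tm_fiber h₁ h₂ hu₁ hu₂ (by omega) (by omega)
    have hTl : Tm N₁ N₂ l = j := Tm_fiber h₁ h₂ hu₁ hu₂ (by omega) (by omega)
    by_cases hcond : en N₁ (Tm N₁ N₂ (l - 1) + 1) ≤ en N₂ ((l - 1) + 1 - Tm N₁ N₂ (l - 1))
    · have := (Tm_step_A h₁ h₂ hu₁ hu₂ hcond).1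
      rw [show l - 1 + 1 = l by omega] at this
      omega
    · have hB := (Tm_step_B h₁ h₂ hu₁ hu₂ hcond).2
      rw [show l - 1 + 1 = l by omega, hTl1] at hB
      omega

end MergeCore3

end Merge


namespace FS2
open FSaux Merge

variable {p q : ℕ → ℕ} {m v : ℕ}

lemma sInf_Ici (a : ℕ) : sInf {v : ℕ | a ≤ v} = a :=
  le_antisymm (Nat.sInf_le (Set.mem_setOf.mpr le_rfl))
    (Nat.sInf_mem ⟨a, Set.mem_setOf.mpr le_rfl⟩)

lemma hp2_of (hp : ∀ i ∈ Finset.Icc 3 m, 1 < p i) : ∀ i ∈ Finset.Icc 3 m, 2 ≤ p i :=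
  fun i hi => hp i hi

lemma Nc_mono (hp2 : ∀ i ∈ Finset.Icc 3 m, 2 ≤ p i) : Monotone (Nc p m) :=
  fun _ _ h => NcS_mono hp2 h

lemma Nc_unb (hm : 3 ≤ m) (hp2 : ∀ i ∈ Finset.Icc 3 m, 2 ≤ p i) :
    ∀ t, ∃ v, t ≤ Nc p m v := Nc_unbounded hm hp2

lemma en_Nc_one (hm : 3 ≤ m) (hp2 : ∀ i ∈ Finset.Icc 3 m, 2 ≤ p i) :
    en (Nc p m) 1 = 1 := by
  have h0 : Nc p m 0 = 0 := Nc_zero hp2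
  have h1 : 1 ≤ Nc p m 1 := one_le_NcS_one hp2
  have hne : {v | 1 ≤ Nc p m v}.Nonempty := ⟨1, h1⟩
  have hsp : 1 ≤ Nc p m (en (Nc p m) 1) := Nat.sInf_mem hne
  have hle : en (Nc p m) 1 ≤ 1 := Nat.sInf_le h1
  rcases Nat.eq_zero_or_pos (en (Nc p m) 1) with h | h
  · rw [h, h0] at hsp; omega
  · omega

lemma en_Nc3 (hp3 : 2 ≤ p 3) {i : ℕ} (hi : 1 ≤ i) :
    en (Nc p 3) i = p 3 ^ (i - 1) := by
  have hset : {v | i ≤ Nc p 3 v} = {v | p 3 ^ (i - 1) ≤ v} := by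
    ext v
    exact Nc3_iff hp3 v i hi
  rw [en, hset, sInf_Ici]

lemma S3_val (hp3 : 2 ≤ p 3) (n : ℕ) :
    Ssum (en (Nc p 3)) n = ∑ i ∈ Finset.range n, p 3 ^ i := by
  induction n with
  | zero => rw [Ssum_zero, Finset.sum_range_zero]
  | succ n ihn =>
    rw [Ssum_succ, ihn, Finset.sum_range_succ, en_Nc3 hp3 (by omega)]
    simp

lemma S3_rec (hp3 : 2 ≤ p 3) (n : ℕ) :
    Ssum (en (Nc p 3)) (n + 1) = p 3 * Ssum (en (Nc p 3)) n + 1 := by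
  rw [S3_val hp3, S3_val hp3, Finset.sum_range_succ']
  simp only [pow_zero, pow_succ]
  rw [← Finset.sum_mul, mul_comm]

section Level

variable (p)
variable (m : ℕ)

noncomputable def N2f : ℕ → ℕ := fun v => Nc p (m + 1) (v / p (m + 1))

noncomputable def TT : ℕ → ℕ := Tm (Nc p m) (N2f p m)

noncomputable def PP : ℕ → ℕ := Pj (Nc p m) (N2f p m)

variable {p} {m}

lemma hp2m (hp2 : ∀ i ∈ Finset.Icc 3 (m + 1), 2 ≤ p i) : ∀ i ∈ Finset.Icc 3 m, 2 ≤ p i := by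
  intro i hi
  apply hp2
  simp only [Finset.mem_Icc] at *
  omega

lemma hpm1 (hm : 3 ≤ m) (hp2 : ∀ i ∈ Finset.Icc 3 (m + 1), 2 ≤ p i) : 2 ≤ p (m + 1) := by
  apply hp2
  simp only [Finset.mem_Icc]
  omega

variable (hm : 3 ≤ m) (hp2 : ∀ i ∈ Finset.Icc 3 (m + 1), 2 ≤ p i)

include hm hp2

lemma N1_mono : Monotone (Nc p m) := Nc_mono (hp2m hp2)

lemma N2_mono : Monotone (N2f p m) :=
  fun _ _ h => NcS_mono hp2 (Nat.div_le_div_right h)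

lemma N1_unb : ∀ t, ∃ v, t ≤ Nc p m v := Nc_unb hm (hp2m hp2)

lemma N2_unb : ∀ t, ∃ v, t ≤ N2f p m v := by
  intro t
  obtain ⟨v, hv⟩ := Nc_unb (by omega) hp2 t
  refine ⟨v * p (m + 1), ?_⟩
  show t ≤ Nc p (m + 1) (v * p (m + 1) / p (m + 1))
  rw [Nat.mul_div_cancel v (by have := hpm1 hm hp2; omega)]
  exact hv

lemma NN_eq : NN (Nc p m) (N2f p m) = Nc p (m + 1) := by
  funext v
  show Nc p m v + Nc p (m + 1) (v / p (m + 1)) = Nc p (m + 1) v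
  exact (Nc_rec (by omega) hp2 v).symm

lemma en_N2 (t : ℕ) : en (N2f p m) t = p (m + 1) * en (Nc p (m + 1)) t := by
  have hppos : 0 < p (m + 1) := by have := hpm1 hm hp2; omega
  have hmono : Monotone (Nc p (m + 1)) := Nc_mono hp2
  have hunb : ∀ t, ∃ v, t ≤ Nc p (m + 1) v := Nc_unb (by omega) hp2
  have hset : {v | t ≤ N2f p m v} = {v | en (Nc p (m + 1)) t * p (m + 1) ≤ v} := by
    ext v
    show t ≤ Nc p (m + 1) (v / p (m + 1)) ↔ _
    rw [← en_le_iff hmono hunb, Nat.le_div_iff_mul_le hppos]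
    exact Iff.rfl
  rw [en, hset, sInf_Ici, mul_comm]

lemma S_N2 (r : ℕ) :
    Ssum (en (N2f p m)) r = p (m + 1) * Ssum (en (Nc p (m + 1))) r := by
  have : en (N2f p m) = fun i => p (m + 1) * en (Nc p (m + 1)) i :=
    funext (fun t => en_N2 hm hp2 t)
  rw [this, Ssum_mul]

lemma level_hab : en (Nc p m) 1 ≤ en (N2f p m) 1 := by
  rw [en_N2 hm hp2, en_Nc_one hm (hp2m hp2), en_Nc_one (by omega) hp2]
  have := hpm1 hm hp2
  omega

lemma level_min {t s n : ℕ} (hts : t + s = n) :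
    Ssum (en (Nc p (m + 1))) n ≤
      Ssum (en (Nc p m)) t + p (m + 1) * Ssum (en (Nc p (m + 1))) s := by
  have h := merge_min (N1_mono hm hp2) (N2_mono hm hp2) (N1_unb hm hp2) (N2_unb hm hp2) n t s hts
  rw [NN_eq hm hp2, S_N2 hm hp2] at h
  exact h

lemma level_att (n : ℕ) :
    Ssum (en (Nc p (m + 1))) n =
      Ssum (en (Nc p m)) (TT p m n) +
        p (m + 1) * Ssum (en (Nc p (m + 1))) (n - TT p m n) := by
  have h := (Tm_invariant (N1_mono hm hp2) (N2_mono hm hp2) (N1_unb hm hp2) (N2_unb hm hp2) n).2.2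
  rw [NN_eq hm hp2, S_N2 hm hp2] at h
  exact h

omit hm hp2 in
lemma TT_le (n : ℕ) : TT p m n ≤ n := Tm_le n

lemma TT_pos {n : ℕ} (hn : 1 ≤ n) : 1 ≤ TT p m n := by
  have h1 : TT p m 1 = 1 := by
    have hcond : en (Nc p m) (Tm (Nc p m) (N2f p m) 0 + 1) ≤
        en (N2f p m) (0 + 1 - Tm (Nc p m) (N2f p m) 0) := by
      have h0 : Tm (Nc p m) (N2f p m) 0 = 0 := rfl
      rw [h0]
      simpa using level_hab hm hp2
    have := (Tm_step_A (N1_mono hm hp2) (N2_mono hm hp2) (N1_unb hm hp2) (N2_unb hm hp2) hcond).1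
    rw [TT]
    rw [this]
    rfl
  calc 1 = TT p m 1 := h1.symm
  _ ≤ TT p m n := Tm_mono hn

end Level

/-- main structure theorem: G m n = (∏ q) * S m n -/
lemma Gthm {k : ℕ} (hq : ∀ i, 1 ≤ q i)
    (hp : ∀ i, 3 ≤ i → i ≤ k → 1 < p i)
    (G : ℕ → ℕ → ℕ)
    (hG0 : ∀ k', G k' 0 = 0)
    (hG3 : ∀ n, 1 ≤ n → G 3 n = p 3 * G 3 (n - 1) + q 3)
    (hGk : ∀ k', 4 ≤ k' → ∀ n, 1 ≤ n →
      G k' n = sInf {v | ∃ t, 1 ≤ t ∧ t ≤ n ∧ v = p k' * G k' (n - t) + q k' * G (k' - 1) t}) :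
    ∀ m, 3 ≤ m → m ≤ k →
      ∀ n, G m n = (∏ i ∈ Finset.Icc 3 m, q i) * Ssum (en (Nc p m)) n := by
  intro m hm
  induction m, hm using Nat.le_induction with
  | base =>
    intro _ n
    have hp3 : 2 ≤ p 3 := hp 3 le_rfl (by omega)
    have hQ3 : (∏ i ∈ Finset.Icc 3 3, q i) = q 3 := by
      rw [Finset.Icc_self, Finset.prod_singleton]
    induction n with
    | zero => rw [hG0, Ssum_zero, mul_zero]
    | succ n ihn =>
      rw [hG3 (n + 1) (by omega)]
      simp only [Nat.add_sub_cancel]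
      rw [ihn, S3_rec hp3, hQ3]
      ring
  | succ m hm3 ihm =>
    intro hmk n
    have hp2 : ∀ i ∈ Finset.Icc 3 (m + 1), 2 ≤ p i := by
      intro i hi
      simp only [Finset.mem_Icc] at hi
      exact hp i hi.1 (by omega)
    have ihm' := ihm (by omega)
    have hQ : (∏ i ∈ Finset.Icc 3 (m + 1), q i) = q (m + 1) * ∏ i ∈ Finset.Icc 3 m, q i := by
      rw [Icc_insert (by omega), Finset.prod_insert notmem_Icc]
    induction n using Nat.strong_induction_on with
    | _ n ihn =>
      rcases Nat.eq_zero_or_pos n with h0 | hn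
      · subst h0
        rw [hG0, Ssum_zero, mul_zero]
      · rw [hGk (m + 1) (by omega) n hn]
        simp only [Nat.add_sub_cancel]
        apply le_antisymm
        · apply Nat.sInf_le
          refine ⟨TT p m n, TT_pos hm3 hp2 hn, TT_le n, ?_⟩
          rw [ihn (n - TT p m n) (by have := TT_pos hm3 hp2 hn; omega)]
          rw [ihm' (TT p m n)]
          rw [level_att hm3 hp2 n, hQ]
          ring
        · apply le_csInf
          · exact ⟨p (m + 1) * G (m + 1) (n - n) + q (m + 1) * G m n, n, hn, le_rfl, rfl⟩
          · rintro v ⟨t, ht1, htn, rfl⟩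
            rw [ihn (n - t) (by omega), ihm' t, hQ]
            have hmin := level_min hm3 hp2 (t := t) (s := n - t) (n := n) (by omega)
            calc (q (m + 1) * ∏ i ∈ Finset.Icc 3 m, q i) * Ssum (en (Nc p (m + 1))) n
                ≤ (q (m + 1) * ∏ i ∈ Finset.Icc 3 m, q i) *
                  (Ssum (en (Nc p m)) t + p (m + 1) * Ssum (en (Nc p (m + 1))) (n - t)) :=
                Nat.mul_le_mul_left _ hmin
            _ = p (m + 1) * ((q (m + 1) * ∏ i ∈ Finset.Icc 3 m, q i) *
                  Ssum (en (Nc p (m + 1))) (n - t)) +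
                q (m + 1) * ((∏ i ∈ Finset.Icc 3 m, q i) * Ssum (en (Nc p m)) t) := by ring

end FS2


open FSaux FS2 Merge

/-- Corollary: for k_j ≤ n < k_{j+1}, G_k(n) = p_k·G_k(n−j) + q_k·G_{k−1}(j). -/
theorem generalized_frame_stewart_corollary
    (p q : ℕ → ℕ) (hq : ∀ i, 1 ≤ q i)
    (k : ℕ) (hk : 4 ≤ k)
    (hp : ∀ i, 3 ≤ i → i ≤ k → 1 < p i)
    (G : ℕ → ℕ → ℕ)
    (hG0 : ∀ k', G k' 0 = 0)
    (hG3 : ∀ n, 1 ≤ n → G 3 n = p 3 * G 3 (n - 1) + q 3)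
    (hGk : ∀ k', 4 ≤ k' → ∀ n, 1 ≤ n →
      G k' n = sInf {v | ∃ t, 1 ≤ t ∧ t ≤ n ∧ v = p k' * G k' (n - t) + q k' * G (k' - 1) t})
    (uk uk1 : ℕ → ℕ)
    (huk : IsSmoothEnum p k uk) (huk1 : IsSmoothEnum p (k - 1) uk1)
    (K : ℕ → ℕ) (hK1 : K 1 = 1)
    (hK : ∀ j, 2 ≤ j → K j = sInf {l | K (j - 1) < l ∧ uk l = uk1 j})
    (j n : ℕ) (hj : 1 ≤ j) (h1 : K j ≤ n) (h2 : n < K (j + 1)) :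
    G k n = p k * G k (n - j) + q k * G (k - 1) j := by
  obtain ⟨m, rfl⟩ : ∃ m, k = m + 1 := ⟨k - 1, by omega⟩
  have hm3 : 3 ≤ m := by omega
  have hk1 : m + 1 - 1 = m := by omega
  rw [hk1] at huk1 ⊢
  have hp2 : ∀ i ∈ Finset.Icc 3 (m + 1), 2 ≤ p i := by
    intro i hi
    simp only [Finset.mem_Icc] at hi
    exact hp i hi.1 hi.2
  have hp2m' : ∀ i ∈ Finset.Icc 3 m, 2 ≤ p i := hp2m hp2
  -- merge data
  have h₁ : Monotone (FSaux.Nc p m) := N1_mono hm3 hp2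
  have h₂ : Monotone (N2f p m) := N2_mono hm3 hp2
  have hu₁ : ∀ t, ∃ v, t ≤ FSaux.Nc p m v := N1_unb hm3 hp2
  have hu₂ : ∀ t, ∃ v, t ≤ N2f p m v := N2_unb hm3 hp2
  have hNN : NN (FSaux.Nc p m) (N2f p m) = FSaux.Nc p (m + 1) := NN_eq hm3 hp2
  -- translate uk, uk1
  have hNmono : Monotone (FSaux.Nc p (m + 1)) := Nc_mono hp2
  have hNunb : ∀ t, ∃ v, t ≤ FSaux.Nc p (m + 1) v := Nc_unb (by omega) hp2
  have hN1mono : Monotone (FSaux.Nc p m) := h₁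
  have hukeq : ∀ l, 1 ≤ l → uk l = en (FSaux.Nc p (m + 1)) l := by
    intro l hl
    apply le_antisymm
    · exact (enum_iff hp2 huk hl _).mpr (en_spec hNmono hNunb l)
    · rw [en_le_iff hNmono hNunb]
      exact (enum_iff hp2 huk hl _).mp le_rfl
  have huk1eq : ∀ l, 1 ≤ l → uk1 l = en (FSaux.Nc p m) l := by
    intro l hl
    apply le_antisymm
    · exact (enum_iff hp2m' huk1 hl _).mpr (en_spec h₁ hu₁ l)
    · rw [en_le_iff h₁ hu₁]
      exact (enum_iff hp2m' huk1 hl _).mp le_rfl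
  -- translate hK
  have hK' : ∀ j', 2 ≤ j' → K j' = sInf {l | K (j' - 1) < l ∧
      en (NN (FSaux.Nc p m) (N2f p m)) l = en (FSaux.Nc p m) j'} := by
    intro j' hj'
    rw [hK j' hj']
    congr 1
    ext l
    simp only [Set.mem_setOf_eq, and_congr_right_iff]
    intro hl
    have hl1 : 1 ≤ l := by omega
    rw [hukeq l hl1, huk1eq j' (by omega), hNN]
  have hab : en (FSaux.Nc p m) 1 ≤ en (N2f p m) 1 := level_hab hm3 hp2
  have hKP := K_eq_Pj h₁ h₂ hu₁ hu₂ K hK1 hK' hab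
  have hKj : K j = Pj (FSaux.Nc p m) (N2f p m) j := hKP j hj
  have hKj1 : K (j + 1) = Pj (FSaux.Nc p m) (N2f p m) (j + 1) := hKP (j + 1) (by omega)
  rw [hKj] at h1
  rw [hKj1] at h2
  have hTn : Tm (FSaux.Nc p m) (N2f p m) n = j := Tm_fiber h₁ h₂ hu₁ hu₂ h1 h2
  have hTT : TT p m n = j := hTn
  -- sum identity
  have hatt := level_att hm3 hp2 (p := p) (m := m) n
  rw [hTT] at hatt
  -- G values
  have hGall := Gthm (q := q) hq hp G hG0 hG3 hGk
  have hGn := hGall (m + 1) (by omega) le_rfl n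
  have hGnj := hGall (m + 1) (by omega) le_rfl (n - j)
  have hGj := hGall m hm3 (by omega) j
  have hQ : (∏ i ∈ Finset.Icc 3 (m + 1), q i) = q (m + 1) * ∏ i ∈ Finset.Icc 3 m, q i := by
    rw [Icc_insert (by omega), Finset.prod_insert notmem_Icc]
  rw [hGn, hGnj, hGj, hatt, hQ]
  ring
end
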